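/- arXiv:2405.08501 — 7 statements merged into one kernel-verified Lean document; each statement's English description precedes it below -/
import Mathlib

section
/- Let R be a discrete valuation ring with fraction field K, let L/K be a finite field extension and S the integral closure of R in L. Then two matrices A, B ∈ Mat_2(R) are similar over R if and only if they are similar over S. -/
open Matrix

section SimSection

variable {T : Type*} [CommRing T]

/-- Similarity of 2×2 matrices over a commutative ring. -/
def Sim (T : Type*) [CommRing T] (A B : Matrix (Fin 2) (Fin 2) T) : Prop :=
  ∃ U : (Matrix (Fin 2) (Fin 2) T)ˣ, (U : Matrix (Fin 2) (Fin 2) T) * A * (U⁻¹ : _) = B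

theorem Sim.symm' {A B : Matrix (Fin 2) (Fin 2) T} (h : Sim T A B) : Sim T B A := by
  obtain ⟨U, hU⟩ := h
  refine ⟨U⁻¹, ?_⟩
  rw [← hU]
  simp [Matrix.mul_assoc, ← Matrix.mul_assoc (U⁻¹ : Matrix (Fin 2) (Fin 2) T)]

theorem Sim.trans' {A B C : Matrix (Fin 2) (Fin 2) T} (h1 : Sim T A B) (h2 : Sim T B C) :
    Sim T A C := by
  obtain ⟨U, hU⟩ := h1; obtain ⟨V, hV⟩ := h2
  refine ⟨V * U, ?_⟩
  rw [← hV, ← hU]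
  simp [Matrix.mul_assoc, _root_.mul_inv_rev]

/-- If `U` has unit determinant and `U * A = B * U` then `A` and `B` are similar. -/
theorem sim_of_mul {A B U : Matrix (Fin 2) (Fin 2) T} (hU : IsUnit U.det)
    (h : U * A = B * U) : Sim T A B := by
  have hu : IsUnit U := (Matrix.isUnit_iff_isUnit_det U).mpr hU
  refine ⟨hu.unit, ?_⟩
  have h1 : (hu.unit : Matrix (Fin 2) (Fin 2) T) = U := rfl
  have h2 : (hu.unit : Matrix (Fin 2) (Fin 2) T) * (hu.unit⁻¹ : _) = 1 := hu.unit.mul_inv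
  calc (hu.unit : Matrix (Fin 2) (Fin 2) T) * A * (hu.unit⁻¹ : _)
      = B * ((hu.unit : Matrix (Fin 2) (Fin 2) T) * (hu.unit⁻¹ : _)) := by
        rw [h1, Matrix.mul_assoc, ← Matrix.mul_assoc U, h, Matrix.mul_assoc]
    _ = B := by rw [h2, Matrix.mul_one]

theorem Sim.map {T' : Type*} [CommRing T'] (f : T →+* T') {A B : Matrix (Fin 2) (Fin 2) T}
    (h : Sim T A B) : Sim T' (A.map f) (B.map f) := by
  obtain ⟨U, hU⟩ := h
  refine ⟨Units.map (RingHom.mapMatrix f).toMonoidHom U, ?_⟩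
  have : (Units.map (RingHom.mapMatrix f).toMonoidHom U)⁻¹
      = Units.map (RingHom.mapMatrix f).toMonoidHom U⁻¹ := (map_inv _ _).symm
  rw [this]
  simp only [Units.coe_map, RingHom.toMonoidHom_eq_coe, MonoidHom.coe_coe,
    RingHom.mapMatrix_apply]
  rw [← Matrix.map_mul, ← Matrix.map_mul, hU]

theorem Sim.trace_eq {A B : Matrix (Fin 2) (Fin 2) T} (h : Sim T A B) :
    A.trace = B.trace := by
  obtain ⟨U, hU⟩ := h
  rw [← hU, Matrix.trace_mul_comm, ← Matrix.mul_assoc]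
  have h2 : (U⁻¹ : (Matrix (Fin 2) (Fin 2) T)ˣ) * U = 1 := inv_mul_cancel U
  have h3 : ((U⁻¹ : (Matrix (Fin 2) (Fin 2) T)ˣ) : Matrix (Fin 2) (Fin 2) T) * U = 1 := by
    rw [← Units.val_mul, h2, Units.val_one]
  rw [h3, Matrix.one_mul]

theorem Sim.det_eq {A B : Matrix (Fin 2) (Fin 2) T} (h : Sim T A B) :
    A.det = B.det := by
  obtain ⟨U, hU⟩ := h
  have h3 : ((U⁻¹ : (Matrix (Fin 2) (Fin 2) T)ˣ) : Matrix (Fin 2) (Fin 2) T) * U = 1 := by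
    rw [← Units.val_mul, inv_mul_cancel U, Units.val_one]
  rw [← hU, Matrix.det_mul, Matrix.det_mul, mul_comm, ← mul_assoc, ← Matrix.det_mul, h3,
    Matrix.det_one, one_mul]

theorem Sim.smul_add {A B : Matrix (Fin 2) (Fin 2) T} (a g : T) (h : Sim T A B) :
    Sim T (a • (1 : Matrix (Fin 2) (Fin 2) T) + g • A)
      (a • (1 : Matrix (Fin 2) (Fin 2) T) + g • B) := by
  obtain ⟨U, hU⟩ := h
  refine ⟨U, ?_⟩
  have h2 : (U : Matrix (Fin 2) (Fin 2) T) * (U⁻¹ : _) = 1 := U.mul_inv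
  rw [Matrix.mul_add, Matrix.add_mul, Matrix.mul_smul, Matrix.smul_mul, Matrix.mul_smul,
    Matrix.smul_mul, Matrix.mul_one, h2, hU]

theorem conj_smul_add (W : (Matrix (Fin 2) (Fin 2) T)ˣ) (a g : T)
    (X : Matrix (Fin 2) (Fin 2) T) :
    (W : Matrix (Fin 2) (Fin 2) T) * (a • 1 + g • X)
        * ((W⁻¹ : (Matrix (Fin 2) (Fin 2) T)ˣ) : Matrix (Fin 2) (Fin 2) T)
      = a • (1 : Matrix (Fin 2) (Fin 2) T)
        + g • ((W : Matrix (Fin 2) (Fin 2) T) * X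
            * ((W⁻¹ : (Matrix (Fin 2) (Fin 2) T)ˣ) : Matrix (Fin 2) (Fin 2) T)) := by
  rw [Matrix.mul_add, Matrix.add_mul, Matrix.mul_smul, Matrix.smul_mul, Matrix.mul_smul,
    Matrix.smul_mul, Matrix.mul_one, W.mul_inv]

end SimSection

section Companion
variable {T : Type*} [CommRing T] [IsLocalRing T]

theorem sim_companion (M : Matrix (Fin 2) (Fin 2) T)
    (h : IsUnit (M 1 0) ∨ IsUnit (M 0 1) ∨ IsUnit (M 0 0 - M 1 1)) :
    Sim T M !![0, -M.det; 1, M.trace] := by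
  by_cases h10 : IsUnit (M 1 0)
  · refine (sim_of_mul (U := !![1, M 0 0; 0, M 1 0]) ?_ ?_).symm'
    · simpa [Matrix.det_fin_two] using h10
    · ext i j
      fin_cases i <;> fin_cases j <;>
        simp [Matrix.mul_apply, Fin.sum_univ_succ, Matrix.det_fin_two, Matrix.trace_fin_two] <;>
        ring
  by_cases h01 : IsUnit (M 0 1)
  · refine (sim_of_mul (U := !![0, M 0 1; 1, M 1 1]) ?_ ?_).symm'
    · simpa [Matrix.det_fin_two] using h01.neg
    · ext i j
      fin_cases i <;> fin_cases j <;>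
        simp [Matrix.mul_apply, Fin.sum_univ_succ, Matrix.det_fin_two, Matrix.trace_fin_two] <;>
        ring
  · have hd : IsUnit (M 0 0 - M 1 1) := by tauto
    refine (sim_of_mul (U := !![1, M 0 0 + M 0 1; 1, M 1 0 + M 1 1]) ?_ ?_).symm'
    · have hdet : (!![1, M 0 0 + M 0 1; 1, M 1 0 + M 1 1] : Matrix (Fin 2) (Fin 2) T).det
          = (M 1 0 + M 1 1) - (M 0 0 + M 0 1) := by simp [Matrix.det_fin_two]
      rw [hdet]
      have key : IsUnit (-((M 1 0 + M 1 1) - (M 0 0 + M 0 1)) + (M 1 0 - M 0 1)) := by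
        have : -((M 1 0 + M 1 1) - (M 0 0 + M 0 1)) + (M 1 0 - M 0 1) = M 0 0 - M 1 1 := by
          ring
        rw [this]; exact hd
      rcases IsLocalRing.isUnit_or_isUnit_of_isUnit_add key with h1 | h2
      · simpa using h1.neg
      · rcases IsLocalRing.isUnit_or_isUnit_of_isUnit_add
          (show IsUnit (M 1 0 + -(M 0 1)) by simpa [sub_eq_add_neg] using h2) with h3 | h4
        · exact absurd h3 h10
        · exact absurd (by simpa using h4.neg) h01
    · ext i j
      fin_cases i <;> fin_cases j <;>
        simp [Matrix.mul_apply, Fin.sum_univ_succ, Matrix.det_fin_two, Matrix.trace_fin_two] <;>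
        ring
end Companion

theorem gcd_decomp {R : Type*} [CommRing R] [IsDomain R] [IsPrincipalIdealRing R]
    [IsLocalRing R] (b c d : R) (h : ¬(b = 0 ∧ c = 0 ∧ d = 0)) :
    ∃ g b' c' d' : R, b = g * b' ∧ c = g * c' ∧ d = g * d' ∧ g ≠ 0 ∧
      (IsUnit b' ∨ IsUnit c' ∨ IsUnit d') := by
  obtain ⟨g, hg⟩ := Submodule.IsPrincipal.principal (Ideal.span ({b, c, d} : Set R))
  have hspan : Ideal.span {b, c, d} = Ideal.span {g} := hg
  have hb : b ∈ Ideal.span {g} := hspan ▸ Ideal.subset_span (by simp)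
  have hc : c ∈ Ideal.span {g} := hspan ▸ Ideal.subset_span (by simp)
  have hd : d ∈ Ideal.span {g} := hspan ▸ Ideal.subset_span (by simp)
  obtain ⟨b', hb'⟩ := Ideal.mem_span_singleton'.mp hb
  obtain ⟨c', hc'⟩ := Ideal.mem_span_singleton'.mp hc
  obtain ⟨d', hd'⟩ := Ideal.mem_span_singleton'.mp hd
  have hg0 : g ≠ 0 := by
    rintro rfl
    rw [Ideal.span_singleton_eq_bot.mpr rfl] at hb hc hd
    exact h ⟨by simpa using hb, by simpa using hc, by simpa using hd⟩
  have hgmem : g ∈ Ideal.span ({b, c, d} : Set R) := by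
    rw [hspan]; exact Ideal.mem_span_singleton_self g
  rw [show ({b, c, d} : Set R) = insert b (insert c {d}) from rfl] at hgmem
  obtain ⟨x, y, hy, hxy⟩ := Submodule.mem_span_insert.mp hgmem
  obtain ⟨u, v, hv, huv⟩ := Submodule.mem_span_insert.mp hy
  obtain ⟨w, hw⟩ := Ideal.mem_span_singleton'.mp hv
  refine ⟨g, b', c', d', by rw [mul_comm]; exact hb'.symm, by rw [mul_comm]; exact hc'.symm,
    by rw [mul_comm]; exact hd'.symm, hg0, ?_⟩
  by_contra hcon
  push_neg at hcon
  obtain ⟨hub, huc, hud⟩ := hcon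
  have key : g * (x * b' + u * c' + w * d') = g * 1 := by
    have : g = x * b + (u * c + w * d) := by
      rw [hxy, huv, ← hw, smul_eq_mul, smul_eq_mul]
    calc g * (x * b' + u * c' + w * d') = x * (b' * g) + u * (c' * g) + w * (d' * g) := by ring
      _ = x * b + (u * c + w * d) := by rw [hb', hc', hd']; ring
      _ = g * 1 := by rw [← this, mul_one]
  have hone : x * b' + u * c' + w * d' = 1 := mul_left_cancel₀ hg0 key
  have : IsUnit (x * b' + u * c' + w * d') := hone ▸ isUnit_one
  rcases IsLocalRing.isUnit_or_isUnit_of_isUnit_add this with h1 | h2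
  · rcases IsLocalRing.isUnit_or_isUnit_of_isUnit_add h1 with h3 | h4
    · exact hub (isUnit_of_mul_isUnit_right h3)
    · exact huc (isUnit_of_mul_isUnit_right h4)
  · exact hud (isUnit_of_mul_isUnit_right h2)

theorem my_div_helper
    (R : Type*) [CommRing R] [IsDomain R] [IsDiscreteValuationRing R]
    (K : Type*) [Field K] [Algebra R K] [IsFractionRing R K]
    (L : Type*) [Field L] [Algebra K L] [FiniteDimensional K L]
    [Algebra R L] [IsScalarTower R K L]
    (g c : R) (x : integralClosure R L) (hg : g ≠ 0)
    (h : algebraMap R (integralClosure R L) g * x = algebraMap R (integralClosure R L) c) :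
    ∃ r : R, x = algebraMap R (integralClosure R L) r ∧ g * r = c := by
  have injK : Function.Injective (algebraMap R K) := IsFractionRing.injective R K
  have injKL : Function.Injective (algebraMap K L) := (algebraMap K L).injective
  set gK := algebraMap R K g with hgKdef
  set cK := algebraMap R K c with hcKdef
  have hgK0 : gK ≠ 0 := fun hh => hg (injK (by rw [← hgKdef, hh, map_zero]))
  set y : K := cK / gK with hydef
  have hL : (algebraMap R L g) * (x : L) = algebraMap R L c := by
    have := congrArg (Subalgebra.val (integralClosure R L)) h
    simpa using this
  have hRL : ∀ r : R, algebraMap R L r = algebraMap K L (algebraMap R K r) := fun r => by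
    rw [IsScalarTower.algebraMap_eq R K L]; rfl
  have hxy : (x : L) = algebraMap K L y := by
    have h1 : algebraMap K L gK * (x : L) = algebraMap K L cK := by
      rw [← hRL, ← hRL]; exact hL
    have h2 : algebraMap K L gK ≠ 0 := fun hh => hgK0 (injKL (by rw [hh, map_zero]))
    have h3 : algebraMap K L cK = algebraMap K L gK * algebraMap K L y := by
      rw [← _root_.map_mul]
      congr 1
      rw [hydef, mul_div_assoc', mul_div_cancel_left₀ _ hgK0]
    rw [h3] at h1
    exact mul_left_cancel₀ h2 h1
  have hyint : IsIntegral R y := by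
    have hxint : IsIntegral R (algebraMap K L y) := hxy ▸ x.2
    exact (isIntegral_algHom_iff (IsScalarTower.toAlgHom R K L)
      (by exact injKL)).mp hxint
  obtain ⟨r, hr⟩ := IsIntegrallyClosed.isIntegral_iff.mp hyint
  refine ⟨r, ?_, ?_⟩
  · apply Subtype.ext
    have : ((algebraMap R (integralClosure R L) r : integralClosure R L) : L)
        = algebraMap R L r := by simp
    rw [this, hRL, hr, ← hxy]
  · apply injK
    rw [_root_.map_mul, hr, hydef]
    field_simp
    rfl

set_option maxHeartbeats 1600000 in
set_option synthInstance.maxHeartbeats 400000 in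
theorem core_descent
    (R : Type*) [CommRing R] [IsDomain R] [IsDiscreteValuationRing R]
    (K : Type*) [Field K] [Algebra R K] [IsFractionRing R K]
    (L : Type*) [Field L] [Algebra K L] [FiniteDimensional K L]
    [Algebra R L] [IsScalarTower R K L]
    (a1 b1 g h t1 n1 t2 n2 : R) (hg0 : g ≠ 0) (hh0 : h ≠ 0)
    (hsim : Sim (integralClosure R L)
      ((!![a1, -(g*n1); g, a1 + g*t1]).map (algebraMap R (integralClosure R L)))
      ((!![b1, -(h*n2); h, b1 + h*t2]).map (algebraMap R (integralClosure R L)))) :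
    Sim R !![a1, -(g*n1); g, a1 + g*t1] !![b1, -(h*n2); h, b1 + h*t2] := by
  have injRL : Function.Injective (algebraMap R L) := by
    rw [IsScalarTower.algebraMap_eq R K L]
    exact (algebraMap K L).injective.comp (IsFractionRing.injective R K)
  have injφ : Function.Injective (algebraMap R (integralClosure R L)) := fun a b hab => by
    apply injRL
    have := congrArg (Subalgebra.val (integralClosure R L)) hab
    simpa using this
  set φ := algebraMap R (integralClosure R L) with hφdef
  -- split the mapped matrices
  have hsplitX : (!![a1, -(g*n1); g, a1 + g*t1]).map φ
      = φ a1 • (1 : Matrix (Fin 2) (Fin 2) (integralClosure R L))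
        + φ g • ((!![0, -n1; 1, t1]).map φ) := by
    ext i j
    fin_cases i <;> fin_cases j <;>
      simp [Matrix.map_apply, Matrix.one_apply, map_add, _root_.map_mul, map_neg, _root_.map_one]
  have hsplitY : (!![b1, -(h*n2); h, b1 + h*t2]).map φ
      = φ b1 • (1 : Matrix (Fin 2) (Fin 2) (integralClosure R L))
        + φ h • ((!![0, -n2; 1, t2]).map φ) := by
    ext i j
    fin_cases i <;> fin_cases j <;>
      simp [Matrix.map_apply, Matrix.one_apply, map_add, _root_.map_mul, map_neg, _root_.map_one]
  -- extract entry equations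
  obtain ⟨W, hW⟩ := hsim
  have hP : φ a1 • (1 : Matrix (Fin 2) (Fin 2) (integralClosure R L))
      + φ g • ((W : Matrix (Fin 2) (Fin 2) _) * ((!![0, -n1; 1, t1]).map φ) * ((W⁻¹ : (Matrix (Fin 2) (Fin 2) (integralClosure R L))ˣ) : Matrix (Fin 2) (Fin 2) (integralClosure R L)))
      = (!![b1, -(h*n2); h, b1 + h*t2]).map φ := by
    rw [← hW, hsplitX, conj_smul_add]
  obtain ⟨W', hW'⟩ := (Sim.symm' ⟨W, hW⟩ :)
  have hQ : φ b1 • (1 : Matrix (Fin 2) (Fin 2) (integralClosure R L))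
      + φ h • ((W' : Matrix (Fin 2) (Fin 2) _) * ((!![0, -n2; 1, t2]).map φ) * ((W'⁻¹ : (Matrix (Fin 2) (Fin 2) (integralClosure R L))ˣ) : Matrix (Fin 2) (Fin 2) (integralClosure R L)))
      = (!![a1, -(g*n1); g, a1 + g*t1]).map φ := by
    rw [← hW', hsplitY, conj_smul_add]
  set P := (W : Matrix (Fin 2) (Fin 2) (integralClosure R L)) * ((!![0, -n1; 1, t1]).map φ) * ((W⁻¹ : (Matrix (Fin 2) (Fin 2) (integralClosure R L))ˣ) : Matrix (Fin 2) (Fin 2) (integralClosure R L)) with hPdef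
  set Q := (W' : Matrix (Fin 2) (Fin 2) (integralClosure R L)) * ((!![0, -n2; 1, t2]).map φ) * ((W'⁻¹ : (Matrix (Fin 2) (Fin 2) (integralClosure R L))ˣ) : Matrix (Fin 2) (Fin 2) (integralClosure R L)) with hQdef
  have e10 : φ g * P 1 0 = φ h := by
    have := congrFun (congrFun hP 1) 0
    simpa [Matrix.add_apply, Matrix.smul_apply, Matrix.one_apply, smul_eq_mul,
      Matrix.map_apply] using this
  have f10 : φ h * Q 1 0 = φ g := by
    have := congrFun (congrFun hQ 1) 0
    simpa [Matrix.add_apply, Matrix.smul_apply, Matrix.one_apply, smul_eq_mul,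
      Matrix.map_apply] using this
  have e00 : φ a1 + φ g * P 0 0 = φ b1 := by
    have := congrFun (congrFun hP 0) 0
    simpa [Matrix.add_apply, Matrix.smul_apply, Matrix.one_apply, smul_eq_mul,
      Matrix.map_apply] using this
  obtain ⟨p, hPp, hgp⟩ := my_div_helper R K L g h (P 1 0) hg0 e10
  obtain ⟨q, hQq, hhq⟩ := my_div_helper R K L h g (Q 1 0) hh0 f10
  have e00' : φ g * P 0 0 = φ (b1 - a1) := by
    rw [map_sub]; linear_combination e00
  obtain ⟨r, hPr, hgr⟩ := my_div_helper R K L g (b1 - a1) (P 0 0) hg0 e00'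
  have hpq : p * q = 1 := by
    apply mul_left_cancel₀ hg0
    rw [← mul_assoc, hgp, hhq, mul_one]
  have hpu : IsUnit p := IsUnit.of_mul_eq_one q hpq
  -- rewrite Y as a1 • 1 + g • N'
  have hBN : !![b1, -(h*n2); h, b1 + h*t2]
      = a1 • (1 : Matrix (Fin 2) (Fin 2) R) + g • !![r, -(p*n2); p, r + p*t2] := by
    ext i j
    fin_cases i <;> fin_cases j
    · simp [Matrix.one_apply]; linear_combination -hgr
    · simp [Matrix.one_apply]; linear_combination (-n2) * hgp
    · simp [Matrix.one_apply]; linear_combination -hgp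
    · simp [Matrix.one_apply]; linear_combination -hgr - t2 * hgp
  have hN'u : IsUnit ((!![r, -(p*n2); p, r + p*t2] : Matrix (Fin 2) (Fin 2) R) 1 0) := by
    simpa using hpu
  have hsimN := sim_companion (!![r, -(p*n2); p, r + p*t2] : Matrix (Fin 2) (Fin 2) R)
    (Or.inl hN'u)
  -- normalize companion data
  set tt := 2*r + p*t2 with httdef
  set nn := r*(r + p*t2) + p*p*n2 with hnndef
  have hCN : !![(0:R), -((!![r, -(p*n2); p, r + p*t2] : Matrix (Fin 2) (Fin 2) R).det);
      1, (!![r, -(p*n2); p, r + p*t2] : Matrix (Fin 2) (Fin 2) R).trace] = !![0, -nn; 1, tt] := by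
    ext i j
    fin_cases i <;> fin_cases j <;>
      simp [Matrix.det_fin_two, Matrix.trace_fin_two, httdef, hnndef] <;> ring
  rw [hCN] at hsimN
  have hsimB2 : Sim R !![b1, -(h*n2); h, b1 + h*t2]
      (a1 • (1 : Matrix (Fin 2) (Fin 2) R) + g • !![0, -nn; 1, tt]) := by
    rw [hBN]
    exact Sim.smul_add a1 g hsimN
  -- traces and determinants
  have trmap : ∀ X : Matrix (Fin 2) (Fin 2) R, (X.map φ).trace = φ X.trace := fun X => by
    simp [Matrix.trace_fin_two, Matrix.map_apply, map_add]
  have htrXY : (!![a1, -(g*n1); g, a1 + g*t1] : Matrix (Fin 2) (Fin 2) R).trace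
      = (!![b1, -(h*n2); h, b1 + h*t2] : Matrix (Fin 2) (Fin 2) R).trace := by
    apply injφ
    rw [← trmap, ← trmap]
    exact Sim.trace_eq ⟨W, hW⟩
  have hdetXY : (!![a1, -(g*n1); g, a1 + g*t1] : Matrix (Fin 2) (Fin 2) R).det
      = (!![b1, -(h*n2); h, b1 + h*t2] : Matrix (Fin 2) (Fin 2) R).det := by
    apply injφ
    rw [RingHom.map_det, RingHom.map_det]
    exact Sim.det_eq ⟨W, hW⟩
  have htrB2 := hsimB2.trace_eq
  have hdetB2 := hsimB2.det_eq
  have ht1 : t1 = tt := by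
    have h1 := htrXY.trans htrB2
    simp [Matrix.trace_fin_two, Matrix.add_apply, Matrix.smul_apply, Matrix.one_apply,
      smul_eq_mul] at h1
    apply mul_left_cancel₀ hg0
    first
      | linear_combination h1
      | linear_combination -h1
  have hn1 : n1 = nn := by
    have h2 := hdetXY.trans hdetB2
    simp [Matrix.det_fin_two, Matrix.add_apply, Matrix.smul_apply, Matrix.one_apply,
      smul_eq_mul] at h2
    have hgg : g * g ≠ 0 := mul_ne_zero hg0 hg0
    apply mul_left_cancel₀ hgg
    first
      | linear_combination h2 - (a1*g) * ht1
      | linear_combination h2 + (a1*g) * ht1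
      | linear_combination -h2 - (a1*g) * ht1
      | linear_combination -h2 + (a1*g) * ht1
  -- conclude
  have hfin : (a1 • (1 : Matrix (Fin 2) (Fin 2) R) + g • !![0, -nn; 1, tt])
      = !![a1, -(g*n1); g, a1 + g*t1] := by
    ext i j
    fin_cases i <;> fin_cases j <;>
      simp [Matrix.one_apply, ht1, hn1]
  rw [hfin] at hsimB2
  exact hsimB2.symm'

set_option maxHeartbeats 1600000 in
set_option synthInstance.maxHeartbeats 400000 in
/-- Let `R` be a discrete valuation ring with fraction field `K`,
`L/K` a finite field extension and `S` the integral closure of `R` in `L`. Then two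
matrices `A, B ∈ Mat_2(R)` are similar over `R` if and only if they are similar over
`S`. -/
theorem similar_over_R_iff_similar_over_integral_closure
    (R : Type*) [CommRing R] [IsDomain R] [IsDiscreteValuationRing R]
    (K : Type*) [Field K] [Algebra R K] [IsFractionRing R K]
    (L : Type*) [Field L] [Algebra K L] [FiniteDimensional K L]
    [Algebra R L] [IsScalarTower R K L]
    (A B : Matrix (Fin 2) (Fin 2) R) :
    (∃ U : (Matrix (Fin 2) (Fin 2) R)ˣ,
        (U : Matrix (Fin 2) (Fin 2) R) * A * (U⁻¹ : _) = B) ↔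
      (∃ V : (Matrix (Fin 2) (Fin 2) (integralClosure R L))ˣ,
        (V : Matrix (Fin 2) (Fin 2) (integralClosure R L)) *
            A.map (algebraMap R (integralClosure R L)) * (V⁻¹ : _) =
          B.map (algebraMap R (integralClosure R L))) := by
  constructor
  · rintro ⟨U, hU⟩
    exact Sim.map (algebraMap R (integralClosure R L)) ⟨U, hU⟩
  · intro hSex
    have hS : Sim (integralClosure R L) (A.map (algebraMap R (integralClosure R L)))
        (B.map (algebraMap R (integralClosure R L))) := hSex
    have injRL : Function.Injective (algebraMap R L) := by
      rw [IsScalarTower.algebraMap_eq R K L]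
      exact (algebraMap K L).injective.comp (IsFractionRing.injective R K)
    have injphi : Function.Injective (algebraMap R (integralClosure R L)) := fun a b hab => by
      apply injRL
      have := congrArg (Subalgebra.val (integralClosure R L)) hab
      simpa using this
    have scalar_case : ∀ X Y : Matrix (Fin 2) (Fin 2) R,
        Sim (integralClosure R L) (X.map (algebraMap R (integralClosure R L)))
          (Y.map (algebraMap R (integralClosure R L))) →
        X 0 1 = 0 → X 1 0 = 0 → X 0 0 = X 1 1 → X = Y := by
      intro X Y hXY h01 h10 hdiag
      have hX1 : X.map (algebraMap R (integralClosure R L))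
          = algebraMap R (integralClosure R L) (X 0 0)
            • (1 : Matrix (Fin 2) (Fin 2) (integralClosure R L)) := by
        ext i j
        fin_cases i <;> fin_cases j <;>
          simp [Matrix.map_apply, Matrix.one_apply, h01, h10, ← hdiag]
      obtain ⟨W, hW⟩ := hXY
      have key : Y.map (algebraMap R (integralClosure R L))
          = X.map (algebraMap R (integralClosure R L)) := by
        rw [← hW, hX1, Matrix.mul_smul, Matrix.mul_one, Matrix.smul_mul, W.mul_inv]
      ext i j
      exact injphi (congrFun (congrFun key.symm i) j)
    by_cases hA : A 0 1 = 0 ∧ A 1 0 = 0 ∧ A 0 0 = A 1 1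
    · have hAB : A = B := scalar_case A B hS hA.1 hA.2.1 hA.2.2
      exact ⟨1, by simp [hAB]⟩
    by_cases hB : B 0 1 = 0 ∧ B 1 0 = 0 ∧ B 0 0 = B 1 1
    · have hBA : B = A := scalar_case B A hS.symm' hB.1 hB.2.1 hB.2.2
      exact ⟨1, by simp [hBA]⟩
    -- both non-scalar: decompose
    obtain ⟨g, xb, xc, xd, hgb, hgc, hgd, hg0, hgu⟩ :=
      gcd_decomp (A 0 1) (A 1 0) (A 1 1 - A 0 0) (by
        rintro ⟨h1, h2, h3⟩
        exact hA ⟨h1, h2, (sub_eq_zero.mp h3).symm⟩)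
    obtain ⟨h, yb, yc, yd, hhb, hhc, hhd, hh0, hhu⟩ :=
      gcd_decomp (B 0 1) (B 1 0) (B 1 1 - B 0 0) (by
        rintro ⟨h1, h2, h3⟩
        exact hB ⟨h1, h2, (sub_eq_zero.mp h3).symm⟩)
    set M : Matrix (Fin 2) (Fin 2) R := !![0, xb; xc, xd] with hMdef
    set N : Matrix (Fin 2) (Fin 2) R := !![0, yb; yc, yd] with hNdef
    have hAM : A = A 0 0 • (1 : Matrix (Fin 2) (Fin 2) R) + g • M := by
      ext i j
      fin_cases i <;> fin_cases j
      · simp [hMdef, Matrix.one_apply]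
      · simp [hMdef, Matrix.one_apply]; exact hgb
      · simp [hMdef, Matrix.one_apply]; exact hgc
      · simp [hMdef, Matrix.one_apply]; linear_combination hgd
    have hBN : B = B 0 0 • (1 : Matrix (Fin 2) (Fin 2) R) + h • N := by
      ext i j
      fin_cases i <;> fin_cases j
      · simp [hNdef, Matrix.one_apply]
      · simp [hNdef, Matrix.one_apply]; exact hhb
      · simp [hNdef, Matrix.one_apply]; exact hhc
      · simp [hNdef, Matrix.one_apply]; linear_combination hhd
    have hMu : IsUnit (M 1 0) ∨ IsUnit (M 0 1) ∨ IsUnit (M 0 0 - M 1 1) := by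
      rcases hgu with h1 | h2 | h3
      · right; left; simpa [hMdef] using h1
      · left; simpa [hMdef] using h2
      · right; right
        have : M 0 0 - M 1 1 = -xd := by simp [hMdef]
        rw [this]; exact h3.neg
    have hNu : IsUnit (N 1 0) ∨ IsUnit (N 0 1) ∨ IsUnit (N 0 0 - N 1 1) := by
      rcases hhu with h1 | h2 | h3
      · right; left; simpa [hNdef] using h1
      · left; simpa [hNdef] using h2
      · right; right
        have : N 0 0 - N 1 1 = -yd := by simp [hNdef]
        rw [this]; exact h3.neg
    have hXA : A 0 0 • (1 : Matrix (Fin 2) (Fin 2) R) + g • !![0, -M.det; 1, M.trace]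
        = !![A 0 0, -(g * M.det); g, A 0 0 + g * M.trace] := by
      ext i j
      fin_cases i <;> fin_cases j <;> simp [Matrix.one_apply]
    have hXB : B 0 0 • (1 : Matrix (Fin 2) (Fin 2) R) + h • !![0, -N.det; 1, N.trace]
        = !![B 0 0, -(h * N.det); h, B 0 0 + h * N.trace] := by
      ext i j
      fin_cases i <;> fin_cases j <;> simp [Matrix.one_apply]
    have hsimA : Sim R A !![A 0 0, -(g * M.det); g, A 0 0 + g * M.trace] := by
      have := Sim.smul_add (A 0 0) g (sim_companion M hMu)
      rw [← hAM, hXA] at this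
      exact this
    have hsimB : Sim R B !![B 0 0, -(h * N.det); h, B 0 0 + h * N.trace] := by
      have := Sim.smul_add (B 0 0) h (sim_companion N hNu)
      rw [← hBN, hXB] at this
      exact this
    have hsimS : Sim (integralClosure R L)
        ((!![A 0 0, -(g * M.det); g, A 0 0 + g * M.trace]).map
          (algebraMap R (integralClosure R L)))
        ((!![B 0 0, -(h * N.det); h, B 0 0 + h * N.trace]).map
          (algebraMap R (integralClosure R L))) :=
      ((hsimA.map (algebraMap R (integralClosure R L))).symm'.trans' hS).trans'
        (hsimB.map (algebraMap R (integralClosure R L)))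
    have hcore := core_descent R K L (A 0 0) (B 0 0) g h M.trace M.det N.trace N.det
      hg0 hh0 hsimS
    exact hsimA.trans' (hcore.trans' hsimB.symm')
end

section
/- Let R be a principal ideal domain with fraction field K, let f ∈ R[x] be a monic irreducible polynomial of degree n, and let θ be the class of x in R[θ] := R[x]/(f). Then there is a bijection between the set of GL_n(R)-conjugacy classes of matrices A ∈ Mat_n(R) with f(A) = 0 and the set of ideal classes of R[θ], where two nonzero ideals J₁, J₂ of R[θ] are in the same class if there exist nonzero α₁, α₂ ∈ R[θ] with α₁J₁ = α₂J₂. -/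
open Polynomial

set_option linter.unusedSectionVars false

section Setup
variable {R : Type*} [CommRing R] [IsDomain R] [IsPrincipalIdealRing R]
variable {n : ℕ} {f : R[X]}

/-- degree positivity -/
theorem LM.npos (hf : f.Monic) (hirr : Irreducible f) (hdeg : f.natDegree = n) : 0 < n := by
  rcases Nat.eq_zero_or_pos n with h | h
  · exfalso
    have : f.natDegree = 0 := by omega
    have : f = 1 := by rwa [hf.natDegree_eq_zero] at this
    exact hirr.not_isUnit (this ▸ isUnit_one)
  · exact h

/-- over K: any polynomial of small degree killing A is zero -/
theorem LM.aeval_eq_zero_R (K : Type*) [Field K] [Algebra R K] [IsFractionRing R K]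
    (hf : f.Monic) (hirr : Irreducible f) (hdeg : f.natDegree = n)
    (A : Matrix (Fin n) (Fin n) R) (hA : aeval A f = 0)
    (p : R[X]) (hp : p.natDegree < n) (hp0 : aeval A p = 0) : p = 0 := by
  have hn : 0 < n := LM.npos hf hirr hdeg
  by_contra hne
  have hinj : Function.Injective (algebraMap R K) := IsFractionRing.injective R K
  set AK : Matrix (Fin n) (Fin n) K := A.map (algebraMap R K) with hAK
  set fK : K[X] := f.map (algebraMap R K) with hfK
  set q : K[X] := p.map (algebraMap R K) with hq
  have hq0 : q ≠ 0 := fun h => hne (Polynomial.map_injective _ hinj (by simpa using h))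
  -- aeval of mapped matrices
  have key : ∀ r : R[X], aeval A r = 0 → aeval AK (r.map (algebraMap R K)) = 0 := by
    intro r hr
    rw [Polynomial.aeval_map_algebraMap]
    have : AK = (Algebra.ofId R K).mapMatrix A := rfl
    rw [this, Polynomial.aeval_algHom_apply, hr, map_zero]
  have hfirr : Irreducible fK := (hf.irreducible_iff_irreducible_map_fraction_map (K := K)).mp hirr
  haveI : (Ideal.span {fK}).IsMaximal := PrincipalIdealRing.isMaximal_of_irreducible hfirr
  letI : Field (K[X] ⧸ Ideal.span {fK}) := Ideal.Quotient.field _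
  have hker0 : Ideal.span {fK} ≤ RingHom.ker (aeval AK : K[X] →ₐ[K] _).toRingHom := by
    rw [Ideal.span_le, Set.singleton_subset_iff]
    exact key f hA
  have hker : ∀ a ∈ Ideal.span {fK}, (aeval AK : K[X] →ₐ[K] _).toRingHom a = 0 :=
    fun a ha => RingHom.mem_ker.mp (hker0 ha)
  set ψ := Ideal.Quotient.lift (Ideal.span {fK}) _ hker
  haveI : Nonempty (Fin n) := ⟨⟨0, hn⟩⟩
  have hψinj : Function.Injective ψ := ψ.injective
  have h5 := key p hp0
  rw [← hq] at h5
  have : ψ (Ideal.Quotient.mk _ q) = 0 := by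
    show Ideal.Quotient.lift (Ideal.span {fK}) _ hker _ = 0
    rw [Ideal.Quotient.lift_mk]
    exact h5
  have hq' : q ∈ Ideal.span {fK} := by
    rw [← Ideal.Quotient.eq_zero_iff_mem]
    exact hψinj (by simpa using this)
  have hdvd : fK ∣ q := Ideal.mem_span_singleton.mp hq'
  have : fK.natDegree ≤ q.natDegree := Polynomial.natDegree_le_of_dvd hdvd hq0
  have h1 : fK.natDegree = n := by rw [hfK, hf.natDegree_map, hdeg]
  have h2 : q.natDegree ≤ p.natDegree := Polynomial.natDegree_map_le
  omega


variable {R : Type*} [CommRing R] [IsDomain R] [IsPrincipalIdealRing R]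
variable {n : ℕ} {f : R[X]}

theorem LM.isDomain (hirr : Irreducible f) : IsDomain (AdjoinRoot f) := by
  haveI : (Ideal.span {f}).IsPrime := by
    rw [Ideal.span_singleton_prime hirr.ne_zero]
    exact UniqueFactorizationMonoid.irreducible_iff_prime.mp hirr
  exact Ideal.Quotient.isDomain (Ideal.span {f})

noncomputable def LM.bS (hf : f.Monic) (hdeg : f.natDegree = n) :
    Module.Basis (Fin n) R (AdjoinRoot f) :=
  (AdjoinRoot.powerBasis' hf).basis.reindex (finCongr (by rw [AdjoinRoot.powerBasis'_dim, hdeg]))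

theorem LM.aeval_eq_zero_S (K : Type*) [Field K] [Algebra R K] [IsFractionRing R K]
    (hf : f.Monic) (hirr : Irreducible f) (hdeg : f.natDegree = n)
    (A : Matrix (Fin n) (Fin n) R) (hA : aeval A f = 0)
    (q : (AdjoinRoot f)[X]) (hq : q.natDegree < n)
    (h : aeval (A.map (algebraMap R (AdjoinRoot f))) q = 0) : q = 0 := by
  have hn : 0 < n := LM.npos hf hirr hdeg
  set S := AdjoinRoot f
  set AS := A.map (algebraMap R S) with hAS
  set B : Module.Basis (Fin n) R S := LM.bS hf hdeg with hB
  have hpow : ∀ k : ℕ, AS ^ k = (A ^ k).map (algebraMap R S) := by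
    intro k
    rw [hAS, ← RingHom.mapMatrix_apply, ← RingHom.mapMatrix_apply, map_pow]
  have hsum : ∑ k ∈ Finset.range n, q.coeff k • AS ^ k = 0 := by
    rw [← Polynomial.aeval_eq_sum_range' hq, h]
  have hentry : ∀ (t : Fin n) (i j : Fin n),
      ∑ k ∈ Finset.range n, (A ^ k) i j * (B.repr (q.coeff k)) t = 0 := by
    intro t i j
    have h1 : ∑ k ∈ Finset.range n, q.coeff k * (AS ^ k) i j = 0 := by
      have := congrFun (congrFun hsum i) j
      simpa [Matrix.sum_apply] using this
    have h2 : ∀ k, q.coeff k * (AS ^ k) i j = (A ^ k) i j • q.coeff k := by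
      intro k
      rw [hpow k, Matrix.map_apply, mul_comm, ← Algebra.smul_def]
    rw [Finset.sum_congr rfl (fun k _ => h2 k)] at h1
    have := congrArg (fun s => (B.repr s) t) h1
    simpa [map_sum, Finsupp.smul_apply, smul_eq_mul] using this
  have hcoeff : ∀ k, k < n → q.coeff k = 0 := by
    intro k hk
    have hrepr : ∀ t : Fin n, (B.repr (q.coeff k)) t = 0 := by
      intro t
      set pt : R[X] := ∑ k0 ∈ Finset.range n, C ((B.repr (q.coeff k0)) t) * X ^ k0 with hpt
      have hptdeg : pt.natDegree < n := by
        have : pt.natDegree ≤ n - 1 := by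
          apply Polynomial.natDegree_sum_le_of_forall_le
          intro k0 hk0
          refine le_trans (Polynomial.natDegree_C_mul_X_pow_le _ _) ?_
          have := Finset.mem_range.mp hk0
          omega
        omega
      have hpt0 : aeval A pt = 0 := by
        apply Matrix.ext
        intro i j
        have : aeval A pt = ∑ k0 ∈ Finset.range n, ((B.repr (q.coeff k0)) t) • A ^ k0 := by
          rw [hpt, map_sum]
          congr 1
          ext k0
          rw [map_mul, aeval_C, map_pow, aeval_X, Algebra.smul_def]
        rw [this]
        have := hentry t i j
        simp only [Matrix.sum_apply, Matrix.smul_apply, smul_eq_mul, Matrix.zero_apply]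
        rw [← this]
        congr 1
        ext k0
        ring
      have := LM.aeval_eq_zero_R K hf hirr hdeg A hA pt hptdeg hpt0
      have hc := congrArg (fun p => Polynomial.coeff p k) this
      simp only [hpt, Polynomial.finset_sum_coeff, Polynomial.coeff_C_mul,
        Polynomial.coeff_X_pow, Polynomial.coeff_zero] at hc
      rw [Finset.sum_eq_single k] at hc
      · simpa using hc
      · intro b _ hb
        simp [Ne.symm hb]
      · intro hkk
        exact absurd (Finset.mem_range.mpr hk) hkk
    have : B.repr (q.coeff k) = 0 := Finsupp.ext hrepr
    simpa using B.repr.map_eq_zero_iff.mp this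
  apply Polynomial.ext
  intro k
  by_cases hk : k < n
  · simp [hcoeff k hk]
  · simp [Polynomial.coeff_eq_zero_of_natDegree_lt (lt_of_lt_of_le hq (le_of_not_gt hk))]

noncomputable def LM.matOf {J : Ideal (AdjoinRoot f)} (b : Module.Basis (Fin n) R ↥J) :
    Matrix (Fin n) (Fin n) R :=
  LinearMap.toMatrix b b ((Algebra.lsmul R R ↥J) (AdjoinRoot.root f))

theorem LM.exists_eigen (K : Type*) [Field K] [Algebra R K] [IsFractionRing R K]
    (hf : f.Monic) (hirr : Irreducible f) (hdeg : f.natDegree = n)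
    (A : Matrix (Fin n) (Fin n) R) (hA : aeval A f = 0) :
    ∃ w : Fin n → AdjoinRoot f, w ≠ 0 ∧
      ∀ j, AdjoinRoot.root f * w j = ∑ k, w k * algebraMap R (AdjoinRoot f) (A k j) := by
  haveI := LM.isDomain (f := f) hirr
  letI S := AdjoinRoot f
  set θ : AdjoinRoot f := AdjoinRoot.root f with hθ
  set AS := A.map (algebraMap R (AdjoinRoot f)) with hAS
  set fS : (AdjoinRoot f)[X] := f.map (algebraMap R (AdjoinRoot f)) with hfS
  have hfS0 : fS.eval θ = 0 := by
    rw [hfS, Polynomial.eval_map, ← Polynomial.aeval_def, AdjoinRoot.aeval_eq,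
      AdjoinRoot.mk_self]
  set g : (AdjoinRoot f)[X] := fS /ₘ (X - C θ) with hg
  have hfact : fS = (X - C θ) * g := by
    have h1 := Polynomial.modByMonic_add_div fS (X - C θ)
    rw [Polynomial.modByMonic_X_sub_C_eq_C_eval, hfS0, Polynomial.C_0, zero_add] at h1
    exact h1.symm
  have hfSmonic : fS.Monic := hf.map _
  have hg0 : g ≠ 0 := by
    intro h
    rw [h, mul_zero] at hfact
    exact hfSmonic.ne_zero hfact
  have hgdeg : g.natDegree < n := by
    have h1 : fS.natDegree = n := by rw [hfS, hf.natDegree_map, hdeg]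
    have h2 : fS.natDegree = (X - C θ).natDegree + g.natDegree := by
      rw [hfact, Polynomial.natDegree_mul (Polynomial.X_sub_C_ne_zero θ) hg0]
    rw [Polynomial.natDegree_X_sub_C] at h2
    omega
  set G := Polynomial.aeval AS g with hG
  have haesS : Polynomial.aeval AS fS = 0 := by
    rw [hfS, Polynomial.aeval_map_algebraMap]
    have : AS = (Algebra.ofId R (AdjoinRoot f)).mapMatrix A := rfl
    rw [this, Polynomial.aeval_algHom_apply, hA, map_zero]
  have hcomm : G * (AS - algebraMap _ (Matrix (Fin n) (Fin n) (AdjoinRoot f)) θ) = 0 := by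
    have : Polynomial.aeval AS (g * (X - C θ)) = 0 := by
      rw [mul_comm, ← hfact]; exact haesS
    rw [map_mul] at this
    simpa [Polynomial.aeval_X, Polynomial.aeval_C] using this
  have hG0 : G ≠ 0 := by
    intro h
    exact hg0 (LM.aeval_eq_zero_S K hf hirr hdeg A hA g hgdeg (by rw [← hG]; exact h))
  have hGAS : G * AS = θ • G := by
    have h1 : G * AS - G * algebraMap _ (Matrix (Fin n) (Fin n) (AdjoinRoot f)) θ = 0 := by
      rw [← mul_sub]; exact hcomm
    have h2 : G * algebraMap _ (Matrix (Fin n) (Fin n) (AdjoinRoot f)) θ = θ • G := by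
      rw [Algebra.algebraMap_eq_smul_one, mul_smul_comm, mul_one]
    rw [h2] at h1
    exact sub_eq_zero.mp h1
  obtain ⟨i₀, hi₀⟩ : ∃ i, G i ≠ 0 := by
    by_contra h
    push_neg at h
    exact hG0 (by ext i j; rw [h i]; rfl)
  refine ⟨G i₀, hi₀, fun j => ?_⟩
  have := congrFun (congrFun hGAS i₀) j
  rw [Matrix.mul_apply] at this
  simp only [Matrix.smul_apply, smul_eq_mul] at this
  rw [← this]
  apply Finset.sum_congr rfl
  intro k _
  rw [hAS, Matrix.map_apply]

theorem LM.ideal_of_eigen (w : Fin n → AdjoinRoot f) (hw : w ≠ 0)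
    (hf : f.Monic) (hirr : Irreducible f) (hdeg : f.natDegree = n)
    (A : Matrix (Fin n) (Fin n) R)
    (heig : ∀ j, AdjoinRoot.root f * w j = ∑ k, w k * algebraMap R (AdjoinRoot f) (A k j)) :
    ∃ (J : Ideal (AdjoinRoot f)) (hJ : J ≠ ⊥) (bw : Module.Basis (Fin n) R ↥J),
      LM.matOf bw = A := by
  haveI := LM.isDomain (f := f) hirr
  set N : Submodule R (AdjoinRoot f) := Submodule.span R (Set.range w) with hN
  have heig' : ∀ j, AdjoinRoot.root f * w j = ∑ k, A k j • w k := by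
    intro j
    rw [heig j]
    congr 1; ext k
    rw [Algebra.smul_def, mul_comm]
  have hθN : ∀ x ∈ N, AdjoinRoot.root f * x ∈ N := by
    intro x hx
    induction hx using Submodule.span_induction with
    | mem x h =>
      obtain ⟨j, rfl⟩ := h
      rw [heig' j]
      exact Submodule.sum_mem _ fun k _ =>
        Submodule.smul_mem _ _ (Submodule.subset_span ⟨k, rfl⟩)
    | zero => rw [mul_zero]; exact N.zero_mem
    | add x y hx hy ihx ihy => rw [mul_add]; exact N.add_mem ihx ihy
    | smul a x hx ihx => rw [mul_smul_comm]; exact N.smul_mem a ihx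
  set T : Subalgebra R (AdjoinRoot f) :=
    { carrier := {s : AdjoinRoot f | ∀ x ∈ N, s * x ∈ N}
      mul_mem' := by
        intro s t hs ht x hx
        rw [mul_assoc]
        exact hs _ (ht _ hx)
      one_mem' := by intro x hx; rwa [one_mul]
      add_mem' := by
        intro s t hs ht x hx
        rw [add_mul]
        exact N.add_mem (hs _ hx) (ht _ hx)
      zero_mem' := by intro x hx; rw [zero_mul]; exact N.zero_mem
      algebraMap_mem' := by
        intro r x hx
        rw [← Algebra.smul_def]
        exact N.smul_mem r hx } with hT
  have hstab : ∀ s : AdjoinRoot f, ∀ x ∈ N, s * x ∈ N := by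
    intro s
    have : s ∈ T := by
      have htop : (⊤ : Subalgebra R (AdjoinRoot f)) ≤ T := by
        rw [← AdjoinRoot.adjoinRoot_eq_top (f := f)]
        exact Algebra.adjoin_le (Set.singleton_subset_iff.mpr
          (show AdjoinRoot.root f ∈ T from fun x hx => hθN x hx))
      exact htop trivial
    exact fun x hx => this x hx
  set J : Ideal (AdjoinRoot f) :=
    { carrier := N
      add_mem' := fun hx hy => N.add_mem hx hy
      zero_mem' := N.zero_mem
      smul_mem' := by
        intro c x hx
        rw [smul_eq_mul]
        exact hstab c x hx } with hJ
  have hmemJ : ∀ x : AdjoinRoot f, x ∈ J ↔ x ∈ N := fun x => Iff.rfl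
  have hJbot : J ≠ ⊥ := by
    intro h
    apply hw
    funext j
    have : w j ∈ J := (hmemJ _).mpr (Submodule.subset_span ⟨j, rfl⟩)
    rw [h] at this
    simpa using this
  -- basis of J over R
  set bS : Module.Basis (Fin n) R (AdjoinRoot f) := LM.bS hf hdeg with hbS
  set sn := Ideal.smithNormalForm bS J hJbot with hsn
  set c : Module.Basis (Fin n) R ↥J :=
    ((sn.bN.map ((Submodule.restrictScalarsEquiv R (AdjoinRoot f) (AdjoinRoot f) J).restrictScalars R)).reindex
      (finCongr (Fintype.card_fin n))) with hc
  haveI : Module.Finite R ↥J := Module.Finite.of_basis c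
  set w' : Fin n → ↥J := fun i => ⟨w i, (hmemJ _).mpr (Submodule.subset_span ⟨i, rfl⟩)⟩ with hw'
  have hspan : Submodule.span R (Set.range w') = ⊤ := by
    have hinj : Function.Injective
        (Submodule.map ((Submodule.restrictScalars R
          (J : Submodule (AdjoinRoot f) (AdjoinRoot f))).subtype)) :=
      Submodule.map_injective_of_injective (Submodule.injective_subtype _)
    apply hinj
    erw [Submodule.map_span, Submodule.map_top, Submodule.range_subtype]
    have h1 : (Submodule.restrictScalars R
        (J : Submodule (AdjoinRoot f) (AdjoinRoot f))).subtype '' Set.range w'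
        = Set.range w := by
      ext x
      constructor
      · rintro ⟨y, ⟨i, rfl⟩, rfl⟩; exact ⟨i, rfl⟩
      · rintro ⟨i, rfl⟩; exact ⟨w' i, ⟨i, rfl⟩, rfl⟩
    erw [h1]
    ext x
    simp only [Submodule.restrictScalars_mem]
    exact (hmemJ x).symm
  have hindep : LinearIndependent R w' := by
    rw [Fintype.linearIndependent_iff]
    intro gc hgc
    set π := Fintype.linearCombination R w' with hπ
    have hπsurj : Function.Surjective π := by
      rw [← LinearMap.range_eq_top, hπ, Fintype.range_linearCombination, hspan]
    set TT : (Fin n → R) →ₗ[R] (Fin n → R) := c.equivFun.toLinearMap.comp π with hTT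
    have hTTsurj : Function.Surjective TT :=
      c.equivFun.surjective.comp hπsurj
    have hTTinj : Function.Injective TT :=
      OrzechProperty.injective_of_surjective_endomorphism TT hTTsurj
    have hπinj : Function.Injective π := by
      intro a b hab
      exact hTTinj (by rw [hTT]; simp [hab])
    have : π gc = π 0 := by
      rw [hπ]
      simp only [Fintype.linearCombination_apply]
      rw [hgc]
      simp
    intro i
    have := hπinj this
    rw [this]; rfl
  set bw : Module.Basis (Fin n) R ↥J := Module.Basis.mk hindep (by rw [hspan]) with hbw
  refine ⟨J, hJbot, bw, ?_⟩
  ext i j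
  rw [LM.matOf, LinearMap.toMatrix_apply]
  have hbwj : ∀ k, bw k = w' k := fun k => by rw [hbw, Module.Basis.coe_mk]
  have hact : ((Algebra.lsmul R R ↥J) (AdjoinRoot.root f)) (bw j) = ∑ k, A k j • bw k := by
    apply Subtype.ext
    have hco : ((((Algebra.lsmul R R ↥J) (AdjoinRoot.root f)) (bw j) : ↥J) : AdjoinRoot f)
        = AdjoinRoot.root f * w j := by
      rw [Algebra.lsmul_coe, hbwj j]
      rfl
    rw [hco, heig' j]
    have hsum : ((∑ k, A k j • bw k : ↥J) : AdjoinRoot f)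
        = ∑ k, A k j • ((bw k : ↥J) : AdjoinRoot f) := by
      simp
    rw [hsum]
    apply Finset.sum_congr rfl
    intro k _
    rw [hbwj k]
  rw [hact, Module.Basis.repr_sum_self]

theorem LM.aeval_matOf (hf : f.Monic) (hirr : Irreducible f)
    {J : Ideal (AdjoinRoot f)} (b : Module.Basis (Fin n) R ↥J) :
    aeval (LM.matOf b) f = 0 := by
  haveI := LM.isDomain (f := f) hirr
  have h0 : aeval (AdjoinRoot.root f) f = 0 := by
    rw [AdjoinRoot.aeval_eq, AdjoinRoot.mk_self]
  have h1 : LM.matOf b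
      = ((LinearMap.toMatrixAlgEquiv b).toAlgHom.comp (Algebra.lsmul R R ↥J))
        (AdjoinRoot.root f) := rfl
  rw [h1, Polynomial.aeval_algHom_apply, h0, map_zero]

theorem LM.conj_of_iso (hf : f.Monic) (hirr : Irreducible f)
    {J₁ J₂ : Ideal (AdjoinRoot f)}
    (b₁ : Module.Basis (Fin n) R ↥J₁) (b₂ : Module.Basis (Fin n) R ↥J₂)
    (φ : ↥J₁ ≃ₗ[AdjoinRoot f] ↥J₂) :
    ∃ U : (Matrix (Fin n) (Fin n) R)ˣ,
      (U : Matrix (Fin n) (Fin n) R) * LM.matOf b₁ * (U⁻¹ : (Matrix (Fin n) (Fin n) R)ˣ)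
        = LM.matOf b₂ := by
  haveI := LM.isDomain (f := f) hirr
  set θ := AdjoinRoot.root f with hθ
  set φR := φ.restrictScalars R with hφR
  set L1 := (Algebra.lsmul R R ↥J₁) θ with hL1
  set L2 := (Algebra.lsmul R R ↥J₂) θ with hL2
  have hcomm : L2 = (φR.toLinearMap.comp L1).comp φR.symm.toLinearMap := by
    apply LinearMap.ext
    intro x
    show θ • x = φR (L1 (φR.symm x))
    show θ • x = φ (θ • (φ.symm x))
    rw [map_smul, LinearEquiv.apply_symm_apply]
  set P := LinearMap.toMatrix b₁ b₂ φR.toLinearMap with hP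
  set Q := LinearMap.toMatrix b₂ b₁ φR.symm.toLinearMap with hQ
  have hid1 : φR.toLinearMap.comp φR.symm.toLinearMap = LinearMap.id := by
    apply LinearMap.ext; intro x; simp
  have hid2 : φR.symm.toLinearMap.comp φR.toLinearMap = LinearMap.id := by
    apply LinearMap.ext; intro x; simp
  have hPQ : P * Q = 1 := by
    rw [hP, hQ, ← LinearMap.toMatrix_comp b₂ b₁ b₂, hid1, LinearMap.toMatrix_id]
  have hQP : Q * P = 1 := by
    rw [hP, hQ, ← LinearMap.toMatrix_comp b₁ b₂ b₁, hid2, LinearMap.toMatrix_id]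
  refine ⟨⟨P, Q, hPQ, hQP⟩, ?_⟩
  have hU : ((((⟨P, Q, hPQ, hQP⟩ : (Matrix (Fin n) (Fin n) R)ˣ))⁻¹ :
      (Matrix (Fin n) (Fin n) R)ˣ) : Matrix (Fin n) (Fin n) R) = Q := rfl
  show P * LM.matOf b₁ * _ = LM.matOf b₂
  rw [hU]
  rw [LM.matOf, LM.matOf, ← hθ, ← hL1, ← hL2, hcomm,
    LinearMap.toMatrix_comp b₂ b₁ b₂, LinearMap.toMatrix_comp b₁ b₁ b₂]

theorem LM.rel_of_conj (hf : f.Monic) (hirr : Irreducible f)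
    {J₁ J₂ : Ideal (AdjoinRoot f)} (hJ₁ : J₁ ≠ ⊥)
    (b₁ : Module.Basis (Fin n) R ↥J₁) (b₂ : Module.Basis (Fin n) R ↥J₂)
    (U : (Matrix (Fin n) (Fin n) R)ˣ)
    (hU : (U : Matrix (Fin n) (Fin n) R) * LM.matOf b₁ * (U⁻¹ : (Matrix (Fin n) (Fin n) R)ˣ)
      = LM.matOf b₂) :
    ∃ α₁ α₂ : AdjoinRoot f, α₁ ≠ 0 ∧ α₂ ≠ 0 ∧
      Ideal.span {α₁} * J₁ = Ideal.span {α₂} * J₂ := by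
  haveI := LM.isDomain (f := f) hirr
  set θ := AdjoinRoot.root f with hθ
  set L1 := (Algebra.lsmul R R ↥J₁) θ with hL1
  set L2 := (Algebra.lsmul R R ↥J₂) θ with hL2
  have hM : LM.matOf b₂ * (U : Matrix (Fin n) (Fin n) R)
      = (U : Matrix (Fin n) (Fin n) R) * LM.matOf b₁ := by
    rw [← hU, mul_assoc, mul_assoc]
    congr 1
    rw [U.inv_mul, mul_one]
  have hid1 : (Matrix.toLin b₁ b₂ (U : Matrix (Fin n) (Fin n) R)).comp
      (Matrix.toLin b₂ b₁ ((U⁻¹ : _ˣ) : Matrix (Fin n) (Fin n) R)) = LinearMap.id := by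
    rw [← Matrix.toLin_mul, U.mul_inv, Matrix.toLin_one]
  have hid2 : (Matrix.toLin b₂ b₁ ((U⁻¹ : _ˣ) : Matrix (Fin n) (Fin n) R)).comp
      (Matrix.toLin b₁ b₂ (U : Matrix (Fin n) (Fin n) R)) = LinearMap.id := by
    rw [← Matrix.toLin_mul, U.inv_mul, Matrix.toLin_one]
  set e0 : ↥J₁ ≃ₗ[R] ↥J₂ := LinearEquiv.ofLinear
    (Matrix.toLin b₁ b₂ (U : Matrix (Fin n) (Fin n) R))
    (Matrix.toLin b₂ b₁ ((U⁻¹ : _ˣ) : Matrix (Fin n) (Fin n) R)) hid1 hid2 with he0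
  have hθeq : ∀ x : ↥J₁, e0 (θ • x) = θ • e0 x := by
    intro x
    have h1 : Matrix.toLin b₁ b₂ ((U : Matrix (Fin n) (Fin n) R) * LM.matOf b₁)
        = Matrix.toLin b₁ b₂ (LM.matOf b₂ * (U : Matrix (Fin n) (Fin n) R)) := by rw [hM]
    rw [Matrix.toLin_mul b₁ b₁ b₂, Matrix.toLin_mul b₁ b₂ b₂] at h1
    rw [LM.matOf, Matrix.toLin_toMatrix] at h1
    rw [LM.matOf, Matrix.toLin_toMatrix] at h1
    have h2 := congrArg (fun (g : ↥J₁ →ₗ[R] ↥J₂) => g x) h1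
    simp only [LinearMap.comp_apply] at h2
    show e0 (L1 x) = L2 (e0 x)
    exact h2
  -- upgrade to S-linearity
  have hS : ∀ (s : AdjoinRoot f) (x : ↥J₁), e0 (s • x) = s • e0 x := by
    set T : Subalgebra R (AdjoinRoot f) :=
      { carrier := {s : AdjoinRoot f | ∀ x : ↥J₁, e0 (s • x) = s • e0 x}
        mul_mem' := by
          intro s t hs ht x
          rw [mul_smul, mul_smul, hs, ht]
        one_mem' := by intro x; rw [one_smul, one_smul]
        add_mem' := by
          intro s t hs ht x
          rw [add_smul, add_smul, map_add, hs, ht]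
        zero_mem' := by intro x; rw [zero_smul, map_zero, zero_smul]
        algebraMap_mem' := by
          intro r x
          rw [algebraMap_smul, algebraMap_smul, map_smul] } with hT
    intro s
    have : s ∈ T := by
      have htop : (⊤ : Subalgebra R (AdjoinRoot f)) ≤ T := by
        rw [← AdjoinRoot.adjoinRoot_eq_top (f := f)]
        exact Algebra.adjoin_le (Set.singleton_subset_iff.mpr
          (show θ ∈ T from fun x => hθeq x))
      exact htop trivial
    exact fun x => this x
  obtain ⟨a, ha⟩ := Submodule.nonzero_mem_of_bot_lt (bot_lt_iff_ne_bot.mpr hJ₁)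
  refine ⟨((e0 a : ↥J₂) : AdjoinRoot f), ((a : ↥J₁) : AdjoinRoot f), ?_, ?_, ?_⟩
  · intro h
    have : e0 a = 0 := Subtype.ext h
    rw [LinearEquiv.map_eq_zero_iff] at this
    exact ha this
  · intro h
    exact ha (Subtype.ext h)
  · have hkey : ∀ x : ↥J₁,
        ((e0 a : ↥J₂) : AdjoinRoot f) * (x : AdjoinRoot f)
          = ((a : ↥J₁) : AdjoinRoot f) * ((e0 x : ↥J₂) : AdjoinRoot f) := by
      intro x
      have h1 : ((x : AdjoinRoot f) • a) = ((a : AdjoinRoot f) • x : ↥J₁) := by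
        apply Subtype.ext
        show (x : AdjoinRoot f) * (a : AdjoinRoot f) = (a : AdjoinRoot f) * (x : AdjoinRoot f)
        rw [mul_comm]
      have h2 := hS ((x : ↥J₁) : AdjoinRoot f) a
      rw [h1, hS ((a : ↥J₁) : AdjoinRoot f) x] at h2
      have h3 : (((x : AdjoinRoot f) • e0 a : ↥J₂) : AdjoinRoot f)
          = ((a : AdjoinRoot f) • e0 x : ↥J₂) := congrArg Subtype.val h2.symm
      rw [Submodule.coe_smul, Submodule.coe_smul, smul_eq_mul, smul_eq_mul] at h3
      rw [mul_comm] at h3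
      rw [h3]
    ext x
    rw [Ideal.mem_span_singleton_mul, Ideal.mem_span_singleton_mul]
    constructor
    · rintro ⟨z, hz, rfl⟩
      exact ⟨(e0 ⟨z, hz⟩ : ↥J₂), (e0 ⟨z, hz⟩).2, (hkey ⟨z, hz⟩).symm⟩
    · rintro ⟨y, hy, rfl⟩
      refine ⟨(e0.symm ⟨y, hy⟩ : ↥J₁), (e0.symm ⟨y, hy⟩).2, ?_⟩
      have := hkey (e0.symm ⟨y, hy⟩)
      rw [LinearEquiv.apply_symm_apply] at this
      exact this

theorem LM.iso_of_rel (hirr : Irreducible f)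
    {J₁ J₂ : Ideal (AdjoinRoot f)} (α₁ α₂ : AdjoinRoot f)
    (h₁ : α₁ ≠ 0) (h₂ : α₂ ≠ 0)
    (h : Ideal.span {α₁} * J₁ = Ideal.span {α₂} * J₂) :
    Nonempty (↥J₁ ≃ₗ[AdjoinRoot f] ↥J₂) := by
  haveI := LM.isDomain (f := f) hirr
  have mulEquiv : ∀ (J : Ideal (AdjoinRoot f)) (α : AdjoinRoot f), α ≠ 0 →
      Nonempty (↥J ≃ₗ[AdjoinRoot f] ↥(Ideal.span {α} * J)) := by
    intro J α hα
    set ℓ0 : ↥J →ₗ[AdjoinRoot f] AdjoinRoot f := α • (J : Submodule _ _).subtype with hℓ0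
    have hmem : ∀ x : ↥J, ℓ0 x ∈ Ideal.span {α} * J := by
      intro x
      rw [hℓ0]
      exact Ideal.mem_span_singleton_mul.mpr ⟨x, x.2, rfl⟩
    set ℓ := LinearMap.codRestrict
      ((Ideal.span {α} * J : Ideal (AdjoinRoot f)) : Submodule _ _) ℓ0 hmem with hℓ
    have hinj : Function.Injective ℓ := by
      intro x y hxy
      have : ℓ0 x = ℓ0 y := congrArg Subtype.val hxy
      rw [hℓ0] at this
      simp only [LinearMap.smul_apply, Submodule.coe_subtype, smul_eq_mul] at this
      exact Subtype.ext (mul_left_cancel₀ hα this)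
    have hsurj : Function.Surjective ℓ := by
      rintro ⟨y, hy⟩
      obtain ⟨z, hz, hzy⟩ := Ideal.mem_span_singleton_mul.mp hy
      refine ⟨⟨z, hz⟩, ?_⟩
      apply Subtype.ext
      show ℓ0 ⟨z, hz⟩ = y
      rw [hℓ0]
      simpa using hzy
    exact ⟨LinearEquiv.ofBijective ℓ ⟨hinj, hsurj⟩⟩
  obtain ⟨e₁⟩ := mulEquiv J₁ α₁ h₁
  obtain ⟨e₂⟩ := mulEquiv J₂ α₂ h₂
  exact ⟨e₁.trans ((LinearEquiv.ofEq _ _ (congrArg (fun (I : Ideal (AdjoinRoot f)) =>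
    (I : Submodule (AdjoinRoot f) (AdjoinRoot f))) h)).trans e₂.symm)⟩

theorem LM.main (K : Type*) [Field K] [Algebra R K] [IsFractionRing R K]
    (hf : f.Monic) (hirr : Irreducible f) (hdeg : f.natDegree = n) :
    Nonempty (
      Quot (fun (A B : {A : Matrix (Fin n) (Fin n) R // aeval A f = 0}) =>
        ∃ U : (Matrix (Fin n) (Fin n) R)ˣ,
          (U : Matrix (Fin n) (Fin n) R) * A.1 * (U⁻¹ : _) = B.1) ≃
      Quot (fun (J₁ J₂ : {J : Ideal (AdjoinRoot f) // J ≠ ⊥}) =>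
        ∃ α₁ α₂ : AdjoinRoot f, α₁ ≠ 0 ∧ α₂ ≠ 0 ∧
          Ideal.span {α₁} * J₁.1 = Ideal.span {α₂} * J₂.1)) := by
  classical
  haveI := LM.isDomain (f := f) hirr
  have hconj : ∀ (U : (Matrix (Fin n) (Fin n) R)ˣ) (X : Matrix (Fin n) (Fin n) R),
      ((U⁻¹ : (Matrix (Fin n) (Fin n) R)ˣ) : Matrix (Fin n) (Fin n) R) *
        ((U : Matrix (Fin n) (Fin n) R) * X *
          ((U⁻¹ : (Matrix (Fin n) (Fin n) R)ˣ) : Matrix (Fin n) (Fin n) R)) *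
        (U : Matrix (Fin n) (Fin n) R) = X := by
    intro U X
    rw [mul_assoc (((U⁻¹ : (Matrix (Fin n) (Fin n) R)ˣ)) : Matrix (Fin n) (Fin n) R)]
    rw [Units.inv_mul_cancel_right]
    rw [Units.inv_mul_cancel_left]
  have equivM : Equivalence (fun (A B : {A : Matrix (Fin n) (Fin n) R // aeval A f = 0}) =>
      ∃ U : (Matrix (Fin n) (Fin n) R)ˣ,
        (U : Matrix (Fin n) (Fin n) R) * A.1 * (U⁻¹ : _) = B.1) := by
    constructor
    · intro A
      exact ⟨1, by simp⟩
    · rintro A B ⟨U, hU⟩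
      refine ⟨U⁻¹, ?_⟩
      rw [← hU, inv_inv]
      exact hconj U A.1
    · rintro A B C ⟨U, hU⟩ ⟨V, hV⟩
      refine ⟨V * U, ?_⟩
      rw [← hV, ← hU, mul_inv_rev, Units.val_mul, Units.val_mul]
      simp [mul_assoc]
  let bas : ∀ J : {J : Ideal (AdjoinRoot f) // J ≠ ⊥}, Module.Basis (Fin n) R ↥J.1 := fun J =>
    ((Ideal.smithNormalForm (LM.bS hf hdeg) J.1 J.2).bN.map
      ((Submodule.restrictScalarsEquiv R _ _ J.1).restrictScalars R)).reindex
      (finCongr (Fintype.card_fin n))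
  let Ψ0 : {J : Ideal (AdjoinRoot f) // J ≠ ⊥} → {A : Matrix (Fin n) (Fin n) R // aeval A f = 0} :=
    fun J => ⟨LM.matOf (bas J), LM.aeval_matOf hf hirr (bas J)⟩
  have hwd : ∀ J₁ J₂ : {J : Ideal (AdjoinRoot f) // J ≠ ⊥},
      (∃ α₁ α₂ : AdjoinRoot f, α₁ ≠ 0 ∧ α₂ ≠ 0 ∧
        Ideal.span {α₁} * J₁.1 = Ideal.span {α₂} * J₂.1) →
      Quot.mk (fun (A B : {A : Matrix (Fin n) (Fin n) R // aeval A f = 0}) =>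
        ∃ U : (Matrix (Fin n) (Fin n) R)ˣ,
          (U : Matrix (Fin n) (Fin n) R) * A.1 * (U⁻¹ : _) = B.1) (Ψ0 J₁)
      = Quot.mk _ (Ψ0 J₂) := by
    rintro J₁ J₂ ⟨α₁, α₂, h1, h2, heq⟩
    obtain ⟨φ⟩ := LM.iso_of_rel hirr α₁ α₂ h1 h2 heq
    obtain ⟨U, hU⟩ := LM.conj_of_iso hf hirr (bas J₁) (bas J₂) φ
    exact Quot.sound ⟨U, hU⟩
  set F := Quot.lift _ hwd with hF
  have hinj : Function.Injective F := by
    intro x y h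
    obtain ⟨J₁, rfl⟩ := Quot.exists_rep x
    obtain ⟨J₂, rfl⟩ := Quot.exists_rep y
    have h' : Quot.mk _ (Ψ0 J₁) = Quot.mk _ (Ψ0 J₂) := h
    have hrel := (equivM.eqvGen_iff).mp (Quot.eq.mp h')
    obtain ⟨U, hU⟩ := hrel
    obtain ⟨α₁, α₂, h1, h2, heq⟩ :=
      LM.rel_of_conj hf hirr J₁.2 (bas J₁) (bas J₂) U hU
    exact Quot.sound ⟨α₁, α₂, h1, h2, heq⟩
  have hsurj : Function.Surjective F := by
    intro y
    obtain ⟨A, rfl⟩ := Quot.exists_rep y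
    obtain ⟨w, hw, heig⟩ := LM.exists_eigen K hf hirr hdeg A.1 A.2
    obtain ⟨J, hJ, bw, hmat⟩ := LM.ideal_of_eigen w hw hf hirr hdeg A.1 heig
    obtain ⟨U, hU⟩ := LM.conj_of_iso hf hirr (bas ⟨J, hJ⟩) bw
      (LinearEquiv.refl (AdjoinRoot f) ↥J)
    refine ⟨Quot.mk _ ⟨J, hJ⟩, ?_⟩
    have : F (Quot.mk _ ⟨J, hJ⟩) = Quot.mk _ (Ψ0 ⟨J, hJ⟩) := rfl
    rw [this]
    apply Quot.sound
    refine ⟨U, ?_⟩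
    show (U : Matrix (Fin n) (Fin n) R) * LM.matOf (bas ⟨J, hJ⟩) * _ = A.1
    rw [hU, hmat]
  exact ⟨(Equiv.ofBijective F ⟨hinj, hsurj⟩).symm⟩

end Setup

/-- Latimer–MacDuffee over a PID. Let `R` be a PID with fraction
field `K`, `f ∈ R[x]` monic irreducible of degree `n`, and `θ` the class of `x` in
`R[θ] := R[x]/(f)`. Then there is a bijection between `GL_n(R)`-conjugacy classes of
matrices `A ∈ Mat_n(R)` with `f(A) = 0` and ideal classes of `R[θ]`, where two nonzero
ideals `J₁, J₂` are in the same class iff `α₁J₁ = α₂J₂` for some nonzero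
`α₁, α₂ ∈ R[θ]`. -/
theorem latimer_macduffee_over_pid
    (R : Type*) [CommRing R] [IsDomain R] [IsPrincipalIdealRing R]
    (K : Type*) [Field K] [Algebra R K] [IsFractionRing R K]
    (n : ℕ) (f : R[X]) (hf : f.Monic) (hirr : Irreducible f) (hdeg : f.natDegree = n) :
    Nonempty (
      Quot (fun (A B : {A : Matrix (Fin n) (Fin n) R // aeval A f = 0}) =>
        ∃ U : (Matrix (Fin n) (Fin n) R)ˣ,
          (U : Matrix (Fin n) (Fin n) R) * A.1 * (U⁻¹ : _) = B.1) ≃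
      Quot (fun (J₁ J₂ : {J : Ideal (R[X] ⧸ Ideal.span {f}) // J ≠ ⊥}) =>
        ∃ α₁ α₂ : R[X] ⧸ Ideal.span {f}, α₁ ≠ 0 ∧ α₂ ≠ 0 ∧
          Ideal.span {α₁} * J₁.1 = Ideal.span {α₂} * J₂.1)) := by
  exact LM.main K hf hirr hdeg
end

section
/- Let R be a principal ideal domain with fraction field K and let A ∈ Mat_n(R). Then A is similar over R to a block upper-triangular matrix with diagonal blocks A₁₁, A₂₂, …, A_rr, where each A_ii is a square matrix with entries in R whose characteristic polynomial det(xI − A_ii) is irreducible in K[x] (and all blocks below the diagonal are zero). -/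
set_option synthInstance.maxHeartbeats 1000000
set_option maxHeartbeats 1000000

open Polynomial


lemma dichotomy {K : Type*} [Field K] {n : ℕ} (hn : 0 < n)
    (A : Matrix (Fin n) (Fin n) K) (hirr : ¬ Irreducible A.charpoly) :
    ∃ W : Submodule K (Fin n → K), (∀ x ∈ W, A.mulVec x ∈ W) ∧
      0 < Module.finrank K W ∧ Module.finrank K W < n := by
  classical
  set f : (Fin n → K) →ₗ[K] (Fin n → K) := Matrix.toLinAlgEquiv' A with hf
  set v : Fin n → K := Pi.single (⟨0, hn⟩ : Fin n) (1 : K) with hv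
  have hv0 : v ≠ 0 := by
    intro h
    have := congrFun h ⟨0, hn⟩
    simp [hv, Pi.single_apply] at this
  -- the linear map p ↦ (aeval f p) v
  set θ : K[X] →ₗ[K] (Fin n → K) :=
    { toFun := fun p => (aeval f p) v
      map_add' := by intro p q; simp [map_add]
      map_smul' := by intro c p; simp [map_smul] } with hθ
  have hθ_apply : ∀ p : K[X], θ p = (aeval f p) v := fun _ => rfl
  set W₀ : Submodule K (Fin n → K) := LinearMap.range θ with hW₀
  have hfrk : Module.finrank K (Fin n → K) = n := by simp
  have hmemv : v ∈ W₀ := ⟨1, by simp [hθ_apply]⟩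
  have hW₀inv : ∀ x ∈ W₀, A.mulVec x ∈ W₀ := by
    rintro x ⟨p, rfl⟩
    refine ⟨X * p, ?_⟩
    rw [hθ_apply, hθ_apply, map_mul, Module.End.mul_apply, aeval_X]
    rw [hf, Matrix.toLinAlgEquiv'_apply]
  by_cases htop : W₀ = ⊤
  · -- cyclic case
    have hc0 : aeval f A.charpoly = 0 := by
      rw [hf, aeval_algHom_apply Matrix.toLinAlgEquiv' A A.charpoly,
        Matrix.aeval_self_charpoly, map_zero]
    have hmc : A.charpoly.Monic := A.charpoly_monic
    have hnd : A.charpoly.natDegree = n := by simp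
    have hcu : ¬ IsUnit A.charpoly := by
      intro h
      rw [hmc.isUnit_iff] at h
      rw [h] at hnd
      simp at hnd; omega
    rw [irreducible_iff] at hirr
    push_neg at hirr
    obtain ⟨p, q, hc, hp, hq⟩ := hirr hcu
    have hc0' : A.charpoly ≠ 0 := hmc.ne_zero
    have hp0 : p ≠ 0 := by rintro rfl; simp at hc; exact hc0' hc
    have hq0 : q ≠ 0 := by rintro rfl; simp at hc; exact hc0' hc
    have hdeg : p.natDegree + q.natDegree = n := by
      rw [← natDegree_mul hp0 hq0, ← hc, hnd]
    have hpd : 0 < p.natDegree := by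
      rcases Nat.eq_zero_or_pos p.natDegree with h | h
      · exact absurd ((isUnit_iff_degree_eq_zero (p := p)).2
          (by rw [degree_eq_natDegree hp0, h]; rfl)) hp
      · exact h
    have hqd : 0 < q.natDegree := by
      rcases Nat.eq_zero_or_pos q.natDegree with h | h
      · exact absurd ((isUnit_iff_degree_eq_zero (p := q)).2
          (by rw [degree_eq_natDegree hq0, h]; rfl)) hq
      · exact h
    -- θ kills multiples of charpoly
    have hkill : ∀ s : K[X], θ (A.charpoly * s) = 0 := by
      intro s
      rw [hθ_apply, map_mul, hc0, zero_mul, LinearMap.zero_apply]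
    have hdegc : A.charpoly.degree = (n : WithBot ℕ) := by
      rw [degree_eq_natDegree hc0', hnd]
    set θ' : (Fin n → K) →ₗ[K] (Fin n → K) :=
      θ ∘ₗ (degreeLT K n).subtype ∘ₗ (degreeLTEquiv K n).symm.toLinearMap with hθ'
    have hθ'apply : ∀ (s : K[X]) (hs : s ∈ degreeLT K n),
        θ' (degreeLTEquiv K n ⟨s, hs⟩) = θ s := by
      intro s hs
      simp [hθ']
    have hθ'surj : Function.Surjective θ' := by
      intro y
      have hy : y ∈ W₀ := htop ▸ Submodule.mem_top
      obtain ⟨p', rfl⟩ := hy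
      have hmem : p' %ₘ A.charpoly ∈ degreeLT K n := by
        rw [mem_degreeLT, ← hdegc]
        exact degree_modByMonic_lt p' hmc
      refine ⟨degreeLTEquiv K n ⟨_, hmem⟩, ?_⟩
      rw [hθ'apply]
      conv_rhs => rw [← modByMonic_add_div p' A.charpoly]
      rw [map_add, hkill, add_zero]
    have hθ'inj : Function.Injective θ' :=
      (LinearMap.injective_iff_surjective).2 hθ'surj
    have hinj_lt : ∀ s : K[X], s.degree < (n : WithBot ℕ) → θ s = 0 → s = 0 := by
      intro s hs h0
      have hs' : s ∈ degreeLT K n := mem_degreeLT.2 hs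
      have : θ' (degreeLTEquiv K n ⟨s, hs'⟩) = θ' 0 := by
        rw [hθ'apply, h0, map_zero]
      have h2 := hθ'inj this
      rw [(map_eq_zero_iff _ (degreeLTEquiv K n).injective)] at h2
      exact congrArg Subtype.val h2
    have hcomm : (aeval f p) ∘ₗ f = f ∘ₗ (aeval f p) := by
      have h1 : aeval f (p * X) = aeval f (X * p) := by rw [mul_comm]
      rw [map_mul, map_mul, aeval_X] at h1
      exact h1
    set W : Submodule K (Fin n → K) := LinearMap.ker (aeval f p) with hW
    have hWinv : ∀ x ∈ W, A.mulVec x ∈ W := by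
      intro x hx
      rw [hW, LinearMap.mem_ker] at hx ⊢
      have : A.mulVec x = f x := by rw [hf, Matrix.toLinAlgEquiv'_apply]
      rw [this, ← LinearMap.comp_apply, hcomm, LinearMap.comp_apply, hx, map_zero]
    have hpltn : p.degree < (n : WithBot ℕ) := by
      rw [degree_eq_natDegree hp0]
      exact_mod_cast (by omega : p.natDegree < n)
    have hqltn : q.degree < (n : WithBot ℕ) := by
      rw [degree_eq_natDegree hq0]
      exact_mod_cast (by omega : q.natDegree < n)
    have hw0 : θ q ≠ 0 := fun h => hq0 (hinj_lt q hqltn h)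
    have hwmem : θ q ∈ W := by
      rw [hW, LinearMap.mem_ker, hθ_apply, ← Module.End.mul_apply, ← map_mul, ← hc]
      have := hkill 1
      rwa [mul_one] at this
    have hWtop : W ≠ ⊤ := by
      intro h
      rw [hW, LinearMap.ker_eq_top] at h
      have : θ p = 0 := by rw [hθ_apply, h, LinearMap.zero_apply]
      exact hp0 (hinj_lt p hpltn this)
    refine ⟨W, hWinv, ?_, ?_⟩
    · rw [Module.finrank_pos_iff_exists_ne_zero]
      exact ⟨⟨θ q, hwmem⟩, by simpa using hw0⟩
    · have := Submodule.finrank_lt (s := W) hWtop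
      omega
  · refine ⟨W₀, hW₀inv, ?_, ?_⟩
    · rw [Module.finrank_pos_iff_exists_ne_zero]
      exact ⟨⟨v, hmemv⟩, by simpa using hv0⟩
    · have := Submodule.finrank_lt (s := W₀) htop
      omega

lemma split_step {R : Type*} [CommRing R] [IsDomain R] [IsPrincipalIdealRing R]
    {K : Type*} [Field K] [Algebra R K] [IsFractionRing R K]
    {n : ℕ} (A : Matrix (Fin n) (Fin n) R)
    (W : Submodule K (Fin n → K))
    (hinv : ∀ x ∈ W, (A.map (algebraMap R K)).mulVec x ∈ W)
    (hW0 : W ≠ ⊥) (hWt : W ≠ ⊤) :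
    ∃ (k l : ℕ), 0 < k ∧ 0 < l ∧ ∃ (hkl : k + l = n) (U : (Matrix (Fin n) (Fin n) R)ˣ),
      ∀ (i : Fin l) (j : Fin k),
        ((U : Matrix (Fin n) (Fin n) R) * A * (↑U⁻¹ : Matrix (Fin n) (Fin n) R))
          ((finSumFinEquiv.trans (finCongr hkl)) (Sum.inr i))
          ((finSumFinEquiv.trans (finCongr hkl)) (Sum.inl j)) = 0 := by
  classical
  set φ := algebraMap R K with hφ
  set toK : (Fin n → R) →ₗ[R] (Fin n → K) :=
    LinearMap.pi (fun i => (Algebra.linearMap R K).comp (LinearMap.proj i)) with htoK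
  have htoK_apply : ∀ (x : Fin n → R) (i : Fin n), toK x i = φ (x i) := fun x i => rfl
  have htoK_mulVec : ∀ x : Fin n → R, toK (A.mulVec x) = (A.map φ).mulVec (toK x) := by
    intro x; funext i
    simp only [htoK_apply, Matrix.mulVec, dotProduct, map_sum, map_mul,
      Matrix.map_apply]
  set M : Submodule R (Fin n → R) := Submodule.comap toK (W.restrictScalars R) with hM
  have hMmem : ∀ x, x ∈ M ↔ toK x ∈ W := fun x => Iff.rfl
  have hφinj : Function.Injective φ := IsFractionRing.injective R K
  have hfM : ∀ x ∈ M, A.mulVec x ∈ M := by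
    intro x hx; rw [hMmem] at hx ⊢; rw [htoK_mulVec]; exact hinv _ hx
  have htoK_smul : ∀ (r : R) (x : Fin n → R), toK (r • x) = φ r • toK x := by
    intro r x; funext i; simp [htoK_apply, Algebra.smul_def]
  haveI : NoZeroSMulDivisors R ((Fin n → R) ⧸ M) := by
    constructor
    intro c x h
    by_cases hc : c = 0
    · left; exact hc
    · right
      obtain ⟨y, rfl⟩ := M.mkQ_surjective x
      rw [← map_smul, Submodule.mkQ_apply, Submodule.Quotient.mk_eq_zero] at h
      rw [Submodule.mkQ_apply, Submodule.Quotient.mk_eq_zero]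
      rw [hMmem] at h ⊢
      rw [htoK_smul] at h
      have hφc : φ c ≠ 0 := fun hh => hc (hφinj (by rw [hh, map_zero]))
      have := W.smul_mem (φ c)⁻¹ h
      rwa [inv_smul_smul₀ hφc] at this
  haveI : Module.Free R ((Fin n → R) ⧸ M) := Module.free_of_finite_type_torsion_free'
  obtain ⟨s, hs⟩ := Module.projective_lifting_property M.mkQ
    (LinearMap.id : ((Fin n → R) ⧸ M) →ₗ[R] _) M.mkQ_surjective
  set S : Submodule R (Fin n → R) := LinearMap.range s with hS
  have hsq : ∀ q, M.mkQ (s q) = q := by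
    intro q
    have := congrArg (fun g => g q) hs
    simpa using this
  have hcompl : IsCompl M S := by
    constructor
    · rw [disjoint_iff, eq_bot_iff]
      rintro x ⟨hxM, q, rfl⟩
      have h0 : M.mkQ (s q) = 0 := by
        rw [Submodule.mkQ_apply, Submodule.Quotient.mk_eq_zero]; exact hxM
      rw [hsq] at h0
      simp [h0]
    · rw [codisjoint_iff, eq_top_iff]
      intro x _
      have hx : x - s (M.mkQ x) ∈ M := by
        rw [← Submodule.Quotient.mk_eq_zero, ← Submodule.mkQ_apply, map_sub, hsq, sub_self]
      exact Submodule.mem_sup.2 ⟨_, hx, _, ⟨M.mkQ x, rfl⟩, sub_add_cancel x _⟩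
  obtain ⟨k, bM⟩ := Submodule.basisOfPid (Pi.basisFun R (Fin n)) M
  obtain ⟨l, bS⟩ := Submodule.basisOfPid (Pi.basisFun R (Fin n)) S
  set c : Module.Basis (Fin k ⊕ Fin l) R (Fin n → R) :=
    (bM.prod bS).map (Submodule.prodEquivOfIsCompl M S hcompl) with hcdef
  have hkl : k + l = n := by
    have h1 := Module.finrank_eq_card_basis c
    rw [Module.finrank_pi] at h1
    simpa [Fintype.card_sum] using h1.symm
  -- k > 0
  obtain ⟨w, hwW, hw0⟩ := Submodule.exists_mem_ne_zero_of_ne_bot hW0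
  obtain ⟨d, hd⟩ := IsLocalization.exist_integer_multiples_of_finite
    (nonZeroDivisors R) w
  choose x hx using hd
  have hxM : x ∈ M := by
    rw [hMmem]
    have hxe : toK x = (algebraMap R K d) • w := by
      funext i; rw [htoK_apply, hx i]; simp [Algebra.smul_def]
    rw [hxe]
    exact W.smul_mem _ hwW
  have hφd : φ (d : R) ≠ 0 := fun hh =>
    nonZeroDivisors.ne_zero d.2 (hφinj (by rw [hh, map_zero]))
  have hx0 : x ≠ 0 := by
    intro h
    apply hw0
    have hxe : toK x = (φ (d : R)) • w := by
      funext i; rw [htoK_apply, hx i]; simp [Algebra.smul_def, hφ]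
    rw [h, map_zero] at hxe
    have := hxe.symm
    rw [smul_eq_zero] at this
    rcases this with h' | h'
    · exact absurd h' hφd
    · exact h'
  have hk : 0 < k := by
    rcases Nat.eq_zero_or_pos k with h0 | h
    · exfalso
      subst h0
      have ha : (⟨x, hxM⟩ : M) = 0 := by
        have h1 : bM.repr ⟨x, hxM⟩ = 0 := Subsingleton.elim _ _
        have := congrArg bM.repr.symm h1
        simpa using this
      exact hx0 (congrArg Subtype.val ha)
    · exact h
  have hl : 0 < l := by
    rcases Nat.eq_zero_or_pos l with h0 | h
    · exfalso
      subst h0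
      have hSbot : S = ⊥ := by
        rw [eq_bot_iff]
        intro y hy
        have ha : (⟨y, hy⟩ : S) = 0 := by
          have h1 : bS.repr ⟨y, hy⟩ = 0 := Subsingleton.elim _ _
          have := congrArg bS.repr.symm h1
          simpa using this
        simpa using congrArg Subtype.val ha
      have hMtop : M = ⊤ := by
        have := hcompl.codisjoint
        rw [codisjoint_iff, hSbot, sup_bot_eq] at this
        exact this
      apply hWt
      rw [eq_top_iff]
      intro z _
      have h1 : ∀ i, (Pi.single i (1:K) : Fin n → K) ∈ W := by
        intro i
        have h2 : toK (Pi.single i (1:R)) ∈ W := by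
          rw [← hMmem, hMtop]; trivial
        have h3 : toK (Pi.single i (1:R)) = Pi.single i (1:K) := by
          funext j
          rw [htoK_apply]
          by_cases hij : j = i
          · subst hij; simp
          · simp [Pi.single_apply, hij]
        rwa [h3] at h2
      have h4 : z = ∑ i, z i • (Pi.single i (1:K) : Fin n → K) := by
        funext j
        simp [Pi.single_apply]
      rw [h4]
      exact Submodule.sum_mem _ fun i _ => W.smul_mem _ (h1 i)
    · exact h
  set e : Fin k ⊕ Fin l ≃ Fin n := finSumFinEquiv.trans (finCongr hkl) with he
  set c' : Module.Basis (Fin n) R (Fin n → R) := c.reindex e with hc'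
  set b0 : Module.Basis (Fin n) R (Fin n → R) := Pi.basisFun R (Fin n) with hb0
  set f : (Fin n → R) →ₗ[R] (Fin n → R) := Matrix.mulVecLin A with hfdef
  have hA : LinearMap.toMatrix b0 b0 f = A := by
    rw [hb0, LinearMap.toMatrix_eq_toMatrix', hfdef, ← Matrix.toLin'_apply',
      LinearMap.toMatrix'_toLin']
  set U : Matrix (Fin n) (Fin n) R := LinearMap.toMatrix b0 c' LinearMap.id with hU
  set V : Matrix (Fin n) (Fin n) R := LinearMap.toMatrix c' b0 LinearMap.id with hV
  have hUV : U * V = 1 := by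
    rw [hU, hV, ← LinearMap.toMatrix_comp c' b0 c', LinearMap.id_comp,
      LinearMap.toMatrix_id]
  have hVU : V * U = 1 := by
    rw [hU, hV, ← LinearMap.toMatrix_comp b0 c' b0, LinearMap.id_comp,
      LinearMap.toMatrix_id]
  set Uu : (Matrix (Fin n) (Fin n) R)ˣ := ⟨U, V, hUV, hVU⟩ with hUu
  have hBU : U * A * V = LinearMap.toMatrix c' c' f := by
    rw [← hA, hU, hV, ← LinearMap.toMatrix_comp b0 b0 c' LinearMap.id f,
      ← LinearMap.toMatrix_comp c' b0 c' _ LinearMap.id, LinearMap.id_comp,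
      LinearMap.comp_id]
  have hrep : ∀ y : (Fin n → R), y ∈ M → ∀ i : Fin l, c.repr y (Sum.inr i) = 0 := by
    intro y hy i
    rw [hcdef]
    rw [Module.Basis.map_repr]
    simp only [LinearEquiv.trans_apply]
    rw [show (M.prodEquivOfIsCompl S hcompl).symm y = ((⟨y, hy⟩ : M), (0 : S)) from
      Submodule.prodEquivOfIsCompl_symm_apply_left M S hcompl (⟨y, hy⟩ : M)]
    rw [Module.Basis.prod_repr_inr, _root_.map_zero]
    rfl
  refine ⟨k, l, hk, hl, hkl, Uu, ?_⟩
  intro i j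
  have hUinv : (↑Uu⁻¹ : Matrix (Fin n) (Fin n) R) = V := rfl
  rw [hUinv]
  show (U * A * V) (e (Sum.inr i)) (e (Sum.inl j)) = 0
  rw [hBU, LinearMap.toMatrix_apply]
  rw [hc', Module.Basis.repr_reindex_apply, Module.Basis.reindex_apply, Equiv.symm_apply_apply]
  have hcj : c (Sum.inl j) ∈ M := by
    rw [hcdef]
    simp only [Module.Basis.map_apply]
    rw [Submodule.coe_prodEquivOfIsCompl']
    have h1 : ((bM.prod bS) (Sum.inl j)).1 = bM j := Module.Basis.prod_apply_inl_fst _ _ _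
    have h2 : ((bM.prod bS) (Sum.inl j)).2 = 0 := Module.Basis.prod_apply_inl_snd _ _ _
    rw [h1, h2]
    simp
  rw [Equiv.symm_apply_apply]
  have hfc : f (c (Sum.inl j)) = A.mulVec (c (Sum.inl j)) := Matrix.mulVecLin_apply _ _
  rw [hfc]
  exact hrep _ (hfM _ hcj) i

theorem key (R : Type*) [CommRing R] [IsDomain R] [IsPrincipalIdealRing R]
    (K : Type*) [Field K] [Algebra R K] [IsFractionRing R K]
    (n : ℕ) :
    ∀ (A : Matrix (Fin n) (Fin n) R),
    ∃ (B : Matrix (Fin n) (Fin n) R) (U : (Matrix (Fin n) (Fin n) R)ˣ),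
      (U : Matrix (Fin n) (Fin n) R) * A * (U⁻¹ : _) = B ∧
      ∃ (r : ℕ) (b : Fin n → Fin r), Monotone b ∧ B.BlockTriangular b ∧
        ∀ i : Fin r, Irreducible ((B.toSquareBlock b i).charpoly.map (algebraMap R K)) := by
  induction n using Nat.strong_induction_on with
  | _ n ih =>
  intro A
  classical
  set φ := algebraMap R K with hφ
  rcases Nat.eq_zero_or_pos n with hn | hn
  · subst hn
    refine ⟨A, 1, by simp, 0, fun i => i.elim0, fun i => i.elim0, fun i => i.elim0,
      fun i => i.elim0⟩
  by_cases hirr : Irreducible (A.charpoly.map φ)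
  · refine ⟨A, 1, by simp, 1, fun _ => 0, monotone_const, ?_, ?_⟩
    · intro i j h
      exact absurd h (lt_irrefl _)
    · intro i
      have hall : ∀ x : Fin n, (fun _ : Fin n => (0 : Fin 1)) x = i := by
        intro x; exact Subsingleton.elim _ _
      set ε : Fin n ≃ {x : Fin n // (fun _ : Fin n => (0 : Fin 1)) x = i} :=
        (Equiv.subtypeUnivEquiv hall).symm with hε
      have heq : A.toSquareBlock (fun _ => (0:Fin 1)) i = Matrix.reindex ε ε A := by
        ext x y
        rfl
      rw [heq, Matrix.charpoly_reindex]
      exact hirr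
  · have hch : ¬ Irreducible ((A.map φ).charpoly) := by
      rw [Matrix.charpoly_map]; exact hirr
    obtain ⟨W, hWinv, hW1, hW2⟩ := dichotomy hn (A.map φ) hch
    have hW0 : W ≠ ⊥ := by
      intro h; rw [h] at hW1; simp at hW1
    have hWt : W ≠ ⊤ := by
      intro h; rw [h] at hW2
      rw [finrank_top] at hW2
      simp [Module.finrank_pi] at hW2
    obtain ⟨k, l, hk, hl, hkl, U, hU⟩ := split_step A W hWinv hW0 hWt
    set e : Fin k ⊕ Fin l ≃ Fin n := finSumFinEquiv.trans (finCongr hkl) with he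
    set B : Matrix (Fin n) (Fin n) R := (U : Matrix _ _ R) * A * (↑U⁻¹ : Matrix _ _ R)
      with hB
    set B₁ : Matrix (Fin k) (Fin k) R :=
      B.submatrix (fun i => e (Sum.inl i)) (fun j => e (Sum.inl j)) with hB₁
    set B₂ : Matrix (Fin l) (Fin l) R :=
      B.submatrix (fun i => e (Sum.inr i)) (fun j => e (Sum.inr j)) with hB₂
    set C : Matrix (Fin k) (Fin l) R :=
      B.submatrix (fun i => e (Sum.inl i)) (fun j => e (Sum.inr j)) with hC
    have hBblocks : B = (Matrix.fromBlocks B₁ C 0 B₂).submatrix e.symm e.symm := by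
      ext i j
      rw [Matrix.submatrix_apply]
      rcases hi : e.symm i with a | a <;> rcases hj : e.symm j with b | b
      · have hi' : i = e (Sum.inl a) := by rw [← hi, Equiv.apply_symm_apply]
        have hj' : j = e (Sum.inl b) := by rw [← hj, Equiv.apply_symm_apply]
        rw [hi', hj']; rfl
      · have hi' : i = e (Sum.inl a) := by rw [← hi, Equiv.apply_symm_apply]
        have hj' : j = e (Sum.inr b) := by rw [← hj, Equiv.apply_symm_apply]
        rw [hi', hj']; rfl
      · have hi' : i = e (Sum.inr a) := by rw [← hi, Equiv.apply_symm_apply]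
        have hj' : j = e (Sum.inl b) := by rw [← hj, Equiv.apply_symm_apply]
        rw [hi', hj']
        simpa using hU a b
      · have hi' : i = e (Sum.inr a) := by rw [← hi, Equiv.apply_symm_apply]
        have hj' : j = e (Sum.inr b) := by rw [← hj, Equiv.apply_symm_apply]
        rw [hi', hj']; rfl
    obtain ⟨D₁, U₁, hU₁, r₁, b₁, hmono₁, htri₁, hblk₁⟩ := ih k (by omega) B₁
    obtain ⟨D₂, U₂, hU₂, r₂, b₂, hmono₂, htri₂, hblk₂⟩ := ih l (by omega) B₂
    set Vmat : Matrix (Fin n) (Fin n) R :=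
      (Matrix.fromBlocks (U₁ : Matrix _ _ R) 0 0 (U₂ : Matrix _ _ R)).submatrix
        e.symm e.symm with hVmat
    set Vinv : Matrix (Fin n) (Fin n) R :=
      (Matrix.fromBlocks (↑U₁⁻¹ : Matrix _ _ R) 0 0 (↑U₂⁻¹ : Matrix _ _ R)).submatrix
        e.symm e.symm with hVinv
    have hV1 : Vmat * Vinv = 1 := by
      rw [hVmat, hVinv, Matrix.submatrix_mul_equiv, Matrix.fromBlocks_multiply]
      simp only [Matrix.mul_zero, Matrix.zero_mul, add_zero, zero_add, Units.mul_inv]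
      rw [Matrix.fromBlocks_one, Matrix.submatrix_one_equiv]
    have hV2 : Vinv * Vmat = 1 := by
      rw [hVmat, hVinv, Matrix.submatrix_mul_equiv, Matrix.fromBlocks_multiply]
      simp only [Matrix.mul_zero, Matrix.zero_mul, add_zero, zero_add, Units.inv_mul]
      rw [Matrix.fromBlocks_one, Matrix.submatrix_one_equiv]
    set Vu : (Matrix (Fin n) (Fin n) R)ˣ := ⟨Vmat, Vinv, hV1, hV2⟩ with hVu
    set B_fin : Matrix (Fin n) (Fin n) R :=
      (Matrix.fromBlocks D₁ ((U₁ : Matrix (Fin k) (Fin k) R) * C * (↑U₂⁻¹ : Matrix (Fin l) (Fin l) R)) 0 D₂).submatrix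
        e.symm e.symm with hBfin
    have hU₁' : (U₁ : Matrix _ _ R) * (B₁ * (↑U₁⁻¹ : Matrix _ _ R)) = D₁ := by
      rw [← Matrix.mul_assoc]; exact hU₁
    have hU₂' : (U₂ : Matrix _ _ R) * (B₂ * (↑U₂⁻¹ : Matrix _ _ R)) = D₂ := by
      rw [← Matrix.mul_assoc]; exact hU₂
    have hconj : (↑(Vu * U) : Matrix (Fin n) (Fin n) R) * A * (↑(Vu * U)⁻¹ : Matrix _ _ R)
        = B_fin := by
      have h1 : (↑(Vu * U) : Matrix (Fin n) (Fin n) R)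
          = Vmat * (↑U : Matrix (Fin n) (Fin n) R) := rfl
      have h2 : (↑(Vu * U)⁻¹ : Matrix (Fin n) (Fin n) R)
          = (↑U⁻¹ : Matrix (Fin n) (Fin n) R) * Vinv := by
        rw [mul_inv_rev]; rfl
      rw [h1, h2]
      have h3 : Vmat * (↑U : Matrix (Fin n) (Fin n) R) * A *
          ((↑U⁻¹ : Matrix (Fin n) (Fin n) R) * Vinv) = Vmat * B * Vinv := by
        rw [hB]; simp only [Matrix.mul_assoc]
      rw [h3, hBblocks, hVmat, hVinv, Matrix.submatrix_mul_equiv,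
        Matrix.submatrix_mul_equiv, Matrix.fromBlocks_multiply,
        Matrix.fromBlocks_multiply, hBfin]
      congr 1
      simp only [Matrix.mul_zero, Matrix.zero_mul, add_zero, zero_add,
        Matrix.mul_assoc, hU₁', hU₂']
    -- value facts about e
    have hei : ∀ a : Fin k, (e (Sum.inl a) : ℕ) = (a : ℕ) := by
      intro a; simp [he]
    have her : ∀ a : Fin l, (e (Sum.inr a) : ℕ) = k + (a : ℕ) := by
      intro a; simp [he]
    set b : Fin n → Fin (r₁ + r₂) := fun x =>
      Sum.elim (fun a => (b₁ a).castAdd r₂) (fun a => (b₂ a).natAdd r₁) (e.symm x)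
      with hb
    have hbval : ∀ x : Fin n,
        (∀ a : Fin k, e.symm x = Sum.inl a → (b x : ℕ) = (b₁ a : ℕ)) ∧
        (∀ a : Fin l, e.symm x = Sum.inr a → (b x : ℕ) = r₁ + (b₂ a : ℕ)) := by
      intro x
      constructor
      · intro a hx; rw [hb]; simp only [hx, Sum.elim_inl]; rfl
      · intro a hx; rw [hb]; simp only [hx, Sum.elim_inr]; rfl
    have hxval : ∀ (x : Fin n),
        (∀ a : Fin k, e.symm x = Sum.inl a → (x : ℕ) = (a : ℕ)) ∧
        (∀ a : Fin l, e.symm x = Sum.inr a → (x : ℕ) = k + (a : ℕ)) := by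
      intro x
      constructor
      · intro a hx
        have : x = e (Sum.inl a) := by rw [← hx, Equiv.apply_symm_apply]
        rw [this, hei]
      · intro a hx
        have : x = e (Sum.inr a) := by rw [← hx, Equiv.apply_symm_apply]
        rw [this, her]
    refine ⟨B_fin, Vu * U, hconj, r₁ + r₂, b, ?_, ?_, ?_⟩
    · -- Monotone
      intro x y hxy
      rcases hx : e.symm x with a | a <;> rcases hy : e.symm y with c | c
      · have h1 := (hbval x).1 a hx
        have h2 := (hbval y).1 c hy
        have h3 := (hxval x).1 a hx
        have h4 := (hxval y).1 c hy
        have hac : a ≤ c := by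
          rw [Fin.le_def] at hxy ⊢; omega
        have := hmono₁ hac
        rw [Fin.le_def] at this ⊢; omega
      · have h1 := (hbval x).1 a hx
        have h2 := (hbval y).2 c hy
        have := (b₁ a).isLt
        rw [Fin.le_def]; omega
      · have h3 := (hxval x).2 a hx
        have h4 := (hxval y).1 c hy
        have h5 := c.isLt
        exact absurd hxy (by rw [Fin.le_def]; omega)
      · have h1 := (hbval x).2 a hx
        have h2 := (hbval y).2 c hy
        have h3 := (hxval x).2 a hx
        have h4 := (hxval y).2 c hy
        have hac : a ≤ c := by
          rw [Fin.le_def] at hxy ⊢; omega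
        have := hmono₂ hac
        rw [Fin.le_def] at this ⊢; omega
    · -- BlockTriangular
      intro i j hij
      have hBf : B_fin i j
          = (Matrix.fromBlocks D₁ ((U₁ : Matrix (Fin k) (Fin k) R) * C * (↑U₂⁻¹ : Matrix (Fin l) (Fin l) R)) 0 D₂)
            (e.symm i) (e.symm j) := rfl
      rw [hBf]
      rcases hi : e.symm i with a | a <;> rcases hj : e.symm j with c | c
      · have h1 := (hbval i).1 a hi
        have h2 := (hbval j).1 c hj
        have hlt : b₁ c < b₁ a := by
          rw [Fin.lt_def] at hij ⊢; omega
        simpa using htri₁ hlt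
      · have h1 := (hbval i).1 a hi
        have h2 := (hbval j).2 c hj
        rw [Fin.lt_def] at hij
        have := (b₁ a).isLt
        omega
      · simp
      · have h1 := (hbval i).2 a hi
        have h2 := (hbval j).2 c hj
        have hlt : b₂ c < b₂ a := by
          rw [Fin.lt_def] at hij ⊢; omega
        simpa using htri₂ hlt
    · -- blocks
      intro t
      by_cases ht : (t : ℕ) < r₁
      · obtain ⟨s, hsval⟩ : ∃ s : Fin r₁, (s : ℕ) = (t : ℕ) := ⟨⟨t, ht⟩, rfl⟩
        have hmem : ∀ a : Fin k, b₁ a = s → b (e (Sum.inl a)) = t := by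
          intro a ha
          have h1 := (hbval (e (Sum.inl a))).1 a (e.symm_apply_apply _)
          have ha' := congrArg Fin.val ha
          rw [Fin.ext_iff]
          omega
        set g : {a : Fin k // b₁ a = s} → {x : Fin n // b x = t} :=
          fun a => ⟨e (Sum.inl a.1), hmem a.1 a.2⟩ with hg
        have hginj : Function.Injective g := by
          intro a a' haa
          have := congrArg Subtype.val haa
          simp only [hg] at this
          exact Subtype.ext (Sum.inl.inj (e.injective this))
        have hgsurj : Function.Surjective g := by
          rintro ⟨x, hx⟩
          rcases hxa : e.symm x with a | a
          · have h1 := (hbval x).1 a hxa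
            have ha : b₁ a = s := by
              have hx' := congrArg Fin.val hx
              rw [Fin.ext_iff]
              omega
            refine ⟨⟨a, ha⟩, ?_⟩
            apply Subtype.ext
            simp only [hg]
            rw [← hxa, Equiv.apply_symm_apply]
          · exfalso
            have h1 := (hbval x).2 a hxa
            have hx' := congrArg Fin.val hx
            omega
        set ε : {a : Fin k // b₁ a = s} ≃ {x : Fin n // b x = t} :=
          Equiv.ofBijective g ⟨hginj, hgsurj⟩ with hε
        have heq : B_fin.toSquareBlock b t = Matrix.reindex ε ε (D₁.toSquareBlock b₁ s) := by
          ext x y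
          rw [Matrix.reindex_apply, Matrix.submatrix_apply]
          have hx' : (x : Fin n) = e (Sum.inl ((ε.symm x) : Fin k)) := by
            conv_lhs => rw [← ε.apply_symm_apply x]
            rfl
          have hy' : (y : Fin n) = e (Sum.inl ((ε.symm y) : Fin k)) := by
            conv_lhs => rw [← ε.apply_symm_apply y]
            rfl
          show B_fin (x : Fin n) (y : Fin n) = D₁ ((ε.symm x) : Fin k) ((ε.symm y) : Fin k)
          rw [hx', hy']
          show (Matrix.fromBlocks D₁ _ 0 D₂)
            (e.symm (e (Sum.inl _))) (e.symm (e (Sum.inl _))) = _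
          rw [Equiv.symm_apply_apply, Equiv.symm_apply_apply]
          rfl
        rw [heq, Matrix.charpoly_reindex]
        exact hblk₁ s
      · obtain ⟨s, hsval⟩ : ∃ s : Fin r₂, r₁ + (s : ℕ) = (t : ℕ) :=
          ⟨⟨(t : ℕ) - r₁, by have := t.isLt; omega⟩, by show r₁ + ((t : ℕ) - r₁) = (t : ℕ); omega⟩
        have hmem : ∀ a : Fin l, b₂ a = s → b (e (Sum.inr a)) = t := by
          intro a ha
          have h1 := (hbval (e (Sum.inr a))).2 a (e.symm_apply_apply _)
          have ha' := congrArg Fin.val ha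
          rw [Fin.ext_iff]
          omega
        set g : {a : Fin l // b₂ a = s} → {x : Fin n // b x = t} :=
          fun a => ⟨e (Sum.inr a.1), hmem a.1 a.2⟩ with hg
        have hginj : Function.Injective g := by
          intro a a' haa
          have := congrArg Subtype.val haa
          simp only [hg] at this
          exact Subtype.ext (Sum.inr.inj (e.injective this))
        have hgsurj : Function.Surjective g := by
          rintro ⟨x, hx⟩
          rcases hxa : e.symm x with a | a
          · exfalso
            have h1 := (hbval x).1 a hxa
            have hx' := congrArg Fin.val hx
            have := (b₁ a).isLt
            omega
          · have h1 := (hbval x).2 a hxa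
            have ha : b₂ a = s := by
              have hx' := congrArg Fin.val hx
              rw [Fin.ext_iff]
              omega
            refine ⟨⟨a, ha⟩, ?_⟩
            apply Subtype.ext
            simp only [hg]
            rw [← hxa, Equiv.apply_symm_apply]
        set ε : {a : Fin l // b₂ a = s} ≃ {x : Fin n // b x = t} :=
          Equiv.ofBijective g ⟨hginj, hgsurj⟩ with hε
        have heq : B_fin.toSquareBlock b t = Matrix.reindex ε ε (D₂.toSquareBlock b₂ s) := by
          ext x y
          rw [Matrix.reindex_apply, Matrix.submatrix_apply]
          have hx' : (x : Fin n) = e (Sum.inr ((ε.symm x) : Fin l)) := by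
            conv_lhs => rw [← ε.apply_symm_apply x]
            rfl
          have hy' : (y : Fin n) = e (Sum.inr ((ε.symm y) : Fin l)) := by
            conv_lhs => rw [← ε.apply_symm_apply y]
            rfl
          show B_fin (x : Fin n) (y : Fin n) = D₂ ((ε.symm x) : Fin l) ((ε.symm y) : Fin l)
          rw [hx', hy']
          show (Matrix.fromBlocks D₁ _ 0 D₂)
            (e.symm (e (Sum.inr _))) (e.symm (e (Sum.inr _))) = _
          rw [Equiv.symm_apply_apply, Equiv.symm_apply_apply]
          rfl
        rw [heq, Matrix.charpoly_reindex]
        exact hblk₂ s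

/-- Let `R` be a principal ideal domain with fraction field `K` and
`A ∈ Mat_n(R)`. Then `A` is similar over `R` to a block upper-triangular matrix
(blocks below the diagonal zero, blocks ordered by a monotone indexing) whose diagonal
blocks have characteristic polynomials irreducible in `K[x]`. -/
theorem similar_to_blockTriangular_with_irreducible_diagonal_blocks
    (R : Type*) [CommRing R] [IsDomain R] [IsPrincipalIdealRing R]
    (K : Type*) [Field K] [Algebra R K] [IsFractionRing R K]
    (n : ℕ) (A : Matrix (Fin n) (Fin n) R) :
    ∃ (B : Matrix (Fin n) (Fin n) R) (U : (Matrix (Fin n) (Fin n) R)ˣ),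
      (U : Matrix (Fin n) (Fin n) R) * A * (U⁻¹ : _) = B ∧
      ∃ (r : ℕ) (b : Fin n → Fin r), Monotone b ∧ B.BlockTriangular b ∧
        ∀ i : Fin r, Irreducible ((B.toSquareBlock b i).charpoly.map (algebraMap R K)) := by
  exact key R K n A
end

section
/- Let R be a discrete valuation ring with valuation v, let λ₁, λ₂ ∈ R, and let τ₁, τ₂ ∈ R be nonzero. Then the matrices [[λ₁, τ₁],[0, λ₂]] and [[λ₁, τ₂],[0, λ₂]] are similar over R if and only if v(τ₁) = v(τ₂), or v(λ₁ − λ₂) ≤ min{v(τ₁), v(τ₂)}. -/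
open IsDiscreteValuationRing

private lemma addVal_neg' {R : Type*} [CommRing R] [IsDomain R] [IsDiscreteValuationRing R]
    (x : R) : addVal R (-x) = addVal R x := by
  have h1 : addVal R (-1 : R) = 0 := by
    have h : addVal R ((-1 : R) * (-1)) = 0 := by rw [neg_mul_neg, one_mul, addVal_one]
    rw [addVal_mul] at h
    exact (add_eq_zero.mp h).1
  rw [show -x = -1 * x by ring, addVal_mul, h1, zero_add]

private lemma addVal_sub_min' {R : Type*} [CommRing R] [IsDomain R] [IsDiscreteValuationRing R]
    (a b : R) : min (addVal R a) (addVal R b) ≤ addVal R (a - b) := by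
  rw [sub_eq_add_neg]
  refine le_trans ?_ ((addVal R).map_add a (-b))
  rw [addVal_neg']

private lemma addVal_sub_eq_min' {R : Type*} [CommRing R] [IsDomain R] [IsDiscreteValuationRing R]
    {a b : R} (hne : addVal R a ≠ addVal R b) :
    addVal R (a - b) = min (addVal R a) (addVal R b) := by
  refine le_antisymm ?_ (addVal_sub_min' a b)
  have hswap : addVal R (a - b) = addVal R (b - a) := by
    rw [show b - a = -(a - b) by ring, addVal_neg']
  rcases lt_or_gt_of_ne hne with h | h
  · rw [min_eq_left h.le]
    by_contra hc
    push_neg at hc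
    have : addVal R a < addVal R ((a - b) + b) :=
      lt_of_lt_of_le (lt_min hc h) ((addVal R).map_add _ _)
    rw [sub_add_cancel] at this
    exact lt_irrefl _ this
  · rw [min_eq_right h.le]
    by_contra hc
    push_neg at hc
    rw [hswap] at hc
    have : addVal R b < addVal R ((b - a) + a) :=
      lt_of_lt_of_le (lt_min hc h) ((addVal R).map_add _ _)
    rw [sub_add_cancel] at this
    exact lt_irrefl _ this

private lemma addVal_unit_mul' {R : Type*} [CommRing R] [IsDomain R] [IsDiscreteValuationRing R]
    {u a : R} (hu : IsUnit u) : addVal R (u * a) = addVal R a := by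
  have h0 : addVal R u = 0 := by
    have h1 : addVal R u ≤ addVal R 1 := addVal_le_iff_dvd.2 hu.dvd
    rw [addVal_one] at h1
    exact le_antisymm h1 zero_le
  rw [addVal_mul, h0, zero_add]

/-- Let `R` be a discrete valuation ring with (additive) valuation
`v`, `λ₁, λ₂ ∈ R`, and `τ₁, τ₂ ∈ R` nonzero. Then `[[λ₁, τ₁],[0, λ₂]]` and
`[[λ₁, τ₂],[0, λ₂]]` are similar over `R` iff `v(τ₁) = v(τ₂)` or
`v(λ₁ − λ₂) ≤ min{v(τ₁), v(τ₂)}`. -/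
theorem upper_triangular_similar_iff
    (R : Type*) [CommRing R] [IsDomain R] [IsDiscreteValuationRing R]
    (lam1 lam2 : R) (tau1 tau2 : R) (h1 : tau1 ≠ 0) (h2 : tau2 ≠ 0) :
    (∃ U : (Matrix (Fin 2) (Fin 2) R)ˣ,
        (U : Matrix (Fin 2) (Fin 2) R) * !![lam1, tau1; 0, lam2] * (U⁻¹ : _) =
          !![lam1, tau2; 0, lam2]) ↔
      (addVal R tau1 = addVal R tau2 ∨
        addVal R (lam1 - lam2) ≤ min (addVal R tau1) (addVal R tau2)) := by
  constructor
  · rintro ⟨U, hU⟩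
    have hUA : (U : Matrix (Fin 2) (Fin 2) R) * !![lam1, tau1; 0, lam2] =
        !![lam1, tau2; 0, lam2] * (U : Matrix (Fin 2) (Fin 2) R) := by
      have := congrArg (· * (U : Matrix (Fin 2) (Fin 2) R)) hU
      simpa [mul_assoc] using this
    have e00 : ((U : Matrix (Fin 2) (Fin 2) R) * !![lam1, tau1; 0, lam2]) 0 0 =
        (!![lam1, tau2; 0, lam2] * (U : Matrix (Fin 2) (Fin 2) R)) 0 0 := by rw [hUA]
    have e01 : ((U : Matrix (Fin 2) (Fin 2) R) * !![lam1, tau1; 0, lam2]) 0 1 =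
        (!![lam1, tau2; 0, lam2] * (U : Matrix (Fin 2) (Fin 2) R)) 0 1 := by rw [hUA]
    simp [Matrix.mul_apply, Fin.sum_univ_two] at e00 e01
    -- from the (0,0) entry: tau2 * U 1 0 = 0, hence U 1 0 = 0
    have hz0 : (U : Matrix (Fin 2) (Fin 2) R) 1 0 = 0 := by
      have ht : tau2 * (U : Matrix (Fin 2) (Fin 2) R) 1 0 = 0 := by linear_combination -e00
      rcases mul_eq_zero.1 ht with h | h
      · exact absurd h h2
      · exact h
    have hdet : IsUnit ((U : Matrix (Fin 2) (Fin 2) R).det) :=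
      (Matrix.isUnit_iff_isUnit_det _).1 U.isUnit
    rw [Matrix.det_fin_two, hz0, mul_zero, sub_zero] at hdet
    have hxu : IsUnit ((U : Matrix (Fin 2) (Fin 2) R) 0 0) := isUnit_of_mul_isUnit_left hdet
    have hwu : IsUnit ((U : Matrix (Fin 2) (Fin 2) R) 1 1) := isUnit_of_mul_isUnit_right hdet
    have key : (U : Matrix (Fin 2) (Fin 2) R) 0 0 * tau1 -
        tau2 * (U : Matrix (Fin 2) (Fin 2) R) 1 1 =
        (lam1 - lam2) * (U : Matrix (Fin 2) (Fin 2) R) 0 1 := by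
      linear_combination e01
    by_cases hv : addVal R tau1 = addVal R tau2
    · exact Or.inl hv
    right
    have hvx : addVal R ((U : Matrix (Fin 2) (Fin 2) R) 0 0 * tau1) = addVal R tau1 :=
      addVal_unit_mul' hxu
    have hvw : addVal R (tau2 * (U : Matrix (Fin 2) (Fin 2) R) 1 1) = addVal R tau2 := by
      rw [mul_comm]; exact addVal_unit_mul' hwu
    have hne : addVal R ((U : Matrix (Fin 2) (Fin 2) R) 0 0 * tau1) ≠
        addVal R (tau2 * (U : Matrix (Fin 2) (Fin 2) R) 1 1) := by
      rw [hvx, hvw]; exact hv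
    have hmin : addVal R ((U : Matrix (Fin 2) (Fin 2) R) 0 0 * tau1 -
        tau2 * (U : Matrix (Fin 2) (Fin 2) R) 1 1) =
        min (addVal R tau1) (addVal R tau2) := by
      rw [addVal_sub_eq_min' hne, hvx, hvw]
    rw [key, addVal_mul] at hmin
    calc addVal R (lam1 - lam2)
        ≤ addVal R (lam1 - lam2) + addVal R ((U : Matrix (Fin 2) (Fin 2) R) 0 1) := le_self_add
      _ = _ := hmin
  · rintro (hv | hv)
    · obtain ⟨u, hu⟩ : Associated tau1 tau2 :=
        associated_of_dvd_dvd (addVal_le_iff_dvd.1 hv.le) (addVal_le_iff_dvd.1 hv.ge)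
      have huu : (u : R) * (↑u⁻¹ : R) = 1 := u.mul_inv
      have huu' : (↑u⁻¹ : R) * (u : R) = 1 := u.inv_mul
      refine ⟨⟨!![(u : R), 0; 0, 1], !![(↑u⁻¹ : R), 0; 0, 1], ?_, ?_⟩, ?_⟩
      · ext i j
        fin_cases i <;> fin_cases j <;> simp [Matrix.mul_apply, Fin.sum_univ_two, huu]
      · ext i j
        fin_cases i <;> fin_cases j <;> simp [Matrix.mul_apply, Fin.sum_univ_two, huu']
      · show !![(u : R), 0; 0, 1] * _ * !![(↑u⁻¹ : R), 0; 0, 1] = _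
        ext i j
        fin_cases i <;> fin_cases j <;> simp [Matrix.mul_apply, Fin.sum_univ_two]
        · linear_combination lam1 * huu
        · linear_combination hu
    · obtain ⟨a, ha⟩ : (lam1 - lam2) ∣ tau1 :=
        addVal_le_iff_dvd.1 (hv.trans (min_le_left _ _))
      obtain ⟨b, hb⟩ : (lam1 - lam2) ∣ tau2 :=
        addVal_le_iff_dvd.1 (hv.trans (min_le_right _ _))
      refine ⟨⟨!![1, a - b; 0, 1], !![1, b - a; 0, 1], ?_, ?_⟩, ?_⟩
      · ext i j
        fin_cases i <;> fin_cases j <;> simp [Matrix.mul_apply, Fin.sum_univ_two]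
      · ext i j
        fin_cases i <;> fin_cases j <;> simp [Matrix.mul_apply, Fin.sum_univ_two]
      · show !![(1 : R), a - b; 0, 1] * _ * !![(1 : R), b - a; 0, 1] = _
        ext i j
        fin_cases i <;> fin_cases j <;> simp [Matrix.mul_apply, Fin.sum_univ_two]
        linear_combination ha - hb
end

section
/- Let R be a discrete valuation ring with uniformizer π and valuation v, and let λ₁, λ₂ ∈ R with v(λ₁) ≥ v(λ₂). If λ₁ ≠ λ₂, then every matrix A ∈ Mat_2(R) with characteristic polynomial (x − λ₁)(x − λ₂) is similar over R to exactly one matrix of the form [[λ₁, π^j],[0, λ₂]] with 0 ≤ j ≤ v(λ₁ − λ₂). If λ₁ = λ₂, then every such A is similar over R to exactly one of the diagonal matrix [[λ₁, 0],[0, λ₁]] or [[λ₁, π^j],[0, λ₁]] with j ≥ 0. -/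
open Polynomial IsDiscreteValuationRing Matrix

section Aux

variable {R : Type*} [CommRing R] [IsDomain R] [IsDiscreteValuationRing R]

lemma dvr_isUnit_of_not_dvd {π x : R} (hπ : Irreducible π) (h : ¬ π ∣ x) :
    IsUnit x := by
  have hx : x ≠ 0 := by rintro rfl; exact h (dvd_zero π)
  obtain ⟨n, u, rfl⟩ := eq_unit_mul_pow_irreducible hx hπ
  cases n with
  | zero => simpa using u.isUnit
  | succ n =>
      exact absurd (Dvd.dvd.mul_left (dvd_pow_self π n.succ_ne_zero) (u:R)) h

lemma dvr_dvd_of_not_isUnit {π x : R} (hπ : Irreducible π) (h : ¬ IsUnit x) :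
    π ∣ x := by
  by_contra hc
  exact h (dvr_isUnit_of_not_dvd hπ hc)

lemma dvd_entries_mul {n : ℕ} (P A Q : Matrix (Fin n) (Fin n) R) (r : R)
    (h : ∀ i j, r ∣ A i j) (i j : Fin n) : r ∣ (P * A * Q) i j := by
  rw [Matrix.mul_apply]
  refine Finset.dvd_sum fun l _ => ?_
  rw [Matrix.mul_apply]
  exact Dvd.dvd.mul_right (Finset.dvd_sum fun m _ => (h m l).mul_left _) _

lemma trace_det_of_charpoly (lam1 lam2 : R) (A : Matrix (Fin 2) (Fin 2) R)
    (h : A.charpoly = (X - C lam1) * (X - C lam2)) :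
    A 0 0 + A 1 1 = lam1 + lam2 ∧ A 0 0 * A 1 1 - A 0 1 * A 1 0 = lam1 * lam2 := by
  have hexp : (X - C lam1) * (X - C lam2)
      = X ^ 2 - (C lam1 + C lam2) * X + C (lam1 * lam2) := by
    rw [C_mul]; ring
  have c1 : ((X:R[X]) ^ 2 - (C lam1 + C lam2) * X + C (lam1 * lam2)).coeff 1
      = -(lam1 + lam2) := by
    rw [coeff_add, coeff_sub, coeff_X_pow]
    rw [show (1:ℕ) = 0 + 1 from rfl, coeff_mul_X, coeff_add, coeff_C, coeff_C, coeff_C]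
    simp
  have c0 : ((X:R[X]) ^ 2 - (C lam1 + C lam2) * X + C (lam1 * lam2)).coeff 0
      = lam1 * lam2 := by
    rw [coeff_add, coeff_sub, coeff_X_pow, mul_coeff_zero]
    simp [coeff_C, coeff_X]
  have ht := Matrix.trace_eq_neg_charpoly_coeff A
  have hd := Matrix.det_eq_sign_charpoly_coeff A
  simp only [Fintype.card_fin] at ht hd
  rw [h, hexp, c1] at ht
  rw [h, hexp, c0] at hd
  rw [Matrix.trace_fin_two] at ht
  rw [Matrix.det_fin_two] at hd
  exact ⟨by linear_combination ht, by linear_combination hd⟩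

lemma le_of_conj (π : R) (hπ : Irreducible π) (lam1 lam2 : R) {j k : ℕ}
    (hj : π ^ j ∣ (lam1 - lam2)) (U : (Matrix (Fin 2) (Fin 2) R)ˣ)
    (hU : (U : Matrix (Fin 2) (Fin 2) R) * !![lam1, π ^ j; 0, lam2] * (U⁻¹ : _)
        = !![lam1, π ^ k; 0, lam2]) : j ≤ k := by
  have hsub : ∀ m : ℕ, !![lam1, π ^ m; 0, lam2] - lam2 • (1 : Matrix (Fin 2) (Fin 2) R)
      = !![lam1 - lam2, π ^ m; 0, 0] := by
    intro m
    ext i l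
    fin_cases i <;> fin_cases l <;>
      simp [Matrix.smul_apply, Matrix.one_apply, Matrix.sub_apply]
  have hconj : (U : Matrix (Fin 2) (Fin 2) R) * !![lam1 - lam2, π ^ j; 0, 0] * (U⁻¹ : _)
      = !![lam1 - lam2, π ^ k; 0, 0] := by
    rw [← hsub j, ← hsub k, Matrix.mul_sub, Matrix.sub_mul, hU,
      Matrix.mul_smul, Matrix.smul_mul, mul_one, Units.mul_inv]
  have hdvd : ∀ i l, (π : R) ^ j ∣
      (!![lam1 - lam2, π ^ j; 0, 0] : Matrix (Fin 2) (Fin 2) R) i l := by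
    intro i l
    fin_cases i <;> fin_cases l <;> simp [hj]
  have key := dvd_entries_mul (U : Matrix (Fin 2) (Fin 2) R) _ (U⁻¹ : _) _ hdvd 0 1
  rw [hconj] at key
  have key2 : π ^ j ∣ π ^ k := by simpa using key
  exact (pow_dvd_pow_iff hπ.ne_zero hπ.not_isUnit).mp key2

lemma finish_conj (π : R) (lam1 lam2 : R) (k : ℕ)
    (A Cm V : Matrix (Fin 2) (Fin 2) R)
    (hAdec : A = lam2 • 1 + π ^ k • Cm)
    (htau : π ^ k * (Cm 0 0 + Cm 1 1) = lam1 - lam2)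
    (hVdet : IsUnit V.det)
    (hCV : Cm * V = V * !![Cm 0 0 + Cm 1 1, 1; 0, 0]) :
    ∃ U : (Matrix (Fin 2) (Fin 2) R)ˣ,
      (U : Matrix (Fin 2) (Fin 2) R) * A * (U⁻¹ : _) = !![lam1, π ^ k; 0, lam2] := by
  have hV : IsUnit V := (Matrix.isUnit_iff_isUnit_det V).mpr hVdet
  set u := hV.unit with hu0
  have hu : (u : Matrix (Fin 2) (Fin 2) R) = V := hV.unit_spec
  have hM : !![lam1, π ^ k; 0, lam2]
      = lam2 • (1 : Matrix (Fin 2) (Fin 2) R) + π ^ k • !![Cm 0 0 + Cm 1 1, 1; 0, 0] := by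
    ext i l
    fin_cases i <;> fin_cases l <;>
      simp [Matrix.smul_apply, Matrix.one_apply, Matrix.add_apply] <;>
      linear_combination -htau
  have hAV : A * V = V * !![lam1, π ^ k; 0, lam2] := by
    rw [hAdec, hM, Matrix.add_mul, Matrix.mul_add, smul_mul_assoc, smul_mul_assoc,
      mul_smul_comm, mul_smul_comm, one_mul, mul_one, hCV]
  refine ⟨u⁻¹, ?_⟩
  rw [inv_inv]
  calc (↑u⁻¹ : Matrix (Fin 2) (Fin 2) R) * A * ↑u
      = ↑u⁻¹ * (A * ↑u) := by rw [mul_assoc]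
    _ = ↑u⁻¹ * (↑u * !![lam1, π ^ k; 0, lam2]) := by rw [hu, hAV]
    _ = (↑u⁻¹ * ↑u) * !![lam1, π ^ k; 0, lam2] := by rw [mul_assoc]
    _ = !![lam1, π ^ k; 0, lam2] := by rw [Units.inv_mul, one_mul]

lemma conj_to_triangular (π : R) (hπ : Irreducible π) (lam1 lam2 : R)
    (A : Matrix (Fin 2) (Fin 2) R)
    (ht : A 0 0 + A 1 1 = lam1 + lam2)
    (hd : A 0 0 * A 1 1 - A 0 1 * A 1 0 = lam1 * lam2)
    (hA : A ≠ lam2 • (1 : Matrix (Fin 2) (Fin 2) R)) :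
    ∃ k : ℕ, π ^ k ∣ (lam1 - lam2) ∧
      ∃ U : (Matrix (Fin 2) (Fin 2) R)ˣ,
        (U : Matrix (Fin 2) (Fin 2) R) * A * (U⁻¹ : _) = !![lam1, π ^ k; 0, lam2] := by
  classical
  have hprime : Prime π := UniqueFactorizationMonoid.irreducible_iff_prime.mp hπ
  set B : Matrix (Fin 2) (Fin 2) R := A - lam2 • 1 with hB
  have hBentry : ∀ i j : Fin 2, B i j = A i j - (if i = j then lam2 else 0) := by
    intro i j
    simp [hB, Matrix.sub_apply, Matrix.smul_apply, Matrix.one_apply]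
  have hBne : B ≠ 0 := sub_ne_zero.mpr hA
  obtain ⟨i0, hi0⟩ : ∃ i, B i ≠ 0 := Function.ne_iff.mp hBne
  obtain ⟨j0, hj0⟩ : ∃ j, B i0 j ≠ 0 := Function.ne_iff.mp hi0
  obtain ⟨n, u, hun⟩ := eq_unit_mul_pow_irreducible hj0 hπ
  have hP0 : ∀ i j, π ^ 0 ∣ B i j := by intro i j; simp
  have hPn : ¬ ∀ i j, π ^ (n + 1) ∣ B i j := by
    intro hcon
    have h1 : π ^ (n+1) ∣ (u : R) * π ^ n := hun ▸ hcon i0 j0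
    have h2 : π ^ (n+1) ∣ π ^ n := (Units.dvd_mul_left).mp h1
    exact Nat.not_succ_le_self n ((pow_dvd_pow_iff hπ.ne_zero hπ.not_isUnit).mp h2)
  have hex : ∃ m, ¬ ∀ i j, π ^ m ∣ B i j := ⟨n + 1, hPn⟩
  have hk1pos : Nat.find hex ≠ 0 := by
    intro h0
    exact (Nat.find_spec hex) (h0 ▸ hP0)
  set k := Nat.find hex - 1 with hk
  have hkk1 : k + 1 = Nat.find hex := Nat.succ_pred_eq_of_pos (Nat.pos_of_ne_zero hk1pos)
  have hPk : ∀ i j, π ^ k ∣ B i j := by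
    by_contra hcon
    have h2 : Nat.find hex ≤ k := Nat.find_le hcon
    omega
  have hnPk1 : ¬ ∀ i j, π ^ (k+1) ∣ B i j := hkk1 ▸ Nat.find_spec hex
  set Cm : Matrix (Fin 2) (Fin 2) R := fun i j => (hPk i j).choose with hCm
  have hBC : ∀ i j, B i j = π ^ k * Cm i j := fun i j => (hPk i j).choose_spec
  obtain ⟨iu, ju, hiu⟩ : ∃ i j, ¬ π ^ (k+1) ∣ B i j := by
    by_contra hcon
    push_neg at hcon
    exact hnPk1 hcon
  have hCu : IsUnit (Cm iu ju) := by
    apply dvr_isUnit_of_not_dvd hπ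
    intro hdvd
    apply hiu
    rw [hBC iu ju, pow_succ]
    exact mul_dvd_mul_left (π ^ k) hdvd
  -- entry formulas for A
  have e00 : A 0 0 = lam2 + π ^ k * Cm 0 0 := by
    have h1 := hBC 0 0; rw [hBentry 0 0, if_pos rfl] at h1; linear_combination h1
  have e11 : A 1 1 = lam2 + π ^ k * Cm 1 1 := by
    have h1 := hBC 1 1; rw [hBentry 1 1, if_pos rfl] at h1; linear_combination h1
  have e01 : A 0 1 = π ^ k * Cm 0 1 := by
    have h1 := hBC 0 1; rw [hBentry 0 1, if_neg (by decide)] at h1; linear_combination h1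
  have e10 : A 1 0 = π ^ k * Cm 1 0 := by
    have h1 := hBC 1 0; rw [hBentry 1 0, if_neg (by decide)] at h1; linear_combination h1
  have hAdec : A = lam2 • 1 + π ^ k • Cm := by
    ext i j
    have h1 := hBC i j
    rw [hBentry i j] at h1
    simp only [Matrix.add_apply, Matrix.smul_apply, Matrix.one_apply, smul_eq_mul,
      mul_ite, mul_one, mul_zero]
    linear_combination h1
  have htau : π ^ k * (Cm 0 0 + Cm 1 1) = lam1 - lam2 := by
    linear_combination ht - e00 - e11
  have hdC : Cm 0 0 * Cm 1 1 = Cm 0 1 * Cm 1 0 := by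
    have hd' : (lam2 + π ^ k * Cm 0 0) * (lam2 + π ^ k * Cm 1 1)
        - (π ^ k * Cm 0 1) * (π ^ k * Cm 1 0) = lam1 * lam2 := by
      rw [← e00, ← e11, ← e01, ← e10]; exact hd
    have ht' : (lam2 + π ^ k * Cm 0 0) + (lam2 + π ^ k * Cm 1 1) = lam1 + lam2 := by
      rw [← e00, ← e11]; exact ht
    have hsq : (π ^ k) ^ 2 * (Cm 0 0 * Cm 1 1 - Cm 0 1 * Cm 1 0) = 0 := by
      linear_combination hd' - lam2 * ht'
    have h2 := (mul_eq_zero.mp hsq).resolve_left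
      (pow_ne_zero 2 (pow_ne_zero k hπ.ne_zero))
    linear_combination h2
  refine ⟨k, by rw [← htau]; exact Dvd.intro _ rfl, ?_⟩
  by_cases hc : IsUnit (Cm 1 0)
  · refine finish_conj π lam1 lam2 k A Cm !![Cm 0 0, 1; Cm 1 0, 0] hAdec htau ?_ ?_
    · rw [Matrix.det_fin_two_of]
      simpa using hc.neg
    · ext i j
      fin_cases i <;> fin_cases j <;>
        simp [Matrix.mul_apply, Fin.sum_univ_two] <;>
        first
          | rfl
          | ring1
          | linear_combination hdC
          | linear_combination -hdC
  by_cases hb : IsUnit (Cm 0 1)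
  · refine finish_conj π lam1 lam2 k A Cm !![Cm 0 1, 0; Cm 1 1, 1] hAdec htau ?_ ?_
    · rw [Matrix.det_fin_two_of]
      simpa using hb
    · ext i j
      fin_cases i <;> fin_cases j <;>
        simp [Matrix.mul_apply, Fin.sum_univ_two] <;>
        first
          | rfl
          | ring1
          | linear_combination hdC
          | linear_combination -hdC
  -- remaining case : diagonal entry is a unit
  have hπb : π ∣ Cm 0 1 := dvr_dvd_of_not_isUnit hπ hb
  have hπc : π ∣ Cm 1 0 := dvr_dvd_of_not_isUnit hπ hc
  have had : IsUnit (Cm 0 0) ∨ IsUnit (Cm 1 1) := by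
    fin_cases iu <;> fin_cases ju
    · exact Or.inl hCu
    · exact absurd hCu hb
    · exact absurd hCu hc
    · exact Or.inr hCu
  refine finish_conj π lam1 lam2 k A Cm
    !![Cm 0 0 + Cm 0 1, 1; Cm 1 0 + Cm 1 1, 1] hAdec htau ?_ ?_
  · rw [Matrix.det_fin_two_of]
    apply dvr_isUnit_of_not_dvd hπ
    intro hdet
    rcases had with ha | hdu
    · have h1 : π ∣ Cm 0 0 * Cm 1 1 := hdC ▸ hπb.mul_right _
      have h2 : π ∣ Cm 1 1 := by
        rcases hprime.2.2 _ _ h1 with h | h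
        · exact absurd (isUnit_of_dvd_unit h ha) hπ.not_isUnit
        · exact h
      have h3 : π ∣ Cm 0 0 := by
        have : Cm 0 0 = ((Cm 0 0 + Cm 0 1) * 1 - 1 * (Cm 1 0 + Cm 1 1))
            + Cm 1 0 + Cm 1 1 - Cm 0 1 := by ring
        rw [this]
        exact dvd_sub (dvd_add (dvd_add hdet hπc) h2) hπb
      exact absurd (isUnit_of_dvd_unit h3 ha) hπ.not_isUnit
    · have h1 : π ∣ Cm 0 0 * Cm 1 1 := hdC ▸ hπb.mul_right _
      have h2 : π ∣ Cm 0 0 := by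
        rcases hprime.2.2 _ _ h1 with h | h
        · exact h
        · exact absurd (isUnit_of_dvd_unit h hdu) hπ.not_isUnit
      have h3 : π ∣ Cm 1 1 := by
        have : Cm 1 1 = Cm 0 0 + Cm 0 1 - Cm 1 0
            - ((Cm 0 0 + Cm 0 1) * 1 - 1 * (Cm 1 0 + Cm 1 1)) := by ring
        rw [this]
        exact dvd_sub (dvd_sub (dvd_add h2 hπb) hπc) hdet
      exact absurd (isUnit_of_dvd_unit h3 hdu) hπ.not_isUnit
  · ext i j
    fin_cases i <;> fin_cases j <;>
      simp [Matrix.mul_apply, Fin.sum_univ_two] <;>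
      first
        | rfl
        | ring1
        | linear_combination hdC
        | linear_combination -hdC



lemma addVal_cast_le_iff {π : R} (hπ : Irreducible π) (x : R) (k : ℕ) :
    ((k : ℕ∞) ≤ addVal R x) ↔ π ^ k ∣ x := by
  rw [← hπ.addVal_pow k]
  exact addVal_le_iff_dvd

lemma conj_symm (U : (Matrix (Fin 2) (Fin 2) R)ˣ) (A B : Matrix (Fin 2) (Fin 2) R)
    (h : (U : Matrix (Fin 2) (Fin 2) R) * A * (U⁻¹ : _) = B) :
    ((U⁻¹ : (Matrix (Fin 2) (Fin 2) R)ˣ) : Matrix (Fin 2) (Fin 2) R) * B * (U : _) = A := by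
  rw [← h]
  simp [mul_assoc, Units.inv_mul_cancel_left, Units.inv_mul, mul_one]

lemma conj_trans (U W : (Matrix (Fin 2) (Fin 2) R)ˣ)
    (A MA MB : Matrix (Fin 2) (Fin 2) R)
    (hU : (U : Matrix (Fin 2) (Fin 2) R) * A * (U⁻¹ : _) = MA)
    (hW : (W : Matrix (Fin 2) (Fin 2) R) * A * (W⁻¹ : _) = MB) :
    ((W * U⁻¹ : (Matrix (Fin 2) (Fin 2) R)ˣ) : Matrix (Fin 2) (Fin 2) R) * MA
      * (((W * U⁻¹)⁻¹ : (Matrix (Fin 2) (Fin 2) R)ˣ) : _) = MB := by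
  have h1 : ((W * U⁻¹ : (Matrix (Fin 2) (Fin 2) R)ˣ) : Matrix (Fin 2) (Fin 2) R)
      = (W : Matrix (Fin 2) (Fin 2) R) * ((U⁻¹ : (Matrix (Fin 2) (Fin 2) R)ˣ) : _) :=
    Units.val_mul _ _
  have h2 : (((W * U⁻¹)⁻¹ : (Matrix (Fin 2) (Fin 2) R)ˣ) : Matrix (Fin 2) (Fin 2) R)
      = (U : Matrix (Fin 2) (Fin 2) R) * ((W⁻¹ : (Matrix (Fin 2) (Fin 2) R)ˣ) : _) := by
    rw [_root_.mul_inv_rev, inv_inv, Units.val_mul]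
  rw [h1, h2, ← hU, ← hW]
  simp [mul_assoc, Units.inv_mul_cancel_left]

lemma conj_smul_one' (U : (Matrix (Fin 2) (Fin 2) R)ˣ) (r : R) :
    (U : Matrix (Fin 2) (Fin 2) R) * (r • 1) * (U⁻¹ : _) = r • 1 := by
  rw [Matrix.mul_smul, Matrix.smul_mul, mul_one, Units.mul_inv]

end Aux

/-- Let `R` be a DVR with uniformizer `π` and valuation `v`, and
`λ₁, λ₂ ∈ R` with `v(λ₁) ≥ v(λ₂)`. If `λ₁ ≠ λ₂`, every `A ∈ Mat_2(R)` with
characteristic polynomial `(x − λ₁)(x − λ₂)` is similar over `R` to exactly one matrix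
`[[λ₁, π^j],[0, λ₂]]` with `0 ≤ j ≤ v(λ₁ − λ₂)`. If `λ₁ = λ₂`, every such `A` is
similar over `R` to exactly one of the diagonal matrix `[[λ₁, 0],[0, λ₁]]` or the
matrices `[[λ₁, π^j],[0, λ₁]]`, `j ≥ 0`. -/
theorem reducible_charpoly_classification
    (R : Type*) [CommRing R] [IsDomain R] [IsDiscreteValuationRing R]
    (π : R) (hπ : Irreducible π)
    (lam1 lam2 : R) (hv : addVal R lam2 ≤ addVal R lam1) :
    (lam1 ≠ lam2 →
      ∀ A : Matrix (Fin 2) (Fin 2) R,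
        A.charpoly = (X - C lam1) * (X - C lam2) →
          ∃! j : ℕ, (j : ℕ∞) ≤ addVal R (lam1 - lam2) ∧
            ∃ U : (Matrix (Fin 2) (Fin 2) R)ˣ,
              (U : Matrix (Fin 2) (Fin 2) R) * A * (U⁻¹ : _) = !![lam1, π ^ j; 0, lam2]) ∧
    (lam1 = lam2 →
      ∀ A : Matrix (Fin 2) (Fin 2) R,
        A.charpoly = (X - C lam1) * (X - C lam2) →
          ∃! o : Option ℕ,
            ∃ U : (Matrix (Fin 2) (Fin 2) R)ˣ,
              (U : Matrix (Fin 2) (Fin 2) R) * A * (U⁻¹ : _) =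
                o.elim !![lam1, 0; 0, lam1] (fun j => !![lam1, π ^ j; 0, lam1])) := by
  constructor
  · -- distinct eigenvalues
    intro hne A hchar
    obtain ⟨ht, hd⟩ := trace_det_of_charpoly lam1 lam2 A hchar
    have hA : A ≠ lam2 • (1 : Matrix (Fin 2) (Fin 2) R) := by
      intro h
      apply hne
      rw [h] at ht
      simp [Matrix.smul_apply, Matrix.one_apply] at ht
      linear_combination -ht
    obtain ⟨k, hkd, U, hU⟩ := conj_to_triangular π hπ lam1 lam2 A ht hd hA
    refine ⟨k, ⟨?_, U, hU⟩, ?_⟩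
    · exact (addVal_cast_le_iff hπ _ k).mpr hkd
    · rintro y ⟨hy, Uy, hUy⟩
      have hyd : π ^ y ∣ lam1 - lam2 := (addVal_cast_le_iff hπ _ y).mp hy
      have h1 := conj_trans Uy U A _ _ hUy hU
      have h2 := conj_trans U Uy A _ _ hU hUy
      exact le_antisymm (le_of_conj π hπ lam1 lam2 hyd (U * Uy⁻¹) h1)
        (le_of_conj π hπ lam1 lam2 hkd (Uy * U⁻¹) h2)
  · -- equal eigenvalues
    intro heq A hchar
    subst heq
    obtain ⟨ht, hd⟩ := trace_det_of_charpoly lam1 lam1 A hchar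
    by_cases hA : A = lam1 • (1 : Matrix (Fin 2) (Fin 2) R)
    · refine ⟨none, ⟨1, ?_⟩, ?_⟩
      · simp only [Option.elim, Units.val_one, one_mul, inv_one]
        rw [mul_one, hA]
        ext i j
        fin_cases i <;> fin_cases j <;>
          simp [Matrix.smul_apply, Matrix.one_apply]
      · rintro y ⟨Uy, hUy⟩
        cases y with
        | none => rfl
        | some m =>
            exfalso
            rw [hA, conj_smul_one' Uy lam1] at hUy
            have h01 := congrFun (congrFun hUy 0) 1
            simp [Matrix.smul_apply, Matrix.one_apply] at h01
            exact pow_ne_zero m hπ.ne_zero h01.symm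
    · obtain ⟨k, hkd, U, hU⟩ := conj_to_triangular π hπ lam1 lam1 A ht hd hA
      refine ⟨some k, ⟨U, by simpa using hU⟩, ?_⟩
      rintro y ⟨Uy, hUy⟩
      cases y with
      | none =>
          exfalso
          apply hA
          simp only [Option.elim] at hUy
          have hsc : (!![lam1, 0; 0, lam1] : Matrix (Fin 2) (Fin 2) R)
              = lam1 • 1 := by
            ext i j
            fin_cases i <;> fin_cases j <;>
              simp [Matrix.smul_apply, Matrix.one_apply]
          rw [hsc] at hUy
          have := conj_symm Uy A _ hUy
          rw [← this]
          have h2 := conj_smul_one' Uy⁻¹ lam1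
          rw [inv_inv] at h2
          exact h2
      | some m =>
          simp only [Option.elim] at hUy
          have h1 := conj_trans Uy U A _ _ hUy hU
          have h2 := conj_trans U Uy A _ _ hU hUy
          have hz : ∀ m : ℕ, (π : R) ^ m ∣ lam1 - lam1 := by simp
          have hle1 : m ≤ k := le_of_conj π hπ lam1 lam1 (hz m) (U * Uy⁻¹) h1
          have hle2 : k ≤ m := le_of_conj π hπ lam1 lam1 (hz k) (Uy * U⁻¹) h2
          rw [le_antisymm hle1 hle2]
end

section
/- Let R be a discrete valuation ring with uniformizer π and valuation v, let f(x) = x² − ax − b ∈ R[x] be monic irreducible over the fraction field K, let θ be the class of x in R[θ] := R[x]/(f), and fix r ∈ R; write T := b − r(r + a). Consider the R-submodules J_n := Rπⁿ + R(r + θ) of R[θ] (n ≥ 0) that are ideals of R[θ]. Then every such ideal J_n is equivalent to J_k for some k with 0 ≤ k ≤ min{v(2r + a), ⌊½v(T)⌋}, and for distinct k, n in this range the ideals J_k and J_n are not equivalent. -/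
open Polynomial

set_option linter.unusedSectionVars false
namespace St12

variable {R : Type*} [CommRing R] [IsDomain R]

noncomputable section

abbrev Fp (a b : R) : R[X] := X ^ 2 - C a * X - C b

abbrev Q (a b : R) := R[X] ⧸ Ideal.span {Fp a b}

variable (a b : R)

def mkq : R[X] →+* Q a b := Ideal.Quotient.mk _

def th : Q a b := mkq a b X

def Cq : R →+* Q a b := algebraMap R (Q a b)

lemma Cq_eq (x : R) : Cq a b x = mkq a b (C x) := rfl

lemma degree_Fp : (Fp a b).degree = 2 := by
  have h : Fp a b = X ^ 2 - (C a * X + C b) := by ring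
  rw [h, degree_sub_eq_left_of_degree_lt] <;>
    rw [degree_X_pow] <;> try exact lt_of_le_of_lt (degree_linear_le) (by norm_num)
  rfl

lemma monic_Fp : (Fp a b).Monic := by
  have h : Fp a b = X ^ 2 - (C a * X + C b) := by ring
  rw [h]
  exact monic_X_pow_sub (lt_of_le_of_lt (degree_linear_le) (by norm_num))

lemma th_sq : (th a b) ^ 2 = Cq a b a * th a b + Cq a b b := by
  have : mkq a b (Fp a b) = 0 := by
    simp [mkq, Ideal.Quotient.eq_zero_iff_mem, Ideal.mem_span_singleton_self]
  have h2 : mkq a b (X ^ 2) - mkq a b (C a * X) - mkq a b (C b) = 0 := by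
    simpa [map_sub] using this
  have h3 : mkq a b (X ^ 2) = mkq a b (C a * X) + mkq a b (C b) := by linear_combination h2
  simpa [mkq, th, Cq_eq, map_mul, map_pow] using h3

lemma zero_coords {u v : R} (h : Cq a b u + Cq a b v * th a b = 0) : u = 0 ∧ v = 0 := by
  have hm : mkq a b (C u + C v * X) = 0 := by
    simpa [mkq, th, Cq_eq, map_add, map_mul] using h
  have hmem : (C u + C v * X) ∈ Ideal.span {Fp a b} :=
    (Ideal.Quotient.eq_zero_iff_mem).mp hm
  have hdvd : Fp a b ∣ (C u + C v * X) := Ideal.mem_span_singleton.mp hmem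
  have hz : (C u + C v * X : R[X]) = 0 := by
    by_contra hne
    have := degree_le_of_dvd hdvd hne
    rw [degree_Fp] at this
    have hle : (C u + C v * X : R[X]).degree ≤ 1 := by
      simpa [add_comm] using (degree_linear_le (a := v) (b := u))
    have : (2 : WithBot ℕ) ≤ 1 := le_trans this hle
    norm_num at this
  constructor
  · have := congrArg (fun p => Polynomial.coeff p 0) hz
    simpa using this
  · have := congrArg (fun p => Polynomial.coeff p 1) hz
    simpa using this

lemma exists_rep (x : Q a b) : ∃ p : R × R, x = Cq a b p.1 + Cq a b p.2 * th a b := by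
  obtain ⟨p, rfl⟩ := Ideal.Quotient.mk_surjective (I := Ideal.span {Fp a b}) x
  have key : p %ₘ (Fp a b) + (Fp a b) * (p /ₘ (Fp a b)) = p :=
    modByMonic_add_div p (Fp a b)
  have hmk : mkq a b p = mkq a b (p %ₘ Fp a b) := by
    conv_lhs => rw [← key]
    rw [map_add, map_mul]
    have : mkq a b (Fp a b) = 0 := by
      simp [mkq, Ideal.Quotient.eq_zero_iff_mem, Ideal.mem_span_singleton_self]
    rw [this]; ring
  have hdeg : (p %ₘ Fp a b).degree < 2 := by
    have := degree_modByMonic_lt p (monic_Fp a b)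
    rwa [degree_Fp] at this
  have hdeg1 : (p %ₘ Fp a b).degree ≤ 1 := by
    cases hc : (p %ₘ Fp a b).degree with
    | bot => exact bot_le
    | coe n =>
      rw [hc] at hdeg
      have e2 : (2 : WithBot ℕ) = ((2:ℕ) : WithBot ℕ) := rfl
      have e1 : (1 : WithBot ℕ) = ((1:ℕ) : WithBot ℕ) := rfl
      rw [e2] at hdeg
      rw [e1]
      exact WithBot.coe_le_coe.mpr (Nat.lt_succ_iff.mp (WithBot.coe_lt_coe.mp hdeg))
  refine ⟨⟨(p %ₘ Fp a b).coeff 0, (p %ₘ Fp a b).coeff 1⟩, ?_⟩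
  show Ideal.Quotient.mk _ p = _
  rw [show (Ideal.Quotient.mk (Ideal.span {Fp a b}) p : Q a b) = mkq a b p from rfl, hmk]
  conv_lhs => rw [eq_X_add_C_of_degree_le_one hdeg1]
  simp [mkq, th, Cq_eq, map_add, map_mul]
  ring

def co (x : Q a b) : R × R := Classical.choose (exists_rep a b x)

lemma co_spec (x : Q a b) : x = Cq a b (co a b x).1 + Cq a b (co a b x).2 * th a b :=
  Classical.choose_spec (exists_rep a b x)

lemma co_eq {x : Q a b} {u v : R} (h : x = Cq a b u + Cq a b v * th a b) :
    (co a b x).1 = u ∧ (co a b x).2 = v := by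
  have h2 := co_spec a b x
  have hz : Cq a b ((co a b x).1 - u) + Cq a b ((co a b x).2 - v) * th a b = 0 := by
    rw [map_sub, map_sub]
    linear_combination h - h2
  obtain ⟨h3, h4⟩ := zero_coords a b hz
  exact ⟨sub_eq_zero.mp h3, sub_eq_zero.mp h4⟩


lemma mul_co (c0 d0 c1 d1 : R) :
    (Cq a b c0 + Cq a b d0 * th a b) * (Cq a b c1 + Cq a b d1 * th a b) =
      Cq a b (c0 * c1 + b * d0 * d1) +
        Cq a b (c0 * d1 + c1 * d0 + a * d0 * d1) * th a b := by
  have h := th_sq a b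
  simp only [map_add, map_mul]
  linear_combination (Cq a b d0 * Cq a b d1) * h

/-- norm form -/
def Nf (x : Q a b) : R :=
  (co a b x).1 ^ 2 + a * (co a b x).1 * (co a b x).2 - b * (co a b x).2 ^ 2

/-- determinant form -/
def Df (x y : Q a b) : R :=
  (co a b x).1 * (co a b y).2 - (co a b y).1 * (co a b x).2

lemma Nf_co {x : Q a b} {u v : R} (h : x = Cq a b u + Cq a b v * th a b) :
    Nf a b x = u ^ 2 + a * u * v - b * v ^ 2 := by
  obtain ⟨h1, h2⟩ := co_eq a b h
  rw [Nf, h1, h2]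

lemma Df_co {x y : Q a b} {u v u' v' : R} (h : x = Cq a b u + Cq a b v * th a b)
    (h' : y = Cq a b u' + Cq a b v' * th a b) :
    Df a b x y = u * v' - u' * v := by
  obtain ⟨h1, h2⟩ := co_eq a b h
  obtain ⟨h3, h4⟩ := co_eq a b h'
  rw [Df, h1, h2, h3, h4]

lemma co_mul {x y : Q a b} {u v u' v' : R} (h : x = Cq a b u + Cq a b v * th a b)
    (h' : y = Cq a b u' + Cq a b v' * th a b) :
    x * y = Cq a b (u * u' + b * v * v') + Cq a b (u * v' + u' * v + a * v * v') * th a b := by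
  rw [h, h']; exact mul_co a b u v u' v'

lemma Nf_mul (x y : Q a b) : Nf a b (x * y) = Nf a b x * Nf a b y := by
  have hx := co_spec a b x
  have hy := co_spec a b y
  rw [Nf_co a b (co_mul a b hx hy), Nf_co a b hx, Nf_co a b hy]
  ring

lemma Df_mul (z x y : Q a b) : Df a b (z * x) (z * y) = Nf a b z * Df a b x y := by
  have hx := co_spec a b x
  have hy := co_spec a b y
  have hz := co_spec a b z
  rw [Df_co a b (co_mul a b hz hx) (co_mul a b hz hy), Nf_co a b hz, Df_co a b hx hy]
  ring

lemma eq_zero_of_co_zero {x : Q a b} (h : x = Cq a b 0 + Cq a b 0 * th a b) : x = 0 := by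
  rw [h]; simp

lemma Nf_eq_zero_iff (K : Type*) [Field K] [Algebra R K] [IsFractionRing R K]
    (hirr : Irreducible ((Fp a b).map (algebraMap R K))) (x : Q a b) :
    Nf a b x = 0 ↔ x = 0 := by
  have hx := co_spec a b x
  constructor
  · intro h
    have hN : (co a b x).1 ^ 2 + a * (co a b x).1 * (co a b x).2
        - b * (co a b x).2 ^ 2 = 0 := by
      rw [← Nf_co a b hx]; exact h
    generalize hu : (co a b x).1 = u at hx hN
    generalize hv : (co a b x).2 = v at hx hN
    have hv0 : v = 0 := by
      by_contra hvne
      have φinj : Function.Injective (algebraMap R K) := IsFractionRing.injective R K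
      have hvK : algebraMap R K v ≠ 0 := fun hc =>
        hvne (map_eq_zero_iff (algebraMap R K) φinj |>.mp hc)
      set φ := algebraMap R K with hφ
      set z : K := - φ u / φ v with hzdef
      have hNK : φ u ^ 2 + φ a * φ u * φ v - φ b * φ v ^ 2 = 0 := by
        have := congrArg φ hN
        simpa [map_add, map_sub, map_mul, map_pow] using this
      have hz2 : z ^ 2 - φ a * z - φ b = 0 := by
        have h2 : φ v ^ 2 * (z ^ 2 - φ a * z - φ b)
            = φ u ^ 2 + φ a * φ u * φ v - φ b * φ v ^ 2 := by
          rw [hzdef]; field_simp; ring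
        rw [hNK] at h2
        rcases mul_eq_zero.mp h2 with hc | hc
        · exact absurd (pow_eq_zero_iff (n := 2) (by norm_num) |>.mp hc) hvK
        · exact hc
      have hroot : ((Fp a b).map φ).IsRoot z := by
        have he : eval z ((Fp a b).map φ) = z ^ 2 - φ a * z - φ b := by
          simp [Fp, eval_map]
        rw [IsRoot, he, hz2]
      obtain ⟨q, hq⟩ := (dvd_iff_isRoot).mpr hroot
      have hdeg : ((Fp a b).map φ).degree = 2 := by
        rw [degree_map_eq_of_injective φinj]
        exact degree_Fp a b
      rcases hirr.isUnit_or_isUnit hq with hunit | hunit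
      · exact Polynomial.not_isUnit_X_sub_C z hunit
      · have hqd : q.degree = 0 := degree_eq_zero_of_isUnit hunit
        have hd1 : ((Fp a b).map φ).degree = 1 := by
          rw [hq, degree_mul, degree_X_sub_C, hqd]; rfl
        rw [hdeg] at hd1; norm_num at hd1
    have hu0 : u = 0 := by
      rw [hv0] at hN
      have h2 : u ^ 2 = 0 := by linear_combination hN
      exact pow_eq_zero_iff (n := 2) (by norm_num) |>.mp h2
    rw [hu0, hv0] at hx
    exact eq_zero_of_co_zero a b hx
  · intro h
    subst h
    have h0 : (0 : Q a b) = Cq a b 0 + Cq a b 0 * th a b := by simp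
    rw [Nf_co a b h0]; ring


variable (r : R)

/-- η = r + θ -/
def eta : Q a b := Cq a b r + th a b

lemma eta_rep : eta a b r = Cq a b r + Cq a b 1 * th a b := by
  simp [eta]

lemma smul_Q (s : R) (z : Q a b) : s • z = Cq a b s * z := by
  obtain ⟨p, rfl⟩ := Ideal.Quotient.mk_surjective (I := Ideal.span {Fp a b}) z
  show _ = Ideal.Quotient.mk (Ideal.span {Fp a b}) (C s) * Ideal.Quotient.mk _ p
  rw [← map_mul, ← Polynomial.smul_eq_C_mul]
  rfl

lemma eta_sq : (eta a b r) ^ 2 =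
    Cq a b (2 * r + a) * eta a b r + Cq a b (b - r * (r + a)) := by
  have h := th_sq a b
  simp only [eta, map_add, map_sub, map_mul, map_ofNat]
  linear_combination h

lemma th_mul_eta : th a b * eta a b r =
    Cq a b (b - r * (r + a)) + Cq a b (r + a) * eta a b r := by
  have h := th_sq a b
  simp only [eta, map_add, map_sub, map_mul]
  linear_combination h

lemma gen_rep (u s t : R) :
    s • Cq a b u + t • eta a b r = Cq a b (s * u + t * r) + Cq a b t * th a b := by
  rw [smul_Q, smul_Q]
  simp only [eta, map_add, map_mul]
  ring

lemma Cq_eq_zero_iff (x : R) : Cq a b x = 0 ↔ x = 0 := by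
  constructor
  · intro h
    have : Cq a b x + Cq a b 0 * th a b = 0 := by simpa using h
    exact (zero_coords a b this).1
  · intro h; simp [h]

lemma one_ne_zero_Q : (1 : Q a b) ≠ 0 := by
  intro h
  have : Cq a b 1 = 0 := by simpa using h
  exact one_ne_zero ((Cq_eq_zero_iff a b 1).mp this)

lemma eta_ne_zero : eta a b r ≠ 0 := by
  intro h
  have h2 : Cq a b r + Cq a b 1 * th a b = 0 := by
    rw [← eta_rep]; exact h
  exact one_ne_zero (zero_coords a b h2).2

/-- Construct an ideal of Q from an R-span of two elements closed under θ-multiplication. -/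
def spanIdeal (x y : Q a b)
    (hx : th a b * x ∈ (Submodule.span R {x, y} : Submodule R (Q a b)))
    (hy : th a b * y ∈ (Submodule.span R {x, y} : Submodule R (Q a b))) :
    Ideal (Q a b) where
  carrier := (Submodule.span R {x, y} : Submodule R (Q a b))
  add_mem' := fun h h' => Submodule.add_mem _ h h'
  zero_mem' := Submodule.zero_mem _
  smul_mem' := by
    intro q z hz
    have hz' : z ∈ (Submodule.span R {x, y} : Submodule R (Q a b)) := hz
    have hthz : th a b * z ∈ (Submodule.span R {x, y} : Submodule R (Q a b)) := by
      obtain ⟨s, t, rfl⟩ := Submodule.mem_span_pair.mp hz'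
      have : th a b * (s • x + t • y) = s • (th a b * x) + t • (th a b * y) := by
        simp only [smul_Q]; ring
      rw [this]
      exact Submodule.add_mem _ (Submodule.smul_mem _ _ hx) (Submodule.smul_mem _ _ hy)
    obtain ⟨p, hp⟩ := exists_rep a b q
    have : q • z = p.1 • z + p.2 • (th a b * z) := by
      rw [smul_eq_mul, hp]
      simp only [smul_Q]
      ring
    rw [this]
    exact Submodule.add_mem _ (Submodule.smul_mem _ _ hz') (Submodule.smul_mem _ _ hthz)

lemma spanIdeal_coe (x y : Q a b) (hx) (hy) :
    ((spanIdeal a b x y hx hy : Ideal (Q a b)) : Set (Q a b)) =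
      ((Submodule.span R {x, y} : Submodule R (Q a b)) : Set (Q a b)) := rfl

/-- main equality criterion -/
lemma ideal_eq_of_gens {α₁ α₂ : Q a b} {J J' : Ideal (Q a b)} {g₁ g₂ h₁ h₂ : Q a b}
    (hJ : (J : Set (Q a b)) = ((Submodule.span R {g₁, g₂} : Submodule R (Q a b)) : Set (Q a b)))
    (hJ' : (J' : Set (Q a b)) = ((Submodule.span R {h₁, h₂} : Submodule R (Q a b)) : Set (Q a b)))
    (f1 : α₁ * g₁ ∈ Ideal.span {α₂} * J') (f2 : α₁ * g₂ ∈ Ideal.span {α₂} * J')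
    (b1 : α₂ * h₁ ∈ Ideal.span {α₁} * J) (b2 : α₂ * h₂ ∈ Ideal.span {α₁} * J) :
    Ideal.span {α₁} * J = Ideal.span {α₂} * J' := by
  have key : ∀ (α β : Q a b) (I I' : Ideal (Q a b)) (g₁ g₂ : Q a b),
      (I : Set (Q a b)) = ((Submodule.span R {g₁, g₂} : Submodule R (Q a b)) : Set (Q a b)) →
      α * g₁ ∈ Ideal.span {β} * I' → α * g₂ ∈ Ideal.span {β} * I' →
      Ideal.span {α} * I ≤ Ideal.span {β} * I' := by
    intro α β I I' g₁ g₂ hI hf1 hf2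
    rw [Ideal.mul_le]
    intro x hx y hy
    obtain ⟨c, rfl⟩ := Ideal.mem_span_singleton.mp hx
    have hy' : y ∈ (Submodule.span R {g₁, g₂} : Submodule R (Q a b)) := by
      have : y ∈ (I : Set (Q a b)) := hy
      rw [hI] at this; exact this
    obtain ⟨s, t, rfl⟩ := Submodule.mem_span_pair.mp hy'
    have hrw : (α * c) * (s • g₁ + t • g₂)
        = (c * Cq a b s) * (α * g₁) + (c * Cq a b t) * (α * g₂) := by
      simp only [smul_Q]; ring
    rw [hrw]
    exact add_mem (Ideal.mul_mem_left _ _ hf1) (Ideal.mul_mem_left _ _ hf2)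
  exact le_antisymm (key α₁ α₂ J J' g₁ g₂ hJ f1 f2) (key α₂ α₁ J' J h₁ h₂ hJ' b1 b2)

lemma mem_mul_of_eq {α β z : Q a b} {I : Ideal (Q a b)} {g₁ g₂ : Q a b}
    (hI : (I : Set (Q a b)) = ((Submodule.span R {g₁, g₂} : Submodule R (Q a b)) : Set (Q a b)))
    {s t : R} (hz : z = s • g₁ + t • g₂) (he : α = β * z) :
    α ∈ Ideal.span {β} * I := by
  have hzI : z ∈ I := by
    have : z ∈ (I : Set (Q a b)) := by
      rw [hI]; exact Submodule.mem_span_pair.mpr ⟨s, t, hz.symm⟩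
    exact this
  rw [he]
  exact Ideal.mul_mem_mul (Ideal.mem_span_singleton_self β) hzI

end
end St12

section DVRLemmas
variable {R : Type*} [CommRing R] [IsDomain R] [IsDiscreteValuationRing R]

lemma St12.pow_dvd_pow_iff_le {π : R} (hπ : Irreducible π) {m n : ℕ} :
    π ^ m ∣ π ^ n ↔ m ≤ n := by
  constructor
  · intro h
    by_contra hlt
    push_neg at hlt
    obtain ⟨c, hc⟩ := h
    have h1 : π ^ n * π ^ (m - n) = π ^ m := by
      rw [← pow_add, Nat.add_sub_cancel' (le_of_lt hlt)]
    have h2 : π ^ n * (π ^ (m - n) * c) = π ^ n * 1 := by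
      rw [← mul_assoc, h1, ← hc, mul_one]
    have h3 := mul_left_cancel₀ (pow_ne_zero n hπ.ne_zero) h2
    have hup : IsUnit (π ^ (m - n)) := IsUnit.of_mul_eq_one c h3
    have : IsUnit π := by
      have hmn : m - n ≠ 0 := by omega
      exact (isUnit_pow_iff hmn).mp hup
    exact hπ.not_isUnit this
  · intro h; exact pow_dvd_pow π h

lemma St12.pow_assoc_eq {π : R} (hπ : Irreducible π) {m n : ℕ}
    (h : Associated (π ^ m) (π ^ n)) : m = n := by
  obtain ⟨u, hu⟩ := h
  refine IsDiscreteValuationRing.unit_mul_pow_congr_pow hπ hπ u 1 m n ?_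
  rw [Units.val_one, one_mul, ← hu]
  ring

end DVRLemmas
set_option linter.unusedSectionVars false
set_option maxHeartbeats 1000000

namespace St12

section Main
variable {R : Type*} [CommRing R] [IsDomain R] [IsDiscreteValuationRing R]

lemma part2 (K : Type*) [Field K] [Algebra R K] [IsFractionRing R K]
    {π : R} (hπ : Irreducible π) (a b r : R)
    (hirr : Irreducible ((Fp a b).map (algebraMap R K)))
    {k n : ℕ} (hkn : k ≠ n)
    (hkA : π ^ k ∣ (2 * r + a)) (hkT : π ^ (2 * k) ∣ (b - r * (r + a)))
    (hnA : π ^ n ∣ (2 * r + a)) (hnT : π ^ (2 * n) ∣ (b - r * (r + a)))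
    {J J' : Ideal (Q a b)}
    (hJ : (J : Set (Q a b)) =
      ((Submodule.span R {Cq a b (π ^ k), eta a b r} : Submodule R (Q a b)) : Set (Q a b)))
    (hJ' : (J' : Set (Q a b)) =
      ((Submodule.span R {Cq a b (π ^ n), eta a b r} : Submodule R (Q a b)) : Set (Q a b)))
    {α₁ α₂ : Q a b} (h1 : α₁ ≠ 0) (h2 : α₂ ≠ 0)
    (heq : Ideal.span {α₁} * J = Ideal.span {α₂} * J') : False := by
  -- membership of the generators
  have memgen : ∀ (j : ℕ) (I : Ideal (Q a b)),
      (I : Set (Q a b)) =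
        ((Submodule.span R {Cq a b (π ^ j), eta a b r} : Submodule R (Q a b)) : Set (Q a b)) →
      Cq a b (π ^ j) ∈ I ∧ eta a b r ∈ I := by
    intro j I hI
    constructor
    · rw [← SetLike.mem_coe, hI]
      exact Submodule.subset_span (by simp)
    · rw [← SetLike.mem_coe, hI]
      exact Submodule.subset_span (by simp)
  -- extraction of representations
  have ext : ∀ (β γ : Q a b) (I I' : Ideal (Q a b)) (j : ℕ),
      Ideal.span {β} * (I : Ideal (Q a b)) = Ideal.span {γ} * I' →
      (I' : Set (Q a b)) =
        ((Submodule.span R {Cq a b (π ^ j), eta a b r} : Submodule R (Q a b)) : Set (Q a b)) →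
      ∀ g : Q a b, g ∈ I →
      ∃ s t : R, γ * (Cq a b (s * π ^ j + t * r) + Cq a b t * th a b) = β * g := by
    intro β γ I I' j hIe hI' g hg
    have hmem : β * g ∈ Ideal.span {γ} * I' := by
      rw [← hIe]
      exact Ideal.mul_mem_mul (Ideal.mem_span_singleton_self β) hg
    obtain ⟨z, hzI', hz⟩ := Ideal.mem_span_singleton_mul.mp hmem
    have hzsp : z ∈ (Submodule.span R {Cq a b (π ^ j), eta a b r} : Submodule R (Q a b)) := by
      have : z ∈ (I' : Set (Q a b)) := hzI'
      rw [hI'] at this; exact this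
    obtain ⟨s, t, hst⟩ := Submodule.mem_span_pair.mp hzsp
    refine ⟨s, t, ?_⟩
    rw [← gen_rep, hst]
    exact hz
  obtain ⟨hGk, hek⟩ := memgen k J hJ
  obtain ⟨hGn, hen⟩ := memgen n J' hJ'
  obtain ⟨s1, t1, e1⟩ := ext α₁ α₂ J J' n heq hJ' _ hGk
  obtain ⟨s2, t2, e2⟩ := ext α₁ α₂ J J' n heq hJ' _ hek
  obtain ⟨s3, t3, e3⟩ := ext α₂ α₁ J' J k heq.symm hJ _ hGn
  obtain ⟨s4, t4, e4⟩ := ext α₂ α₁ J' J k heq.symm hJ _ hen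
  set x := Nf a b α₁ with hxdef
  set y := Nf a b α₂ with hydef
  have hx0 : x ≠ 0 := fun hc => h1 ((Nf_eq_zero_iff a b K hirr α₁).mp hc)
  have hy0 : y ≠ 0 := fun hc => h2 ((Nf_eq_zero_iff a b K hirr α₂).mp hc)
  -- representations as Cq + Cq * th
  have repg : ∀ j : ℕ, Cq a b (π ^ j) = Cq a b (π ^ j) + Cq a b 0 * th a b := by
    intro j; simp
  have repz : ∀ s t : R, ∀ j : ℕ,
      Cq a b (s * π ^ j + t * r) + Cq a b t * th a b
        = Cq a b (s * π ^ j + t * r) + Cq a b t * th a b := fun _ _ _ => rfl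
  -- D-invariant computations
  have hDfor : ∀ (β γ : Q a b) (j j' : ℕ) (s t s' t' : R),
      γ * (Cq a b (s * π ^ j' + t * r) + Cq a b t * th a b) = β * Cq a b (π ^ j) →
      γ * (Cq a b (s' * π ^ j' + t' * r) + Cq a b t' * th a b) = β * eta a b r →
      Nf a b β * π ^ j = Nf a b γ * ((s * t' - s' * t) * π ^ j') := by
    intro β γ j j' s t s' t' ha hb
    have d1 : Df a b (β * Cq a b (π ^ j)) (β * eta a b r)
        = Nf a b β * Df a b (Cq a b (π ^ j)) (eta a b r) := Df_mul a b β _ _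
    have d2 : Df a b (Cq a b (π ^ j)) (eta a b r) = π ^ j * 1 - r * 0 := by
      exact Df_co a b (repg j) (eta_rep a b r)
    have d3 : Df a b (γ * (Cq a b (s * π ^ j' + t * r) + Cq a b t * th a b))
          (γ * (Cq a b (s' * π ^ j' + t' * r) + Cq a b t' * th a b))
        = Nf a b γ * ((s * π ^ j' + t * r) * t' - (s' * π ^ j' + t' * r) * t) := by
      rw [Df_mul]
      congr 1
      exact Df_co a b rfl rfl
    rw [ha, hb] at d3
    rw [d3] at d1
    rw [d2] at d1
    linear_combination -d1
  have hD1 := hDfor α₁ α₂ k n s1 t1 s2 t2 e1 e2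
  have hD2 := hDfor α₂ α₁ n k s3 t3 s4 t4 e3 e4
  have hA1 : Associated (x * π ^ k) (y * π ^ n) := by
    refine associated_of_dvd_dvd ?_ ?_
    · exact ⟨s3 * t4 - s4 * t3, by linear_combination hD2⟩
    · exact ⟨s1 * t2 - s2 * t1, by linear_combination hD1⟩
  -- N-invariant computations
  have hNfor : ∀ (β γ : Q a b) (j j' : ℕ) (s t : R),
      π ^ j' ∣ (2 * r + a) → π ^ (2 * j') ∣ (b - r * (r + a)) →
      γ * (Cq a b (s * π ^ j' + t * r) + Cq a b t * th a b) = β * Cq a b (π ^ j) →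
      ∃ c : R, Nf a b β * π ^ (2 * j) = Nf a b γ * (π ^ (2 * j') * c) := by
    intro β γ j j' s t hdA hdT ha
    obtain ⟨A0, hA0⟩ := hdA
    obtain ⟨T0, hT0⟩ := hdT
    have n1 : Nf a b (β * Cq a b (π ^ j)) = Nf a b β * Nf a b (Cq a b (π ^ j)) := Nf_mul a b _ _
    have n2 : Nf a b (Cq a b (π ^ j)) = (π ^ j) ^ 2 + a * (π ^ j) * 0 - b * 0 ^ 2 :=
      Nf_co a b (repg j)
    have n3 : Nf a b (γ * (Cq a b (s * π ^ j' + t * r) + Cq a b t * th a b))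
        = Nf a b γ * ((s * π ^ j' + t * r) ^ 2 + a * (s * π ^ j' + t * r) * t - b * t ^ 2) := by
      rw [Nf_mul]
      congr 1
      exact Nf_co a b rfl
    have n4 : (s * π ^ j' + t * r) ^ 2 + a * (s * π ^ j' + t * r) * t - b * t ^ 2
        = π ^ (2 * j') * (s ^ 2 + s * t * A0 - t ^ 2 * T0) := by
      linear_combination (s * t * π ^ j') * hA0 - t ^ 2 * hT0
    refine ⟨s ^ 2 + s * t * A0 - t ^ 2 * T0, ?_⟩
    have := congrArg (Nf a b) ha
    rw [n1, n2, n3, n4] at this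
    linear_combination -this
  obtain ⟨c1, hN1⟩ := hNfor α₁ α₂ k n s1 t1 hnA hnT e1
  obtain ⟨c2, hN2⟩ := hNfor α₂ α₁ n k s3 t3 hkA hkT e3
  have hA2 : Associated (x * π ^ (2 * k)) (y * π ^ (2 * n)) := by
    refine associated_of_dvd_dvd ?_ ?_
    · exact ⟨c2, by linear_combination hN2⟩
    · exact ⟨c1, by linear_combination hN1⟩
  -- conclude
  have sq := hA1.mul_mul hA1
  have l1 : (x * π ^ k) * (x * π ^ k) = (x * π ^ (2 * k)) * x := by ring
  have l2 : (y * π ^ n) * (y * π ^ n) = (y * π ^ (2 * n)) * y := by ring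
  rw [l1, l2] at sq
  have m1 := (hA2.symm).mul_right y
  have comb := sq.trans m1
  have hP0 : x * π ^ (2 * k) ≠ 0 := mul_ne_zero hx0 (pow_ne_zero _ hπ.ne_zero)
  have hxy : Associated x y := Associated.of_mul_left comb (Associated.refl _) hP0
  have fin : Associated (π ^ k) (π ^ n) := Associated.of_mul_left hA1 hxy hx0
  exact hkn (pow_assoc_eq hπ fin)

end Main
end St12
set_option linter.unusedSectionVars false
set_option maxHeartbeats 1000000

namespace St12

section Main1
variable {R : Type*} [CommRing R] [IsDomain R] [IsDiscreteValuationRing R]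

/-- the R-span of {u, r+θ} is an ideal provided u ∣ T -/
lemma exists_spanIdeal (a b r u : R) (hdvd : u ∣ (b - r * (r + a))) :
    ∃ J' : Ideal (Q a b), (J' : Set (Q a b)) =
      ((Submodule.span R {Cq a b u, eta a b r} : Submodule R (Q a b)) : Set (Q a b)) := by
  obtain ⟨T0, hT0⟩ := hdvd
  have hx : th a b * Cq a b u ∈ (Submodule.span R {Cq a b u, eta a b r} : Submodule R (Q a b)) := by
    refine Submodule.mem_span_pair.mpr ⟨-r, u, ?_⟩
    rw [smul_Q, smul_Q]
    simp only [eta, map_neg, map_add]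
    ring
  have hy : th a b * eta a b r ∈
      (Submodule.span R {Cq a b u, eta a b r} : Submodule R (Q a b)) := by
    refine Submodule.mem_span_pair.mpr ⟨T0, r + a, ?_⟩
    rw [smul_Q, smul_Q, th_mul_eta]
    have hq : Cq a b (b - r * (r + a)) = Cq a b T0 * Cq a b u := by
      rw [← map_mul]
      exact congrArg _ (by rw [hT0]; ring)
    rw [hq]
  exact ⟨spanIdeal a b (Cq a b u) (eta a b r) hx hy, rfl⟩

lemma part1 (K : Type*) [Field K] [Algebra R K] [IsFractionRing R K]
    {π : R} (hπ : Irreducible π) (a b r : R)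
    (hirr : Irreducible ((Fp a b).map (algebraMap R K)))
    (n : ℕ) (J : Ideal (Q a b))
    (hJ : (J : Set (Q a b)) =
      ((Submodule.span R {Cq a b (π ^ n), eta a b r} : Submodule R (Q a b)) : Set (Q a b))) :
    ∃ (k : ℕ) (J' : Ideal (Q a b)),
      π ^ k ∣ (2 * r + a) ∧ π ^ (2 * k) ∣ (b - r * (r + a)) ∧
      (J' : Set (Q a b)) =
        ((Submodule.span R {Cq a b (π ^ k), eta a b r} : Submodule R (Q a b)) : Set (Q a b)) ∧
      ∃ α₁ α₂ : Q a b, α₁ ≠ 0 ∧ α₂ ≠ 0 ∧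
        Ideal.span {α₁} * J = Ideal.span {α₂} * J' := by
  have hsqQ := eta_sq a b r
  -- T ≠ 0
  have hTne : (b - r * (r + a)) ≠ 0 := by
    intro hT0
    have hNeta : Nf a b (eta a b r) = r ^ 2 + a * r * 1 - b * 1 ^ 2 := Nf_co a b (eta_rep a b r)
    have : Nf a b (eta a b r) = 0 := by rw [hNeta]; linear_combination -hT0
    exact eta_ne_zero a b r ((Nf_eq_zero_iff a b K hirr _).mp this)
  -- eta ∈ J
  have hηJ : eta a b r ∈ J := by
    rw [← SetLike.mem_coe, hJ]
    exact Submodule.subset_span (by simp)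
  -- π^n ∣ T
  have hTdvd : π ^ n ∣ (b - r * (r + a)) := by
    have h1 : th a b * eta a b r ∈ J := Ideal.mul_mem_left J _ hηJ
    have h2 : Cq a b (r + a) * eta a b r ∈ J := Ideal.mul_mem_left J _ hηJ
    have h3 : Cq a b (b - r * (r + a)) ∈ J := by
      have e : Cq a b (b - r * (r + a)) = th a b * eta a b r - Cq a b (r + a) * eta a b r := by
        linear_combination -th_mul_eta a b r
      rw [e]; exact sub_mem h1 h2
    rw [← SetLike.mem_coe, hJ, SetLike.mem_coe] at h3
    obtain ⟨s, t, hst⟩ := Submodule.mem_span_pair.mp h3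
    rw [gen_rep] at hst
    have c1 := co_eq a b hst.symm
    have c2 := co_eq a b (show Cq a b (b - r * (r + a))
      = Cq a b (b - r * (r + a)) + Cq a b 0 * th a b by simp)
    have ht0 : t = 0 := by rw [c1.2] at c2; exact c2.2
    have hTs : b - r * (r + a) = s * π ^ n + t * r := by rw [c1.1] at c2; exact c2.1.symm
    exact ⟨s, by rw [hTs, ht0]; ring⟩
  obtain ⟨w, uT, hTw⟩ := IsDiscreteValuationRing.eq_unit_mul_pow_irreducible hTne hπ
  have hπwT : π ^ w ∣ (b - r * (r + a)) := ⟨↑uT, by rw [hTw]; ring⟩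
  have hnw : n ≤ w := by
    refine (pow_dvd_pow_iff_le hπ).mp ?_
    rw [hTw] at hTdvd
    exact Units.dvd_mul_left.mp hTdvd
  by_cases hc1 : π ^ n ∣ (2 * r + a) ∧ π ^ (2 * n) ∣ (b - r * (r + a))
  · exact ⟨n, J, hc1.1, hc1.2, hJ, 1, 1, one_ne_zero_Q a b, one_ne_zero_Q a b, rfl⟩
  by_cases hc2 : π ^ (w - n) ∣ (2 * r + a)
  · -- k = w - n
    have hw2n : w < 2 * n := by
      by_contra hge
      push_neg at hge
      exact hc1 ⟨dvd_trans (pow_dvd_pow π (by omega)) hc2,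
        dvd_trans (pow_dvd_pow π (by omega)) hπwT⟩
    obtain ⟨J', hJ'c⟩ := exists_spanIdeal a b r (π ^ (w - n))
      (dvd_trans (pow_dvd_pow π (by omega)) hπwT)
    refine ⟨w - n, J', hc2, dvd_trans (pow_dvd_pow π (by omega)) hπwT, hJ'c,
      Cq a b (π ^ (w - n)), eta a b r,
      fun h0 => pow_ne_zero _ hπ.ne_zero ((Cq_eq_zero_iff a b _).mp h0),
      eta_ne_zero a b r, ?_⟩
    obtain ⟨A0, hA0⟩ := hc2
    -- mapped facts
    have ppow : π ^ w = π ^ (w - n) * π ^ n := by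
      rw [← pow_add]; congr 1; omega
    have fT : Cq a b (b - r * (r + a))
        = Cq a b (↑uT) * (Cq a b (π ^ (w - n)) * Cq a b (π ^ n)) := by
      rw [← map_mul, ← map_mul]
      exact congrArg _ (by rw [hTw, ppow])
    have fA : Cq a b (2 * r + a) = Cq a b (π ^ (w - n)) * Cq a b A0 := by
      have h := congrArg (Cq a b) hA0
      simp only [map_mul] at h
      linear_combination h
    have fu : Cq a b ((↑(uT⁻¹) : R)) * Cq a b (↑uT : R) = 1 := by
      rw [← map_mul]
      have huu : ((↑(uT⁻¹) : R)) * (↑uT : R) = 1 := Units.inv_mul uT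
      rw [huu, map_one]
    have hsq' : (eta a b r) ^ 2
        = Cq a b (π ^ (w - n)) * Cq a b A0 * eta a b r
          + Cq a b (↑uT : R) * (Cq a b (π ^ (w - n)) * Cq a b (π ^ n)) := by
      rw [hsqQ, fT, fA]
    refine ideal_eq_of_gens a b hJ hJ'c ?_ ?_ ?_ ?_
    · -- f1 : Cq π^(w-n) * Cq π^n ∈ span{eta} * J'
      refine mem_mul_of_eq a b hJ'c
        (s := -((↑(uT⁻¹) : R) * A0)) (t := (↑(uT⁻¹) : R)) rfl ?_
      rw [smul_Q, smul_Q]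
      simp only [map_neg, map_mul]
      linear_combination (-(Cq a b ((↑(uT⁻¹) : R)))) * hsq'
        - (Cq a b (π ^ (w - n)) * Cq a b (π ^ n)) * fu
    · -- f2 : Cq π^(w-n) * eta ∈ span{eta} * J'
      refine mem_mul_of_eq a b hJ'c (s := (1 : R)) (t := (0 : R)) rfl ?_
      rw [smul_Q, smul_Q]
      simp only [map_one, map_zero]
      ring
    · -- b1 : eta * Cq π^(w-n) ∈ span{Cq π^(w-n)} * J
      refine mem_mul_of_eq a b hJ (s := (0 : R)) (t := (1 : R)) rfl ?_
      rw [smul_Q, smul_Q]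
      simp only [map_one, map_zero]
      ring
    · -- b2 : eta * eta ∈ span{Cq π^(w-n)} * J
      refine mem_mul_of_eq a b hJ (s := (↑uT : R)) (t := A0) rfl ?_
      rw [smul_Q, smul_Q]
      linear_combination hsq'
  · -- k = s0 = v(A)
    have hAne : (2 * r + a) ≠ 0 := fun h0 => hc2 (by rw [h0]; exact dvd_zero _)
    obtain ⟨s0, uA, hAw⟩ := IsDiscreteValuationRing.eq_unit_mul_pow_irreducible hAne hπ
    have hkA : π ^ s0 ∣ (2 * r + a) := ⟨↑uA, by rw [hAw]; ring⟩
    have hswn : s0 + n < w := by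
      by_contra hge
      push_neg at hge
      exact hc2 (dvd_trans (pow_dvd_pow π (by omega)) hkA)
    have hsn : s0 < n := by
      by_contra hge
      push_neg at hge
      exact hc1 ⟨dvd_trans (pow_dvd_pow π hge) hkA,
        dvd_trans (pow_dvd_pow π (by omega)) hπwT⟩
    have hkT : π ^ (2 * s0) ∣ (b - r * (r + a)) :=
      dvd_trans (pow_dvd_pow π (by omega)) hπwT
    obtain ⟨J', hJ'c⟩ := exists_spanIdeal a b r (π ^ s0)
      (dvd_trans (pow_dvd_pow π (by omega)) hπwT)
    -- scalar data
    have huA : ((↑(uA⁻¹) : R)) * (↑uA : R) = 1 := Units.inv_mul uA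
    obtain ⟨T2, hTfac⟩ : ∃ T2, b - r * (r + a) = π ^ n * π ^ s0 * T2 := by
      refine ⟨(↑uT : R) * π ^ (w - (n + s0)), ?_⟩
      have ppow2 : π ^ w = π ^ n * π ^ s0 * π ^ (w - (n + s0)) := by
        rw [← pow_add, ← pow_add]; congr 1; omega
      rw [hTw, ppow2]
      ring
    obtain ⟨c, hcu⟩ : ∃ c, c * (↑uA : R) = T2 + 1 :=
      ⟨(T2 + 1) * (↑(uA⁻¹) : R), by linear_combination (T2 + 1) * huA⟩
    have q1 : π ^ s0 * π ^ (n - s0) = π ^ n := by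
      rw [← pow_add]; congr 1; omega
    have hAfac : 2 * r + a = π ^ s0 * (↑uA : R) := by rw [hAw]; ring
    -- epsilon and its inverse
    have hεunit : IsUnit (1 + π ^ (n - s0) * c ^ 2) := by
      have hnu : (-(π ^ (n - s0) * c ^ 2)) ∈ nonunits R := by
        intro hu
        apply hπ.not_isUnit
        refine isUnit_of_dvd_unit ?_ hu
        refine dvd_neg.mpr (dvd_mul_of_dvd_left (dvd_pow_self π ?_) _)
        omega
      have := IsLocalRing.isUnit_one_sub_self_of_mem_nonunits _ hnu
      simpa [sub_neg_eq_add] using this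
    obtain ⟨εu, hεu⟩ := hεunit
    have fε : ((↑(εu⁻¹) : R)) * (1 + π ^ (n - s0) * c ^ 2) = 1 := by
      rw [← hεu]; exact Units.inv_mul εu
    -- scalar key identity
    have skey : (π ^ n * c) * (π ^ n * c) + (π ^ n * c) * (π ^ s0 * (↑uA : R))
          - π ^ n * π ^ s0 * T2
        = π ^ n * π ^ s0 * (1 + π ^ (n - s0) * c ^ 2) := by
      linear_combination (π ^ n * π ^ s0) * hcu - (π ^ n * c ^ 2) * q1
    -- mapped facts
    have mq1 : Cq a b (π ^ s0) * Cq a b (π ^ (n - s0)) = Cq a b (π ^ n) := by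
      have h := congrArg (Cq a b) q1
      simp only [map_mul] at h
      linear_combination h
    have mA : Cq a b (2 * r + a) = Cq a b (π ^ s0) * Cq a b (↑uA : R) := by
      have h := congrArg (Cq a b) hAfac
      simp only [map_mul] at h
      linear_combination h
    have mT : Cq a b (b - r * (r + a)) = Cq a b (π ^ n) * Cq a b (π ^ s0) * Cq a b T2 := by
      have h := congrArg (Cq a b) hTfac
      simp only [map_mul] at h
      linear_combination h
    have mcu : Cq a b c * Cq a b (↑uA : R) = Cq a b T2 + 1 := by
      have h := congrArg (Cq a b) hcu
      simp only [map_add, map_mul, map_one] at h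
      linear_combination h
    have mfε : Cq a b ((↑(εu⁻¹) : R))
        * (1 + Cq a b (π ^ (n - s0)) * (Cq a b c * Cq a b c)) = 1 := by
      have h := congrArg (Cq a b) fε
      simp only [pow_two, map_add, map_mul, map_one] at h
      linear_combination h
    have mkey : Cq a b (π ^ n) * Cq a b c * (Cq a b (π ^ n) * Cq a b c)
          + Cq a b (π ^ n) * Cq a b c * (Cq a b (π ^ s0) * Cq a b (↑uA : R))
          - Cq a b (π ^ n) * Cq a b (π ^ s0) * Cq a b T2
        = Cq a b (π ^ n) * Cq a b (π ^ s0)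
          * (1 + Cq a b (π ^ (n - s0)) * (Cq a b c * Cq a b c)) := by
      have h := congrArg (Cq a b) skey
      simp only [pow_two, map_add, map_sub, map_mul, map_one] at h
      linear_combination h
    have mP : Cq a b (π ^ n * c) = Cq a b (π ^ n) * Cq a b c := map_mul _ _ _
    set α₂ : Q a b := Cq a b (π ^ n * c) + eta a b r with hα₂
    have hα₂ne : α₂ ≠ 0 := by
      intro h0
      have : Cq a b (π ^ n * c + r) + Cq a b 1 * th a b = 0 := by
        rw [← h0, hα₂]
        simp only [eta, map_add, map_one]
        ring
      exact one_ne_zero (zero_coords a b this).2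
    refine ⟨s0, J', hkA, hkT, hJ'c, Cq a b (π ^ s0), α₂,
      fun h0 => pow_ne_zero _ hπ.ne_zero ((Cq_eq_zero_iff a b _).mp h0), hα₂ne, ?_⟩
    refine ideal_eq_of_gens a b hJ hJ'c ?_ ?_ ?_ ?_
    · -- f1 : Cq π^s0 * Cq π^n = α₂ * z1
      refine mem_mul_of_eq a b hJ'c
        (s := (↑(εu⁻¹) : R) * (π ^ (n - s0) * c + (↑uA : R))) (t := -(↑(εu⁻¹) : R)) rfl ?_
      rw [smul_Q, smul_Q]
      simp only [map_neg, map_mul, map_add]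
      linear_combination
        (- (Cq a b (π ^ n) * Cq a b (π ^ s0))) * mfε
        - (Cq a b ((↑(εu⁻¹) : R)) * ((Cq a b (π ^ (n - s0)) * Cq a b c + Cq a b (↑uA : R))
            * Cq a b (π ^ s0) - eta a b r)) * mP
        - (Cq a b ((↑(εu⁻¹) : R)) * (Cq a b (π ^ n) * Cq a b c + eta a b r) * Cq a b c) * mq1
        + (Cq a b ((↑(εu⁻¹) : R)) * eta a b r) * mA
        + (Cq a b ((↑(εu⁻¹) : R))) * mT
        - (Cq a b ((↑(εu⁻¹) : R))) * mkey
        + (Cq a b ((↑(εu⁻¹) : R))) * hsqQ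
    · -- f2 : Cq π^s0 * eta = α₂ * z2
      refine mem_mul_of_eq a b hJ'c
        (s := -((↑(εu⁻¹) : R) * T2)) (t := (↑(εu⁻¹) : R) * c) rfl ?_
      rw [smul_Q, smul_Q]
      simp only [map_neg, map_mul]
      linear_combination
        (- (Cq a b ((↑(εu⁻¹) : R)) * (Cq a b c * eta a b r - Cq a b T2 * Cq a b (π ^ s0)))) * mP
        - (Cq a b ((↑(εu⁻¹) : R)) * Cq a b c) * hsqQ
        - (Cq a b ((↑(εu⁻¹) : R)) * Cq a b c * eta a b r) * mA
        - (Cq a b ((↑(εu⁻¹) : R)) * Cq a b c) * mT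
        - (Cq a b ((↑(εu⁻¹) : R)) * Cq a b (π ^ s0) * eta a b r) * mcu
        + (Cq a b ((↑(εu⁻¹) : R)) * Cq a b c * Cq a b c * eta a b r) * mq1
        - (Cq a b (π ^ s0) * eta a b r) * mfε
    · -- b1 : α₂ * Cq π^s0 = Cq π^s0 * (c•Cq π^n + 1•eta)
      refine mem_mul_of_eq a b hJ (s := c) (t := (1 : R)) rfl ?_
      rw [smul_Q, smul_Q]
      simp only [map_one]
      linear_combination (Cq a b (π ^ s0)) * mP
    · -- b2 : α₂ * eta = Cq π^s0 * (T2•Cq π^n + (π^(n-s0)*c + uA)•eta)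
      refine mem_mul_of_eq a b hJ
        (s := T2) (t := π ^ (n - s0) * c + (↑uA : R)) rfl ?_
      rw [smul_Q, smul_Q]
      simp only [map_mul, map_add]
      linear_combination hsqQ + mT + (eta a b r) * mA
        - (eta a b r * Cq a b c) * mq1 + (eta a b r) * mP

end Main1
end St12

/-- Let `R` be a DVR with uniformizer `π` and valuation `v`,
`f(x) = x² − ax − b ∈ R[x]` monic irreducible over the fraction field `K`, `θ` the
class of `x` in `R[θ] := R[x]/(f)`, and fix `r ∈ R`; write `T := b − r(r + a)`.
Consider the `R`-submodules `J_n := Rπⁿ + R(r + θ)` of `R[θ]` that are ideals of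
`R[θ]`. Then every such ideal `J_n` is equivalent to some `J_k` with
`0 ≤ k ≤ min{v(2r + a), ⌊½v(T)⌋}` (i.e. `π^k ∣ 2r + a` and `π^(2k) ∣ T`), and for
distinct `k, n` in this range the corresponding ideals are not equivalent. -/
theorem ideal_classes_J_n
    (R : Type*) [CommRing R] [IsDomain R] [IsDiscreteValuationRing R]
    (K : Type*) [Field K] [Algebra R K] [IsFractionRing R K]
    (π : R) (hπ : Irreducible π)
    (a b : R) (f : R[X]) (hf : f = X ^ 2 - C a * X - C b)
    (hirr : Irreducible (f.map (algebraMap R K)))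
    (θ : R[X] ⧸ Ideal.span {f}) (hθ : θ = Ideal.Quotient.mk (Ideal.span {f}) X)
    (r : R) :
    (∀ (n : ℕ) (J : Ideal (R[X] ⧸ Ideal.span {f})),
      (J : Set (R[X] ⧸ Ideal.span {f})) =
        (Submodule.span R
          {algebraMap R (R[X] ⧸ Ideal.span {f}) (π ^ n),
            algebraMap R (R[X] ⧸ Ideal.span {f}) r + θ} :
          Submodule R (R[X] ⧸ Ideal.span {f})) →
      ∃ (k : ℕ) (J' : Ideal (R[X] ⧸ Ideal.span {f})),
        π ^ k ∣ (2 * r + a) ∧ π ^ (2 * k) ∣ (b - r * (r + a)) ∧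
        (J' : Set (R[X] ⧸ Ideal.span {f})) =
          (Submodule.span R
            {algebraMap R (R[X] ⧸ Ideal.span {f}) (π ^ k),
              algebraMap R (R[X] ⧸ Ideal.span {f}) r + θ} :
            Submodule R (R[X] ⧸ Ideal.span {f})) ∧
        ∃ α₁ α₂ : R[X] ⧸ Ideal.span {f}, α₁ ≠ 0 ∧ α₂ ≠ 0 ∧
          Ideal.span {α₁} * J = Ideal.span {α₂} * J') ∧
    (∀ k n : ℕ, k ≠ n →
      π ^ k ∣ (2 * r + a) → π ^ (2 * k) ∣ (b - r * (r + a)) →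
      π ^ n ∣ (2 * r + a) → π ^ (2 * n) ∣ (b - r * (r + a)) →
      ∀ J J' : Ideal (R[X] ⧸ Ideal.span {f}),
        (J : Set (R[X] ⧸ Ideal.span {f})) =
          (Submodule.span R
            {algebraMap R (R[X] ⧸ Ideal.span {f}) (π ^ k),
              algebraMap R (R[X] ⧸ Ideal.span {f}) r + θ} :
            Submodule R (R[X] ⧸ Ideal.span {f})) →
        (J' : Set (R[X] ⧸ Ideal.span {f})) =
          (Submodule.span R
            {algebraMap R (R[X] ⧸ Ideal.span {f}) (π ^ n),
              algebraMap R (R[X] ⧸ Ideal.span {f}) r + θ} :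
            Submodule R (R[X] ⧸ Ideal.span {f})) →
        ¬ ∃ α₁ α₂ : R[X] ⧸ Ideal.span {f}, α₁ ≠ 0 ∧ α₂ ≠ 0 ∧
            Ideal.span {α₁} * J = Ideal.span {α₂} * J') := by
  subst hf
  subst hθ
  constructor
  · intro n J hJ
    exact St12.part1 K hπ a b r hirr n J hJ
  · intro k n hkn hkA hkT hnA hnT J J' hJ hJ' h
    obtain ⟨α₁, α₂, h1, h2, heq⟩ := h
    exact St12.part2 K hπ a b r hirr hkn hkA hkT hnA hnT hJ hJ' h1 h2 heq
end

section
/- Let R be a discrete valuation ring with uniformizer π in which 2 is a unit, let f(x) = x² − ax − b ∈ R[x] be monic irreducible over the fraction field K, and let θ be the class of x in R[θ] := R[x]/(f). Then every nonzero ideal of R[θ] is equivalent to an ideal of the form Rπᵏ + R(θ − a/2) for some integer k ≥ 0 (for which this R-submodule is an ideal of R[θ]). -/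
open Polynomial

section Aux

variable {R : Type*} [CommRing R] {S : Type*} [CommRing S] [Algebra R S]

/-- Key multiplication identity in `S`, given coordinate identities in `R`. -/
lemma keyIdentity (δ : S) (D : R) (hδ2 : δ * δ = algebraMap R S D)
    (ps pk g c₀ A B u t : R)
    (E1 : A * ps + B * g = t * ps)
    (E2 : A * (ps * g) + B * D = ps * (u * pk + t * c₀)) :
    (algebraMap R S g + δ) * (algebraMap R S A * algebraMap R S ps + algebraMap R S B * δ)
      = algebraMap R S ps *
        (algebraMap R S u * algebraMap R S pk + algebraMap R S t * (algebraMap R S c₀ + δ)) := by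
  have E1S := congrArg (algebraMap R S) E1
  have E2S := congrArg (algebraMap R S) E2
  simp only [map_add, map_mul] at E1S E2S
  linear_combination (algebraMap R S B) * hδ2 + E2S + δ * E1S

/-- Build an ideal of `S` out of a `δ`-stable `R`-submodule span. -/
lemma mkIdeal (δ : S) (D : R) (hδ2 : δ * δ = algebraMap R S D)
    (hrep : ∀ z : S, ∃ r s : R, z = algebraMap R S r + algebraMap R S s * δ)
    (d dq : R) (hdq : D = dq * d) :
    ∃ J' : Ideal S, (J' : Set S) =
      (Submodule.span R {algebraMap R S d, δ} : Submodule R S) := by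
  set M : Submodule R S := Submodule.span R {algebraMap R S d, δ} with hM
  have hstab : ∀ x ∈ M, δ * x ∈ M := by
    intro x hx
    rw [hM, Submodule.mem_span_pair] at hx
    obtain ⟨P, Q, rfl⟩ := hx
    rw [hM, Submodule.mem_span_pair]
    refine ⟨Q * dq, P * d, ?_⟩
    simp only [Algebra.smul_def, map_mul]
    have hdqS := congrArg (algebraMap R S) hdq
    simp only [map_mul] at hdqS
    linear_combination (-(algebraMap R S Q)) * hδ2 - (algebraMap R S Q) * hdqS
  refine ⟨{ carrier := M
            add_mem' := fun h1 h2 => M.add_mem h1 h2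
            zero_mem' := M.zero_mem
            smul_mem' := ?_ }, rfl⟩
  intro z x hx
  obtain ⟨r, s, rfl⟩ := hrep z
  have : (algebraMap R S r + algebraMap R S s * δ) • x
      = r • x + s • (δ * x) := by
    simp only [Algebra.smul_def, Algebra.algebraMap_self, RingHom.id_apply, smul_eq_mul]
    ring
  rw [this]
  exact M.add_mem (M.smul_mem r hx) (M.smul_mem s (hstab x hx))

lemma aux_main [IsDomain R] [IsDiscreteValuationRing R] [IsDomain S]
    (π : R) (hπ : Irreducible π) (h2 : IsUnit (2 : R))
    (δ : S) (D : R)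
    (hδ2 : δ * δ = algebraMap R S D)
    (hrep : ∀ z : S, ∃ r s : R, z = algebraMap R S r + algebraMap R S s * δ)
    (huniq : ∀ r s : R, algebraMap R S r + algebraMap R S s * δ = 0 → r = 0 ∧ s = 0)
    (hDnsq : ∀ c : R, c * c ≠ D) :
    ∀ J : Ideal S, J ≠ ⊥ →
      ∃ (k : ℕ) (J' : Ideal S),
        (J' : Set S) =
          (Submodule.span R {algebraMap R S (π ^ k), δ} : Submodule R S) ∧
        ∃ α₁ α₂ : S, α₁ ≠ 0 ∧ α₂ ≠ 0 ∧
          Ideal.span {α₁} * J = Ideal.span {α₂} * J' := by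
  intro J hJ
  set ι := algebraMap R S with hι
  -- injectivity and basic cancellation facts
  have hinj : ∀ r : R, ι r = 0 → r = 0 := by
    intro r hr
    exact (huniq r 0 (by simpa using hr)).1
  have hne : ∀ r : R, r ≠ 0 → ι r ≠ 0 := fun r hr h0 => hr (hinj r h0)
  have huniq2 : ∀ r s r' s' : R, ι r + ι s * δ = ι r' + ι s' * δ → r = r' ∧ s = s' := by
    intro r s r' s' h
    have h0 : ι (r - r') + ι (s - s') * δ = 0 := by
      simp only [map_sub]; linear_combination h
    obtain ⟨h1, h2⟩ := huniq _ _ h0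
    exact ⟨sub_eq_zero.mp h1, sub_eq_zero.mp h2⟩
  have hπ0 : (π : R) ≠ 0 := hπ.ne_zero
  -- Step 1 : a nonzero element of J of the form ι N
  obtain ⟨ξ, hξJ, hξ0⟩ := Submodule.exists_mem_ne_zero_of_ne_bot hJ
  obtain ⟨r₀, s₀, rfl⟩ := hrep ξ
  set N : R := r₀ * r₀ - D * (s₀ * s₀) with hN
  have hNfac : ι N = (ι r₀ + ι s₀ * δ) * (ι r₀ + ι (-s₀) * δ) := by
    simp only [hN, map_sub, map_mul, map_neg]
    linear_combination (ι s₀ * ι s₀) * hδ2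
  have hNJ : ι N ∈ J := by
    rw [hNfac]; exact J.mul_mem_right _ hξJ
  have hN0 : N ≠ 0 := by
    intro h0
    rw [h0, map_zero] at hNfac
    rcases mul_eq_zero.mp hNfac.symm with h | h
    · exact hξ0 h
    · obtain ⟨h1, h2⟩ := huniq _ _ h
      apply hξ0
      rw [h1, neg_eq_zero.mp h2]; simp
  -- Step 2 : the ideal of "constant" elements of J
  set I₁ : Ideal R := J.comap (algebraMap R S) with hI₁
  have hI₁ne : I₁ ≠ ⊥ := by
    intro hbot
    have : N ∈ I₁ := by rwa [hI₁, Ideal.mem_comap]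
    rw [hbot] at this
    exact hN0 (by simpa using this)
  obtain ⟨n, hn⟩ := IsDiscreteValuationRing.ideal_eq_span_pow_irreducible hI₁ne hπ
  have hπnJ : ι (π ^ n) ∈ J := by
    have : π ^ n ∈ I₁ := by rw [hn]; exact Ideal.subset_span rfl
    rwa [hI₁, Ideal.mem_comap] at this
  have hI₁dvd : ∀ r : R, ι r ∈ J → π ^ n ∣ r := by
    intro r hr
    have : r ∈ I₁ := by rwa [hI₁, Ideal.mem_comap]
    rw [hn] at this
    exact Ideal.mem_span_singleton.mp this
  -- Step 3 : the ideal of δ-coefficients of J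
  set I₂ : Ideal R := {
    carrier := {s : R | ∃ r : R, ι r + ι s * δ ∈ J}
    add_mem' := by
      rintro s₁ s₂ ⟨u₁, h1⟩ ⟨u₂, h2⟩
      refine ⟨u₁ + u₂, ?_⟩
      have := J.add_mem h1 h2
      convert this using 1
      simp only [map_add]; ring
    zero_mem' := ⟨0, by simpa using J.zero_mem⟩
    smul_mem' := by
      rintro cc ss ⟨u, h⟩
      refine ⟨cc * u, ?_⟩
      have := J.mul_mem_left (ι cc) h
      convert this using 1
      simp only [smul_eq_mul, map_mul]; ring } with hI₂
  have hI₂mem : ∀ s : R, s ∈ I₂ ↔ ∃ r : R, ι r + ι s * δ ∈ J := fun s => Iff.rfl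
  have hI₂ne : I₂ ≠ ⊥ := by
    intro hbot
    have hNmem : N ∈ I₂ := by
      rw [hI₂mem]
      exact ⟨0, by simpa using J.mul_mem_right δ hNJ⟩
    rw [hbot] at hNmem
    exact hN0 (by simpa using hNmem)
  obtain ⟨m, hm⟩ := IsDiscreteValuationRing.ideal_eq_span_pow_irreducible hI₂ne hπ
  have hπmI₂ : π ^ m ∈ I₂ := by rw [hm]; exact Ideal.subset_span rfl
  obtain ⟨c, hc⟩ := (hI₂mem _).mp hπmI₂
  have hI₂dvd : ∀ s r : R, ι r + ι s * δ ∈ J → π ^ m ∣ s := by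
    intro s r h
    have : s ∈ I₂ := (hI₂mem s).mpr ⟨r, h⟩
    rw [hm] at this
    exact Ideal.mem_span_singleton.mp this
  have hmn : m ≤ n := by
    have hπnI₂ : π ^ n ∈ I₂ := by
      rw [hI₂mem]
      exact ⟨0, by simpa using J.mul_mem_right δ hπnJ⟩
    rw [hm] at hπnI₂
    have := Ideal.mem_span_singleton.mp hπnI₂
    exact (pow_dvd_pow_iff hπ0 hπ.not_isUnit).mp this
  set k : ℕ := n - m with hk
  have hmk : m + k = n := Nat.add_sub_cancel' hmn
  have hnmk : (π : R) ^ n = π ^ m * π ^ k := by rw [← pow_add, hmk]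
  -- Step 4 : description of J
  have hJ1 : ∀ x ∈ J, ∃ u t : R,
      x = ι u * ι (π ^ n) + ι t * (ι c + ι (π ^ m) * δ) := by
    intro x hx
    obtain ⟨r, s, rfl⟩ := hrep x
    obtain ⟨t, hst⟩ := hI₂dvd s r hx
    have hsub : ι r + ι s * δ - ι t * (ι c + ι (π ^ m) * δ) = ι (r - t * c) := by
      rw [hst]; simp only [map_sub, map_mul]; ring
    have hmem : ι (r - t * c) ∈ J := by
      rw [← hsub]; exact J.sub_mem hx (J.mul_mem_left _ hc)
    obtain ⟨u, hu⟩ := hI₁dvd _ hmem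
    refine ⟨u, t, ?_⟩
    have hr : r = π ^ n * u + t * c := by linear_combination hu
    rw [hr, hst]; simp only [map_add, map_mul]; ring
  have hJ2 : ∀ u t : R,
      ι u * ι (π ^ n) + ι t * (ι c + ι (π ^ m) * δ) ∈ J :=
    fun u t => J.add_mem (J.mul_mem_left _ hπnJ) (J.mul_mem_left _ hc)
  -- Step 5 : π ^ m divides c
  have hstep5 : ∃ c₀ : R, c = c₀ * π ^ m := by
    have hx : ι (π ^ n) * δ ∈ J := by simpa using J.mul_mem_right δ hπnJ
    obtain ⟨u, t, hut⟩ := hJ1 _ hx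
    have heq : ι 0 + ι (π ^ n) * δ = ι (u * π ^ n + t * c) + ι (t * π ^ m) * δ := by
      rw [hut]; simp only [map_add, map_mul, map_zero]; ring
    obtain ⟨h1, h2⟩ := huniq2 _ _ _ _ heq
    -- h2 : π ^ n = t * π ^ m ; so t = π ^ k
    have ht : t = π ^ k := by
      have : π ^ m * t = π ^ m * π ^ k := by rw [← hnmk]; linear_combination -h2
      exact mul_left_cancel₀ (pow_ne_zero m hπ0) this
    rw [ht] at h1
    refine ⟨-u, ?_⟩
    have : π ^ k * c = π ^ k * (-u * π ^ m) := by
      rw [hnmk] at h1; linear_combination -h1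
    exact mul_left_cancel₀ (pow_ne_zero k hπ0) this
  obtain ⟨c₀, hc₀⟩ := hstep5
  -- Step 6 : π ^ k divides D - c₀ ^ 2
  have hstep6 : ∃ E : R, D = E * π ^ k + c₀ * c₀ := by
    have hx : (ι c + ι (π ^ m) * δ) * δ ∈ J := J.mul_mem_right δ hc
    have hx' : ι (π ^ m * D) + ι c * δ ∈ J := by
      have : ι (π ^ m * D) + ι c * δ = (ι c + ι (π ^ m) * δ) * δ := by
        simp only [map_mul]
        linear_combination (-(ι (π ^ m))) * hδ2
      rw [this]; exact hx
    obtain ⟨u, t, hut⟩ := hJ1 _ hx'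
    have heq : ι (π ^ m * D) + ι c * δ = ι (u * π ^ n + t * c) + ι (t * π ^ m) * δ := by
      rw [hut]; simp only [map_add, map_mul]; ring
    obtain ⟨h1, h2⟩ := huniq2 _ _ _ _ heq
    -- h2 : c = t * π ^ m, with c = c₀ * π ^ m, so t = c₀
    have ht : t = c₀ := by
      have : π ^ m * t = π ^ m * c₀ := by rw [hc₀] at h2; linear_combination -h2
      exact mul_left_cancel₀ (pow_ne_zero m hπ0) this
    rw [ht, hc₀, hnmk] at h1
    refine ⟨u, ?_⟩
    have : π ^ m * D = π ^ m * (u * π ^ k + c₀ * c₀) := by linear_combination h1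
    have := mul_left_cancel₀ (pow_ne_zero m hπ0) this
    linear_combination this
  obtain ⟨E, hDE⟩ := hstep6
  -- refined description of J
  have hJdesc : ∀ x, x ∈ J ↔ ∃ u t : R,
      x = ι (π ^ m) * (ι u * ι (π ^ k) + ι t * (ι c₀ + δ)) := by
    have key : ∀ u t : R, ι u * ι (π ^ n) + ι t * (ι c + ι (π ^ m) * δ)
        = ι (π ^ m) * (ι u * ι (π ^ k) + ι t * (ι c₀ + δ)) := by
      intro u t
      rw [hnmk, hc₀]; simp only [map_add, map_mul]; ring
    intro x
    constructor
    · intro hx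
      obtain ⟨u, t, hut⟩ := hJ1 x hx
      exact ⟨u, t, by rw [hut, key]⟩
    · rintro ⟨u, t, rfl⟩
      rw [← key]; exact hJ2 u t
  -- the common endgame, used for the case π ^ k ∤ c₀
  have hfinal : ∀ (s' : ℕ) (g g₁ G d4 p q : R),
      g = c₀ + G * π ^ k →
      g = g₁ * π ^ s' →
      D = g * c₀ + d4 * (π ^ s' * π ^ k) →
      p * π ^ s' + q * g = 0 →
      q * (D - g * g) = π ^ s' * π ^ k →
      ∃ (kk : ℕ) (J' : Ideal S),
        (J' : Set S) = (Submodule.span R {ι (π ^ kk), δ} : Submodule R S) ∧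
        ∃ α₁ α₂ : S, α₁ ≠ 0 ∧ α₂ ≠ 0 ∧
          Ideal.span {α₁} * J = Ideal.span {α₂} * J' := by
    intro s' g g₁ G d4 p q hg₁ hgs h4 hqp hqD
    have hDdvd : D = (g₁ * c₀ + d4 * π ^ k) * π ^ s' := by
      linear_combination h4 + c₀ * hgs
    obtain ⟨J', hJ'car⟩ := mkIdeal δ D hδ2 hrep (π ^ s') (g₁ * c₀ + d4 * π ^ k) hDdvd
    have hJ'mem : ∀ x : S, x ∈ J' ↔ ∃ P Q : R, x = ι P * ι (π ^ s') + ι Q * δ := by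
      intro x
      rw [← SetLike.mem_coe, hJ'car, SetLike.mem_coe, Submodule.mem_span_pair]
      constructor
      · rintro ⟨P, Q, hPQ⟩
        exact ⟨P, Q, by rw [← hPQ, Algebra.smul_def, Algebra.smul_def]⟩
      · rintro ⟨P, Q, rfl⟩
        exact ⟨P, Q, by rw [Algebra.smul_def, Algebra.smul_def]⟩
    set γ : S := ι g + δ with hγ
    have hγ0 : γ ≠ 0 := by
      intro h0
      have : ι g + ι 1 * δ = 0 := by simpa using h0
      exact one_ne_zero (huniq _ _ this).2
    refine ⟨s', J', hJ'car, ι (π ^ s'), ι (π ^ m) * γ,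
      hne _ (pow_ne_zero _ hπ0), mul_ne_zero (hne _ (pow_ne_zero _ hπ0)) hγ0, ?_⟩
    ext x
    simp only [Ideal.mem_span_singleton_mul]
    constructor
    · rintro ⟨y, hy, rfl⟩
      obtain ⟨u, t, rfl⟩ := (hJdesc y).mp hy
      set A : R := u * p + t * (1 - G * p) with hA
      set B : R := u * q + t * (-(G * q)) with hB
      have E1 : A * π ^ s' + B * g = t * π ^ s' := by
        rw [hA, hB]; linear_combination (u - t * G) * hqp
      have E2 : A * (π ^ s' * g) + B * D = π ^ s' * (u * π ^ k + t * c₀) := by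
        rw [hA, hB]
        linear_combination (u * g) * hqp + u * hqD + (t * π ^ s') * hg₁
          + (-(t * G)) * hqD + (-(t * G * g)) * hqp
      have hKI := keyIdentity δ D hδ2 (π ^ s') (π ^ k) g c₀ A B u t E1 E2
      refine ⟨ι A * ι (π ^ s') + ι B * δ, (hJ'mem _).mpr ⟨A, B, rfl⟩, ?_⟩
      calc ι (π ^ m) * γ * (ι A * ι (π ^ s') + ι B * δ)
          = ι (π ^ m) * ((ι g + δ) * (ι A * ι (π ^ s') + ι B * δ)) := by rw [hγ]; ring
        _ = ι (π ^ m) * (ι (π ^ s') *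
              (ι u * ι (π ^ k) + ι t * (ι c₀ + δ))) := by rw [hKI]
        _ = ι (π ^ s') * (ι (π ^ m) * (ι u * ι (π ^ k) + ι t * (ι c₀ + δ))) := by ring
    · rintro ⟨z, hz, rfl⟩
      obtain ⟨P, Q, rfl⟩ := (hJ'mem z).mp hz
      have E1 : P * π ^ s' + Q * g = (P + Q * g₁) * π ^ s' := by
        linear_combination Q * hgs
      have E2 : P * (π ^ s' * g) + Q * D
          = π ^ s' * ((P * G + Q * d4) * π ^ k + (P + Q * g₁) * c₀) := by
        linear_combination Q * h4 + (P * π ^ s') * hg₁ + (Q * c₀) * hgs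
      have hKI := keyIdentity δ D hδ2 (π ^ s') (π ^ k) g c₀ P Q (P * G + Q * d4)
        (P + Q * g₁) E1 E2
      refine ⟨ι (π ^ m) * (ι (P * G + Q * d4) * ι (π ^ k) + ι (P + Q * g₁) * (ι c₀ + δ)),
        (hJdesc _).mpr ⟨P * G + Q * d4, P + Q * g₁, rfl⟩, ?_⟩
      calc ι (π ^ s') * (ι (π ^ m) * (ι (P * G + Q * d4) * ι (π ^ k)
              + ι (P + Q * g₁) * (ι c₀ + δ)))
          = ι (π ^ m) * (ι (π ^ s') * (ι (P * G + Q * d4) * ι (π ^ k)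
              + ι (P + Q * g₁) * (ι c₀ + δ))) := by ring
        _ = ι (π ^ m) * ((ι g + δ) * (ι P * ι (π ^ s') + ι Q * δ)) := by rw [← hKI]
        _ = ι (π ^ m) * γ * (ι P * ι (π ^ s') + ι Q * δ) := by rw [hγ]; ring
  -- now the case distinction
  by_cases hcase : π ^ k ∣ c₀
  · -- Case A : J is equivalent to the ideal with k itself
    obtain ⟨e, he⟩ := hcase
    have hDdvd : D = (E + e * (π ^ k * e)) * π ^ k := by
      linear_combination hDE + (c₀ + π ^ k * e) * he
    obtain ⟨J', hJ'car⟩ := mkIdeal δ D hδ2 hrep (π ^ k) (E + e * (π ^ k * e)) hDdvd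
    have hJ'mem : ∀ x : S, x ∈ J' ↔ ∃ P Q : R, x = ι P * ι (π ^ k) + ι Q * δ := by
      intro x
      rw [← SetLike.mem_coe, hJ'car, SetLike.mem_coe, Submodule.mem_span_pair]
      constructor
      · rintro ⟨P, Q, hPQ⟩
        exact ⟨P, Q, by rw [← hPQ, Algebra.smul_def, Algebra.smul_def]⟩
      · rintro ⟨P, Q, rfl⟩
        exact ⟨P, Q, by rw [Algebra.smul_def, Algebra.smul_def]⟩
    refine ⟨k, J', hJ'car, 1, ι (π ^ m), one_ne_zero, hne _ (pow_ne_zero _ hπ0), ?_⟩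
    rw [Ideal.span_singleton_one, Ideal.top_mul]
    ext x
    rw [Ideal.mem_span_singleton_mul]
    constructor
    · intro hx
      obtain ⟨u, t, rfl⟩ := (hJdesc x).mp hx
      refine ⟨ι (u + t * e) * ι (π ^ k) + ι t * δ, (hJ'mem _).mpr ⟨u + t * e, t, rfl⟩, ?_⟩
      rw [he]; simp only [map_add, map_mul]; ring
    · rintro ⟨z, hz, rfl⟩
      obtain ⟨P, Q, rfl⟩ := (hJ'mem z).mp hz
      refine (hJdesc _).mpr ⟨P - Q * e, Q, ?_⟩
      rw [he]; simp only [map_sub, map_add, map_mul]; ring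
  · -- Case B : π ^ k does not divide c₀
    have hc₀0 : c₀ ≠ 0 := by
      rintro rfl; exact hcase (dvd_zero _)
    obtain ⟨j, e, hje⟩ := IsDiscreteValuationRing.eq_unit_mul_pow_irreducible hc₀0 hπ
    have hjk : j < k := by
      by_contra hle
      push_neg at hle
      refine hcase ⟨↑e * π ^ (j - k), ?_⟩
      have hp : (π : R) ^ j = π ^ k * π ^ (j - k) := by
        rw [← pow_add, Nat.add_sub_cancel' hle]
      rw [hje, hp]; ring
    have hDc : D - c₀ * c₀ ≠ 0 := by
      intro h0
      exact hDnsq c₀ (sub_eq_zero.mp h0).symm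
    obtain ⟨n₂, e₂, hn₂⟩ := IsDiscreteValuationRing.eq_unit_mul_pow_irreducible hDc hπ
    have hEe : E * π ^ k = ↑e₂ * π ^ n₂ := by linear_combination hn₂ - hDE
    have hkn₂ : k ≤ n₂ := by
      refine (pow_dvd_pow_iff hπ0 hπ.not_isUnit).mp ⟨(↑e₂⁻¹ : R) * E, ?_⟩
      rw [show (π : R) ^ k * ((↑e₂⁻¹ : R) * E) = (↑e₂⁻¹ : R) * (E * π ^ k) from by ring,
        hEe, ← mul_assoc, Units.inv_mul, one_mul]
    by_cases hB : n₂ ≤ k + j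
    · -- subcase B1
      set s' : ℕ := n₂ - k with hs'
      have hs'j : s' ≤ j := by omega
      have hs'k : s' + k = n₂ := by omega
      have hpow : (π : R) ^ s' * π ^ k = π ^ n₂ := by rw [← pow_add, hs'k]
      have hpj : (π : R) ^ (j - s') * π ^ s' = π ^ j := by
        rw [← pow_add, Nat.sub_add_cancel hs'j]
      refine hfinal s' c₀ (↑e * π ^ (j - s')) 0 ↑e₂
        (-(↑e₂⁻¹ * ↑e * π ^ (j - s'))) ↑e₂⁻¹ (by ring) ?_ ?_ ?_ ?_
      · rw [hje, mul_assoc, hpj]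
      · linear_combination hn₂ - (↑e₂ : R) * hpow
      · linear_combination (↑e₂⁻¹ : R) * hje - ((↑e₂⁻¹ : R) * ↑e) * hpj
      · have hee : (↑e₂⁻¹ : R) * ↑e₂ = 1 := Units.inv_mul e₂
        linear_combination (↑e₂⁻¹ : R) * hn₂ + ((π : R) ^ n₂) * hee - hpow
    · -- subcase B2
      push_neg at hB
      have hpkj : (π : R) ^ (k - j) * π ^ j = π ^ k := by
        rw [← pow_add, Nat.sub_add_cancel hjk.le]
      have hpw2 : (π : R) ^ (n₂ - (j + k)) * (π ^ j * π ^ k) = π ^ n₂ := by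
        rw [← pow_add, ← pow_add]
        congr 1
        omega
      set W : R := ↑e₂ * π ^ (n₂ - (j + k)) - 2 * ↑e - π ^ (k - j) with hW
      have hWunit : IsUnit W := by
        by_contra hWu
        have hπmem : π ∈ IsLocalRing.maximalIdeal R :=
          (IsLocalRing.mem_maximalIdeal π).mpr (mem_nonunits_iff.mpr hπ.not_isUnit)
        have hWmem : W ∈ IsLocalRing.maximalIdeal R :=
          (IsLocalRing.mem_maximalIdeal W).mpr (mem_nonunits_iff.mpr hWu)
        have h1 : ↑e₂ * π ^ (n₂ - (j + k)) ∈ IsLocalRing.maximalIdeal R := by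
          rw [show n₂ - (j + k) = (n₂ - (j + k) - 1) + 1 from by omega, pow_succ]
          exact Ideal.mul_mem_left _ _ (Ideal.mul_mem_left _ _ hπmem)
        have h2' : (π : R) ^ (k - j) ∈ IsLocalRing.maximalIdeal R := by
          rw [show k - j = (k - j - 1) + 1 from by omega, pow_succ]
          exact Ideal.mul_mem_left _ _ hπmem
        have h2e : (2 : R) * ↑e ∈ IsLocalRing.maximalIdeal R := by
          rw [show (2 : R) * ↑e = ↑e₂ * π ^ (n₂ - (j + k)) - π ^ (k - j) - W from by
            rw [hW]; ring]
          exact Submodule.sub_mem _ (Submodule.sub_mem _ h1 h2') hWmem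
        exact (mem_nonunits_iff.mp ((IsLocalRing.mem_maximalIdeal _).mp h2e))
          (h2.mul e.isUnit)
      obtain ⟨w, hw⟩ := hWunit
      have hDg : D - (c₀ + π ^ k) * (c₀ + π ^ k) = W * (π ^ j * π ^ k) := by
        rw [hW]
        linear_combination hn₂ - (↑e₂ : R) * hpw2 - 2 * ((π : R) ^ k) * hje
          + ((π : R) ^ k) * hpkj
      refine hfinal j (c₀ + π ^ k) (↑e + π ^ (k - j)) 1 (↑e₂ * π ^ (n₂ - (j + k)) - ↑e)
        (-(↑w⁻¹ * (↑e + π ^ (k - j)))) ↑w⁻¹ (by ring) ?_ ?_ ?_ ?_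
      · linear_combination hje - hpkj
      · linear_combination hn₂ - (↑e₂ : R) * hpw2 - ((π : R) ^ k) * hje
      · linear_combination (↑w⁻¹ : R) * hje - (↑w⁻¹ : R) * hpkj
      · rw [hDg, ← hw, ← mul_assoc, Units.inv_mul, one_mul]

end Aux

/-- Let `R` be a DVR with uniformizer `π` in which `2` is a unit,
`f(x) = x² − ax − b ∈ R[x]` monic irreducible over the fraction field `K`, and `θ` the
class of `x` in `R[θ] := R[x]/(f)`. Then every nonzero ideal of `R[θ]` is equivalent
to an ideal of the form `Rπᵏ + R(θ − a/2)` for some `k ≥ 0`. -/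
theorem ideal_classes_two_unit
    (R : Type*) [CommRing R] [IsDomain R] [IsDiscreteValuationRing R]
    (K : Type*) [Field K] [Algebra R K] [IsFractionRing R K]
    (π : R) (hπ : Irreducible π) (h2 : IsUnit (2 : R))
    (a b : R) (f : R[X]) (hf : f = X ^ 2 - C a * X - C b)
    (hirr : Irreducible (f.map (algebraMap R K)))
    (θ : R[X] ⧸ Ideal.span {f}) (hθ : θ = Ideal.Quotient.mk (Ideal.span {f}) X) :
    ∀ J : Ideal (R[X] ⧸ Ideal.span {f}), J ≠ ⊥ →
      ∃ (k : ℕ) (J' : Ideal (R[X] ⧸ Ideal.span {f})),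
        (J' : Set (R[X] ⧸ Ideal.span {f})) =
          (Submodule.span R
            {algebraMap R (R[X] ⧸ Ideal.span {f}) (π ^ k),
              θ - algebraMap R (R[X] ⧸ Ideal.span {f}) (Ring.inverse 2 * a)} :
            Submodule R (R[X] ⧸ Ideal.span {f})) ∧
        ∃ α₁ α₂ : R[X] ⧸ Ideal.span {f}, α₁ ≠ 0 ∧ α₂ ≠ 0 ∧
          Ideal.span {α₁} * J = Ideal.span {α₂} * J' := by
  subst hθ
  subst hf
  set f : R[X] := X ^ 2 - C a * X - C b with hf
  set S := R[X] ⧸ Ideal.span {f} with hS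
  set ι := algebraMap R S with hι
  -- basic facts about f
  have hmonic : f.Monic := by
    rw [hf, sub_sub]
    apply monic_X_pow_sub
    have h1 : (C a * X).degree ≤ 1 := by
      simpa using degree_mul_le_of_le (degree_C_le (a := a)) degree_X_le
    have h2 : (C b).degree ≤ 1 := degree_C_le.trans (by norm_num)
    have : (C a * X + C b).degree ≤ 1 := (degree_add_le _ _).trans (max_le h1 h2)
    exact lt_of_le_of_lt this (by norm_num)
  have hdeg : f.degree = 2 := by
    rw [hf]
    compute_degree!
  have hfirr : Irreducible f :=
    Polynomial.Monic.irreducible_of_irreducible_map (algebraMap R K) f hmonic hirr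
  have hf0 : f ≠ 0 := hmonic.ne_zero
  have hprime : Prime f := UniqueFactorizationMonoid.irreducible_iff_prime.mp hfirr
  haveI : (Ideal.span {f}).IsPrime := (Ideal.span_singleton_prime hf0).mpr hprime
  haveI : IsDomain S := Ideal.Quotient.isDomain (R := R[X]) (Ideal.span {f})
  -- the class of X
  set θ : S := Ideal.Quotient.mk (Ideal.span {f}) X with hθ
  have halgC : ∀ r : R, ι r = Ideal.Quotient.mk (Ideal.span {f}) (C r) := fun r => rfl
  have hmkzero : ∀ p : R[X], f ∣ p → Ideal.Quotient.mk (Ideal.span {f}) p = 0 := by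
    intro p hp
    rw [Ideal.Quotient.eq_zero_iff_mem]
    exact Ideal.mem_span_singleton.mpr hp
  have hθ2 : θ * θ = ι a * θ + ι b := by
    have : Ideal.Quotient.mk (Ideal.span {f}) f = 0 := hmkzero f dvd_rfl
    rw [hθ, halgC, halgC]
    have h2' := this
    rw [hf] at h2'
    simp only [map_sub, map_mul, map_pow] at h2'
    linear_combination h2'
  -- uniqueness of θ-coordinates
  have huniqθ : ∀ r s : R, ι r + ι s * θ = 0 → r = 0 ∧ s = 0 := by
    intro r s h
    have hmem : Ideal.Quotient.mk (Ideal.span {f}) (C r + C s * X) = 0 := by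
      rw [map_add, map_mul, ← halgC, ← halgC, ← hθ]
      exact h
    rw [Ideal.Quotient.eq_zero_iff_mem] at hmem
    have hdvd : f ∣ C r + C s * X := Ideal.mem_span_singleton.mp hmem
    have hdegle : (C r + C s * X).degree ≤ 1 := by
      have h1 : (C r).degree ≤ 1 := degree_C_le.trans (by norm_num)
      have h2 : (C s * X).degree ≤ 1 := by
        simpa using degree_mul_le_of_le (degree_C_le (a := s)) degree_X_le
      exact (degree_add_le _ _).trans (max_le h1 h2)
    have hzero : C r + C s * X = 0 := by
      refine eq_zero_of_dvd_of_degree_lt hdvd ?_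
      rw [hdeg]
      exact lt_of_le_of_lt hdegle (by norm_num)
    constructor
    · have := congrArg (fun p => coeff p 0) hzero
      simpa using this
    · have := congrArg (fun p => coeff p 1) hzero
      simpa using this
  -- existence of θ-coordinates
  have hrepθ : ∀ z : S, ∃ r s : R, z = ι r + ι s * θ := by
    intro z
    obtain ⟨p, rfl⟩ := Ideal.Quotient.mk_surjective z
    have hmod : Ideal.Quotient.mk (Ideal.span {f}) p
        = Ideal.Quotient.mk (Ideal.span {f}) (p %ₘ f) := by
      rw [Ideal.Quotient.mk_eq_mk_iff_sub_mem]
      refine Ideal.mem_span_singleton.mpr ⟨p /ₘ f, ?_⟩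
      have := modByMonic_add_div p f
      linear_combination -this
    have hdlt : (p %ₘ f).degree < 2 := by
      rw [← hdeg]; exact degree_modByMonic_lt p hmonic
    have hdle : (p %ₘ f).degree ≤ 1 := by
      rcases hd : (p %ₘ f).degree with _ | d
      · exact bot_le
      · rw [hd] at hdlt
        rw [show (Option.some d : WithBot ℕ) = ((d : ℕ) : WithBot ℕ) from rfl] at hdlt ⊢
        have hd2 : d < 2 := by exact_mod_cast hdlt
        exact_mod_cast Nat.lt_succ_iff.mp hd2
    refine ⟨(p %ₘ f).coeff 0, (p %ₘ f).coeff 1, ?_⟩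
    rw [hmod, halgC, halgC, hθ]
    conv_lhs => rw [eq_X_add_C_of_degree_le_one hdle]
    rw [map_add, map_mul]
    ring
  -- switch to δ-coordinates
  have h2h : 2 * (Ring.inverse (2 : R) * a) = a := by
    rw [← mul_assoc, Ring.mul_inverse_cancel _ h2, one_mul]
  set hh : R := Ring.inverse (2 : R) * a with hhh
  set δ : S := θ - ι hh with hδ
  set D : R := b + hh * hh with hD
  have hιS : ι 2 = (2 : S) := map_ofNat ι 2
  have hδ2 : δ * δ = ι D := by
    have h2S : (2 : S) * ι hh = ι a := by
      rw [← hιS, ← map_mul]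
      exact congrArg ι h2h
    rw [hδ, hD]
    simp only [map_add, map_mul]
    linear_combination hθ2 - θ * h2S
  have hrep : ∀ z : S, ∃ r s : R, z = ι r + ι s * δ := by
    intro z
    obtain ⟨r, s, rfl⟩ := hrepθ z
    refine ⟨r + s * hh, s, ?_⟩
    rw [hδ]
    simp only [map_add, map_mul]
    ring
  have huniq : ∀ r s : R, ι r + ι s * δ = 0 → r = 0 ∧ s = 0 := by
    intro r s h
    have : ι (r - s * hh) + ι s * θ = 0 := by
      rw [hδ] at h
      simp only [map_sub, map_mul]
      linear_combination h
    obtain ⟨h1, h2⟩ := huniqθ _ _ this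
    subst h2
    constructor
    · simpa using h1
    · rfl
  have hDnsq : ∀ c : R, c * c ≠ D := by
    intro c hc
    have hfac : f = (X - C (hh + c)) * (X - C (hh - c)) := by
      have hCa : C a = 2 * C hh := by
        rw [← map_ofNat C 2, ← map_mul]
        exact congrArg C h2h.symm
      have hCc : C c * C c = C b + C hh * C hh := by
        rw [← map_mul, ← map_mul, ← map_add]
        exact congrArg C (hc.trans hD)
      rw [hf]
      simp only [map_add, map_sub]
      linear_combination (-X) * hCa + hCc
    have := hirr.isUnit_or_isUnit (by rw [hfac, Polynomial.map_mul])
    rcases this with h | h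
    · rw [Polynomial.map_sub, Polynomial.map_X, Polynomial.map_C,
        Polynomial.isUnit_iff_degree_eq_zero, degree_X_sub_C] at h
      exact one_ne_zero h
    · rw [Polynomial.map_sub, Polynomial.map_X, Polynomial.map_C,
        Polynomial.isUnit_iff_degree_eq_zero, degree_X_sub_C] at h
      exact one_ne_zero h
  exact aux_main π hπ h2 δ D hδ2 hrep huniq hDnsq
end
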